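/- arXiv:0805.2518 — 6 statements merged into one kernel-verified Lean document; each statement's English description precedes it below -/
import Mathlib

section
/- Let d ≥ 1 be an integer and let Φ : (0,∞) → [0,∞) be continuous, decreasing, and such that Φ(t)·t^d → ∞ as t → 0. Then there exists a function Φ̂ : (0,∞) → [0,∞) such that Φ̂(t) ≤ Φ(t) for all t > 0, Φ̂(t)·t^d → ∞ as t → 0, Φ̂ is continuously differentiable on (0,∞), and for every a > 0 the function t ↦ e^{−a·Φ̂(t)}·Φ̂′(t) is bounded on (0,∞). -/
open Filter Set

noncomputable def auxH (d : ℕ) (Φ : ℝ → ℝ) (y : ℝ) : ℝ :=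
  min (max y 0) (Φ (Real.exp (-y)) * Real.exp (-y) ^ d)

noncomputable def auxC (d : ℕ) (Φ : ℝ → ℝ) (s : ℝ) : ℝ :=
  sInf (auxH d Φ '' Set.Ici s)

noncomputable def auxK (d : ℕ) (Φ : ℝ → ℝ) (x : ℝ) : ℝ :=
  ∫ s in (x-1)..x, auxC d Φ s

noncomputable def auxG (d : ℕ) (Φ : ℝ → ℝ) (x : ℝ) : ℝ :=
  ∫ s in (x-1)..x, auxK d Φ s

noncomputable def auxP (d : ℕ) (Φ : ℝ → ℝ) (t : ℝ) : ℝ :=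
  auxG d Φ (-Real.log t) / t ^ d

section aux

variable {d : ℕ} {Φ : ℝ → ℝ} (hΦnn : ∀ t ∈ Set.Ioi (0:ℝ), 0 ≤ Φ t)

include hΦnn

lemma auxH_nonneg (y : ℝ) : 0 ≤ auxH d Φ y :=
  le_min (le_max_right _ _)
    (mul_nonneg (hΦnn _ (Real.exp_pos _)) (pow_nonneg (Real.exp_pos _).le _))

lemma auxH_bdd (s : ℝ) : BddBelow (auxH d Φ '' Set.Ici s) :=
  ⟨0, by rintro b ⟨y, -, rfl⟩; exact auxH_nonneg hΦnn y⟩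

lemma auxC_nonneg (s : ℝ) : 0 ≤ auxC d Φ s :=
  le_csInf (Set.Nonempty.image _ ⟨s, Set.self_mem_Ici⟩)
    (by rintro b ⟨y, -, rfl⟩; exact auxH_nonneg hΦnn y)

lemma auxC_mono : Monotone (auxC d Φ) := by
  intro s₁ s₂ h
  exact csInf_le_csInf (auxH_bdd hΦnn s₁) (Set.Nonempty.image _ ⟨s₂, Set.self_mem_Ici⟩)
    (Set.image_mono (Set.Ici_subset_Ici.2 h))

lemma auxC_le {s y : ℝ} (h : s ≤ y) : auxC d Φ s ≤ auxH d Φ y :=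
  csInf_le (auxH_bdd hΦnn s) ⟨y, h, rfl⟩

lemma auxC_intble (a b : ℝ) : IntervalIntegrable (auxC d Φ) MeasureTheory.volume a b :=
  (auxC_mono hΦnn).intervalIntegrable

lemma auxK_nonneg (x : ℝ) : 0 ≤ auxK d Φ x :=
  intervalIntegral.integral_nonneg (by linarith) (fun u _ => auxC_nonneg hΦnn u)

omit hΦnn in
lemma auxK_eq (x : ℝ) : auxK d Φ x = ∫ s in (0:ℝ)..1, auxC d Φ (s + (x-1)) := by
  rw [intervalIntegral.integral_comp_add_right (auxC d Φ) (x-1)]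
  norm_num [auxK]

lemma auxK_mono : Monotone (auxK d Φ) := by
  intro x y hxy
  rw [auxK_eq x, auxK_eq y]
  apply intervalIntegral.integral_mono_on zero_le_one
    (((auxC_mono hΦnn).comp (monotone_id.add_const _)).intervalIntegrable)
    (((auxC_mono hΦnn).comp (monotone_id.add_const _)).intervalIntegrable)
  intro s _
  exact auxC_mono hΦnn (by dsimp; linarith)

lemma auxK_le_c (x : ℝ) : auxK d Φ x ≤ auxC d Φ x := by
  have h : auxK d Φ x ≤ ∫ _ in (x-1)..x, auxC d Φ x :=
    intervalIntegral.integral_mono_on (by linarith) (auxC_intble hΦnn _ _)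
      intervalIntegrable_const (fun s hs => auxC_mono hΦnn hs.2)
  simpa using h

lemma auxC_le_K (x : ℝ) : auxC d Φ (x-1) ≤ auxK d Φ x := by
  have h : (∫ _ in (x-1)..x, auxC d Φ (x-1)) ≤ auxK d Φ x :=
    intervalIntegral.integral_mono_on (by linarith) intervalIntegrable_const
      (auxC_intble hΦnn _ _) (fun s hs => auxC_mono hΦnn hs.1)
  simpa using h

lemma auxK_repr : auxK d Φ = fun x =>
    (∫ s in (0:ℝ)..x, auxC d Φ s) - ∫ s in (0:ℝ)..(x-1), auxC d Φ s := by
  funext x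
  rw [intervalIntegral.integral_interval_sub_left (auxC_intble hΦnn _ _)
    (auxC_intble hΦnn _ _)]
  rfl

lemma auxK_cont : Continuous (auxK d Φ) := by
  rw [auxK_repr hΦnn]
  exact (intervalIntegral.continuous_primitive (auxC_intble hΦnn) 0).sub
    ((intervalIntegral.continuous_primitive (auxC_intble hΦnn) 0).comp
      (continuous_id.sub continuous_const))

lemma auxG_hasDeriv (x : ℝ) :
    HasDerivAt (auxG d Φ) (auxK d Φ x - auxK d Φ (x-1)) x := by
  have h1 : HasDerivAt (fun u => ∫ s in (0:ℝ)..u, auxK d Φ s) (auxK d Φ x) x :=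
    ((auxK_cont hΦnn).integral_hasStrictDerivAt 0 x).hasDerivAt
  have h2 : HasDerivAt (fun u => ∫ s in (0:ℝ)..u, auxK d Φ s) (auxK d Φ (x-1)) (x-1) :=
    ((auxK_cont hΦnn).integral_hasStrictDerivAt 0 (x-1)).hasDerivAt
  have h2' : HasDerivAt (fun u => ∫ s in (0:ℝ)..(u-1), auxK d Φ s)
      (auxK d Φ (x-1) * 1) x :=
    by have h3 := HasDerivAt.comp x h2 ((hasDerivAt_id x).sub_const 1); exact h3
  have hrepr : auxG d Φ = fun u =>
      (∫ s in (0:ℝ)..u, auxK d Φ s) - ∫ s in (0:ℝ)..(u-1), auxK d Φ s := by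
    funext u
    rw [intervalIntegral.integral_interval_sub_left
      ((auxK_cont hΦnn).intervalIntegrable _ _) ((auxK_cont hΦnn).intervalIntegrable _ _)]
    rfl
  rw [hrepr]
  have h3 := h1.sub h2'; rw [mul_one] at h3; exact h3

lemma auxG_contDiff : ContDiff ℝ 1 (auxG d Φ) := by
  rw [contDiff_one_iff_deriv]
  constructor
  · exact fun x => (auxG_hasDeriv hΦnn x).differentiableAt
  · have : deriv (auxG d Φ) = fun x => auxK d Φ x - auxK d Φ (x-1) :=
      funext fun x => (auxG_hasDeriv hΦnn x).deriv
    rw [this]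
    exact (auxK_cont hΦnn).sub ((auxK_cont hΦnn).comp (continuous_id.sub continuous_const))

lemma auxG_nonneg (x : ℝ) : 0 ≤ auxG d Φ x :=
  intervalIntegral.integral_nonneg (by linarith) (fun u _ => auxK_nonneg hΦnn u)

lemma auxG_le_K (x : ℝ) : auxG d Φ x ≤ auxK d Φ x := by
  have h : auxG d Φ x ≤ ∫ _ in (x-1)..x, auxK d Φ x :=
    intervalIntegral.integral_mono_on (by linarith)
      ((auxK_cont hΦnn).intervalIntegrable _ _)
      intervalIntegrable_const (fun s hs => auxK_mono hΦnn hs.2)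
  simpa using h

lemma auxK_le_G (x : ℝ) : auxK d Φ (x-1) ≤ auxG d Φ x := by
  have h : (∫ _ in (x-1)..x, auxK d Φ (x-1)) ≤ auxG d Φ x :=
    intervalIntegral.integral_mono_on (by linarith) intervalIntegrable_const
      ((auxK_cont hΦnn).intervalIntegrable _ _) (fun s hs => auxK_mono hΦnn hs.1)
  simpa using h

lemma auxG_le_max (x : ℝ) : auxG d Φ x ≤ max x 0 :=
  (auxG_le_K hΦnn x).trans ((auxK_le_c hΦnn x).trans
    ((auxC_le hΦnn le_rfl).trans (min_le_left _ _)))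

end aux


set_option maxHeartbeats 1000000 in
theorem stmt0 (d : ℕ) (hd : 1 ≤ d) (Φ : ℝ → ℝ)
    (hΦnn : ∀ t ∈ Set.Ioi (0:ℝ), 0 ≤ Φ t)
    (hΦcont : ContinuousOn Φ (Set.Ioi 0))
    (hΦanti : AntitoneOn Φ (Set.Ioi 0))
    (hΦtend : Tendsto (fun t => Φ t * t ^ d) (nhdsWithin 0 (Set.Ioi 0)) atTop) :
    ∃ Φhat : ℝ → ℝ,
      (∀ t ∈ Set.Ioi (0:ℝ), 0 ≤ Φhat t) ∧
      (∀ t ∈ Set.Ioi (0:ℝ), Φhat t ≤ Φ t) ∧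
      Tendsto (fun t => Φhat t * t ^ d) (nhdsWithin 0 (Set.Ioi 0)) atTop ∧
      ContDiffOn ℝ 1 Φhat (Set.Ioi 0) ∧
      (∀ a : ℝ, 0 < a → ∃ C : ℝ, ∀ t ∈ Set.Ioi (0:ℝ),
        |Real.exp (-a * Φhat t) * deriv Φhat t| ≤ C) := by
  obtain ⟨e, rfl⟩ : ∃ e, d = e + 1 := ⟨d - 1, by omega⟩
  -- continuity/smoothness facts
  have hGC : ContDiff ℝ 1 (auxG (e+1) Φ) := auxG_contDiff hΦnn
  have hCD : ContDiffOn ℝ 1 (auxP (e+1) Φ) (Set.Ioi 0) := by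
    intro t ht
    apply ContDiffAt.contDiffWithinAt
    have h1 : ContDiffAt ℝ 1 (fun u : ℝ => -Real.log u) t :=
      (Real.contDiffAt_log.2 (ne_of_gt ht)).neg
    have h2 : ContDiffAt ℝ 1 (auxG (e+1) Φ) (-Real.log t) := hGC.contDiffAt
    exact (h2.comp t h1).div (contDiffAt_id.pow _) (pow_ne_zero _ (ne_of_gt ht))
  -- tendsto of auxC
  have hc_tend : Tendsto (auxC (e+1) Φ) atTop atTop := by
    rw [tendsto_atTop]
    intro N
    have hev := (tendsto_atTop.1 hΦtend) N
    rw [eventually_nhdsWithin_iff, Metric.eventually_nhds_iff] at hev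
    obtain ⟨δ, hδpos, hδ⟩ := hev
    rw [eventually_atTop]
    refine ⟨max N (-Real.log δ + 1), fun s hs => ?_⟩
    refine le_csInf (Set.Nonempty.image _ ⟨s, Set.self_mem_Ici⟩) ?_
    rintro b ⟨y, hy, rfl⟩
    have hy' : max N (-Real.log δ + 1) ≤ y := le_trans hs hy
    refine le_min (le_trans (le_trans (le_max_left N _) hy') (le_max_left y 0)) ?_
    have h5 : Real.exp (-y) < δ := by
      have h6 : -y < Real.log δ := by
        have := (le_max_right N (-Real.log δ + 1)).trans hy'; linarith
      calc Real.exp (-y) < Real.exp (Real.log δ) := Real.exp_lt_exp.2 h6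
      _ = δ := Real.exp_log hδpos
    exact hδ (show dist (Real.exp (-y)) 0 < δ by
      rw [Real.dist_eq, sub_zero, abs_of_pos (Real.exp_pos _)]; exact h5) (Real.exp_pos (-y))
  -- derivative formula
  have hderiv : ∀ t : ℝ, 0 < t → HasDerivAt (auxP (e+1) Φ)
      (((auxK (e+1) Φ (-Real.log t) - auxK (e+1) Φ (-Real.log t - 1)) * -t⁻¹ * t ^ (e+1)
        - auxG (e+1) Φ (-Real.log t) * (((e:ℝ)+1) * t ^ e)) / (t ^ (e+1)) ^ 2) t := by
    intro t ht
    have hlog : HasDerivAt (fun u : ℝ => -Real.log u) (-t⁻¹) t :=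
      (Real.hasDerivAt_log (ne_of_gt ht)).neg
    have hGc : HasDerivAt (fun u : ℝ => auxG (e+1) Φ (-Real.log u))
        ((auxK (e+1) Φ (-Real.log t) - auxK (e+1) Φ (-Real.log t - 1)) * -t⁻¹) t :=
      by have h := (auxG_hasDeriv (d := e+1) hΦnn (-Real.log t)).comp t hlog; exact h
    have hpow : HasDerivAt (fun u : ℝ => u ^ (e+1)) (((e:ℝ)+1) * t ^ e) t := by
      have := hasDerivAt_pow (e+1) t
      simpa [Nat.add_sub_cancel] using this
    exact hGc.div hpow (pow_ne_zero _ (ne_of_gt ht))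
  -- abs bound on deriv
  have hbound : ∀ t : ℝ, 0 < t → |deriv (auxP (e+1) Φ) t| ≤
      ((e:ℝ)+2) * max (-Real.log t) 0 / t ^ (e+2) := by
    intro t ht
    rw [(hderiv t ht).deriv]
    set x := -Real.log t with hxdef
    set M := max x 0 with hMdef
    have hM0 : 0 ≤ M := le_max_right _ _
    have hK1 : 0 ≤ auxK (e+1) Φ (x-1) := auxK_nonneg hΦnn _
    have hK2 : auxK (e+1) Φ (x-1) ≤ auxK (e+1) Φ x := auxK_mono hΦnn (by linarith)
    have hKM : auxK (e+1) Φ x ≤ M :=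
      (auxK_le_c hΦnn x).trans ((auxC_le hΦnn le_rfl).trans (min_le_left _ _))
    have hG0 : 0 ≤ auxG (e+1) Φ x := auxG_nonneg hΦnn x
    have hGM : auxG (e+1) Φ x ≤ M := auxG_le_max hΦnn x
    have ht1 : t⁻¹ * t^(e+1) = t^e := by
      rw [pow_succ]; field_simp
    have hnum : |(auxK (e+1) Φ x - auxK (e+1) Φ (x - 1)) * -t⁻¹ * t ^ (e+1)
        - auxG (e+1) Φ x * (((e:ℝ)+1) * t ^ e)| ≤ ((e:ℝ)+2) * M * t^e := by
      have he1 : (auxK (e+1) Φ x - auxK (e+1) Φ (x - 1)) * -t⁻¹ * t ^ (e+1)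
          = -((auxK (e+1) Φ x - auxK (e+1) Φ (x - 1)) * (t⁻¹ * t ^ (e+1))) := by ring
      rw [he1, ht1]
      have h7 : |(-((auxK (e+1) Φ x - auxK (e+1) Φ (x - 1)) * t ^ e))
          - auxG (e+1) Φ x * (((e:ℝ)+1) * t ^ e)|
          ≤ |(auxK (e+1) Φ x - auxK (e+1) Φ (x - 1)) * t ^ e|
            + |auxG (e+1) Φ x * (((e:ℝ)+1) * t ^ e)| := by
        rw [← abs_neg ((auxK (e+1) Φ x - auxK (e+1) Φ (x - 1)) * t ^ e)] at *
        exact abs_sub _ _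
      refine le_trans h7 ?_
      have hte : (0:ℝ) ≤ t^e := pow_nonneg ht.le e
      have hce : (0:ℝ) ≤ (e:ℝ) := Nat.cast_nonneg e
      rw [abs_of_nonneg (mul_nonneg (by linarith) hte),
        abs_of_nonneg (mul_nonneg hG0 (by positivity))]
      nlinarith [mul_le_mul_of_nonneg_right (show auxK (e+1) Φ x - auxK (e+1) Φ (x-1) ≤ M by linarith) hte,
        mul_le_mul_of_nonneg_right hGM hte, mul_nonneg hM0 hte]
    have hden : (t^(e+1):ℝ)^2 = t^(e+2)*t^e := by ring
    rw [abs_div, abs_of_pos (by positivity : (0:ℝ) < (t ^ (e+1))^2), hden,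
      div_le_div_iff₀ (by positivity) (by positivity)]
    calc |(auxK (e+1) Φ x - auxK (e+1) Φ (x - 1)) * -t⁻¹ * t ^ (e+1)
          - auxG (e+1) Φ x * (((e:ℝ)+1) * t ^ e)| * t ^ (e+2)
        ≤ (((e:ℝ)+2) * M * t^e) * t^(e+2) :=
          mul_le_mul_of_nonneg_right hnum (by positivity)
      _ = ((e:ℝ)+2) * M * (t ^ (e + 2) * t ^ e) := by ring
  -- continuity of the derivative on Ioi 0
  have hlogc : ContinuousOn (fun t : ℝ => -Real.log t) (Set.Ioi 0) :=
    (Real.continuousOn_log.mono (fun t ht => ne_of_gt ht)).neg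
  have hderivcont : ContinuousOn (deriv (auxP (e+1) Φ)) (Set.Ioi 0) := by
    have hW : ContinuousOn (fun t : ℝ =>
        ((auxK (e+1) Φ (-Real.log t) - auxK (e+1) Φ (-Real.log t - 1)) * -t⁻¹ * t ^ (e+1)
          - auxG (e+1) Φ (-Real.log t) * (((e:ℝ)+1) * t ^ e)) / (t ^ (e+1)) ^ 2)
        (Set.Ioi 0) := by
      apply ContinuousOn.div
      · apply ContinuousOn.sub
        · refine ContinuousOn.mul (ContinuousOn.mul ?_ ?_) (continuous_pow (e+1)).continuousOn
          · exact ((auxK_cont hΦnn).comp_continuousOn hlogc).sub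
              ((auxK_cont hΦnn).comp_continuousOn (hlogc.sub continuousOn_const))
          · exact (continuousOn_inv₀.mono (fun t ht => ne_of_gt ht)).neg
        · exact (hGC.continuous.comp_continuousOn hlogc).mul
            (continuous_const.mul (continuous_pow e)).continuousOn
      · exact ((continuous_pow (e+1)).pow 2).continuousOn
      · intro t ht
        exact pow_ne_zero _ (pow_ne_zero _ (ne_of_gt ht))
    exact hW.congr (fun t ht => (hderiv t ht).deriv)
  refine ⟨auxP (e+1) Φ, ?_, ?_, ?_, hCD, ?_⟩
  · -- nonneg
    intro t ht
    exact div_nonneg (auxG_nonneg hΦnn _) (pow_nonneg (le_of_lt ht) _)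
  · -- ≤ Φ
    intro t ht
    have ht' : (0:ℝ) < t := ht
    have hexp : Real.exp (-(-Real.log t)) = t := by rw [neg_neg, Real.exp_log ht']
    have h1 : auxG (e+1) Φ (-Real.log t) ≤ Φ t * t ^ (e+1) := by
      have h2 : auxG (e+1) Φ (-Real.log t) ≤ auxC (e+1) Φ (-Real.log t) :=
        (auxG_le_K hΦnn (-Real.log t)).trans (auxK_le_c hΦnn (-Real.log t))
      have h3 : auxC (e+1) Φ (-Real.log t) ≤ auxH (e+1) Φ (-Real.log t) := auxC_le hΦnn le_rfl
      have h4 : auxH (e+1) Φ (-Real.log t) ≤ Φ t * t ^ (e+1) := by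
        calc auxH (e+1) Φ (-Real.log t)
            ≤ Φ (Real.exp (-(-Real.log t))) * Real.exp (-(-Real.log t)) ^ (e+1) :=
              min_le_right _ _
          _ = Φ t * t ^ (e+1) := by rw [hexp]
      linarith
    rw [auxP, div_le_iff₀ (pow_pos ht' _)]
    exact h1
  · -- tendsto
    have hG_tend : Tendsto (auxG (e+1) Φ) atTop atTop := by
      have hcc : Tendsto (fun x : ℝ => auxC (e+1) Φ (x - 1 - 1)) atTop atTop := by
        have h8 : Tendsto (fun x : ℝ => x - 1 - 1) atTop atTop := by
          have h9 := tendsto_atTop_add_const_right atTop (-2 : ℝ) tendsto_id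
          refine h9.congr (fun x => by simp; ring)
        exact hc_tend.comp h8
      exact tendsto_atTop_mono
        (fun x => (auxC_le_K hΦnn (x-1)).trans (auxK_le_G hΦnn x)) hcc
    have hcomp : Tendsto (fun t => auxG (e+1) Φ (-Real.log t))
        (nhdsWithin 0 (Set.Ioi 0)) atTop := by
      refine hG_tend.comp ?_
      exact tendsto_neg_atBot_atTop.comp Real.tendsto_log_nhdsGT_zero
    refine hcomp.congr' ?_
    filter_upwards [self_mem_nhdsWithin] with t ht
    rw [auxP, div_mul_cancel₀ _ (pow_ne_zero _ (ne_of_gt ht))]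
  · -- derivative bound
    intro a ha
    obtain ⟨s₀, hs₀⟩ := eventually_atTop.1 (hc_tend.eventually_ge_atTop 1)
    set x₁ := max (s₀ + 2) 1 with hx₁def
    set t₁ := Real.exp (-x₁) with ht₁def
    have ht₁pos : 0 < t₁ := Real.exp_pos _
    have hx₁1 : (1:ℝ) ≤ x₁ := le_max_right _ _
    have ht₁le1 : t₁ ≤ 1 := Real.exp_le_one_iff.2 (by linarith)
    have hIccsub : Set.Icc t₁ 1 ⊆ Set.Ioi (0:ℝ) := fun u hu => lt_of_lt_of_le ht₁pos hu.1
    have hBcont : ContinuousOn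
        (fun t => Real.exp (-a * auxP (e+1) Φ t) * deriv (auxP (e+1) Φ) t) (Set.Icc t₁ 1) := by
      refine ContinuousOn.mul ?_ (hderivcont.mono hIccsub)
      exact Real.continuous_exp.comp_continuousOn
        (continuousOn_const.mul (hCD.continuousOn.mono hIccsub))
    obtain ⟨C₂, hC₂⟩ := isCompact_Icc.exists_bound_of_continuousOn hBcont
    have hC₂0 : 0 ≤ C₂ := le_trans (norm_nonneg _) (hC₂ 1 ⟨ht₁le1, le_rfl⟩)
    refine ⟨max (((e:ℝ)+2) * (27 / a^3)) C₂, fun t ht => ?_⟩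
    have ht' : (0:ℝ) < t := ht
    rcases le_or_gt t t₁ with h1 | h1
    · -- small t
      have hxge : x₁ ≤ -Real.log t := by
        have h2 : Real.log t ≤ -x₁ := by
          calc Real.log t ≤ Real.log t₁ := Real.log_le_log ht' h1
            _ = -x₁ := by rw [ht₁def, Real.log_exp]
        linarith
      set x := -Real.log t with hxdef
      have hx0 : (0:ℝ) ≤ x := le_trans (by linarith) hxge
      have hle1 : t ≤ 1 := le_trans h1 ht₁le1
      have hG1 : 1 ≤ auxG (e+1) Φ x := by
        have h5 : auxC (e+1) Φ (x - 1 - 1) ≤ auxK (e+1) Φ (x-1) := auxC_le_K hΦnn (x-1)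
        have h6 : auxK (e+1) Φ (x-1) ≤ auxG (e+1) Φ x := auxK_le_G hΦnn x
        have h7 : 1 ≤ auxC (e+1) Φ (x - 1 - 1) := hs₀ _ (by
          have h8 : s₀ + 2 ≤ x₁ := le_max_left _ _
          linarith)
        linarith
      set u := (t^(e+1):ℝ)⁻¹ with hudef
      have hu0 : (0:ℝ) < t^(e+1) := pow_pos ht' _
      have hupos : (0:ℝ) < u := by positivity
      have hpow1 : t^(e+1) ≤ 1 := pow_le_one₀ ht'.le hle1
      have hmul : u * t^(e+1) = 1 := inv_mul_cancel₀ hu0.ne'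
      have hu1 : (1:ℝ) ≤ u := by nlinarith
      have hP_ge : u ≤ auxP (e+1) Φ t := by
        rw [auxP, div_eq_mul_inv]
        calc u = 1 * u := (one_mul u).symm
          _ ≤ auxG (e+1) Φ (-Real.log t) * u := by
              rw [← hxdef]
              exact mul_le_mul_of_nonneg_right hG1 hupos.le
      have hexp_le : Real.exp (-a * auxP (e+1) Φ t) ≤ Real.exp (-(a*u)) :=
        Real.exp_le_exp.2 (by nlinarith)
      have hxu : x ≤ u := by
        have hlogu : Real.log u = ((e:ℝ)+1) * x := by
          rw [hudef, Real.log_inv, Real.log_pow, hxdef]; push_cast; ring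
        have h7 : x ≤ Real.log u := by rw [hlogu]; nlinarith
        have h8 : Real.log u ≤ u - 1 := Real.log_le_sub_one_of_pos hupos
        linarith
      have htpow : (t^(e+2):ℝ)⁻¹ ≤ u^2 := by
        have h9 : t^(2*(e+1)) ≤ t^(e+2) := pow_le_pow_of_le_one ht'.le hle1 (by omega)
        have h10 : u^2 = ((t^(2*(e+1)):ℝ))⁻¹ := by
          rw [hudef, inv_pow, ← pow_mul, mul_comm]
        rw [h10]
        exact inv_anti₀ (pow_pos ht' _) h9
      have hD := hbound t ht'
      rw [← hxdef, max_eq_left hx0] at hD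
      have hD3 : |deriv (auxP (e+1) Φ) t| ≤ ((e:ℝ)+2)*(u*u^2) := by
        rw [div_eq_mul_inv] at hD
        refine le_trans hD ?_
        have hinv0 : (0:ℝ) ≤ ((t^(e+2):ℝ))⁻¹ := by positivity
        have hkey : x * ((t^(e+2):ℝ))⁻¹ ≤ u * u^2 :=
          mul_le_mul hxu htpow hinv0 (le_trans hx0 hxu)
        have hcp : (0:ℝ) ≤ (e:ℝ)+2 := by positivity
        nlinarith
      calc |Real.exp (-a * auxP (e+1) Φ t) * deriv (auxP (e+1) Φ) t|
          = Real.exp (-a * auxP (e+1) Φ t) * |deriv (auxP (e+1) Φ) t| := by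
            rw [abs_mul, abs_of_pos (Real.exp_pos _)]
        _ ≤ Real.exp (-(a*u)) * (((e:ℝ)+2)*(u*u^2)) :=
            mul_le_mul hexp_le hD3 (abs_nonneg _) (Real.exp_pos _).le
        _ = ((e:ℝ)+2) * (u^3 * Real.exp (-(a*u))) := by ring
        _ ≤ ((e:ℝ)+2) * (27 / a^3) := by
            refine mul_le_mul_of_nonneg_left ?_ (by positivity)
            have h10 : a*u/3 + 1 ≤ Real.exp (a*u/3) := by
              have h10' := Real.add_one_le_exp (a*u/3); linarith
            have h11 : u ≤ 3/a * Real.exp (a*u/3) := by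
              rw [div_mul_eq_mul_div, le_div_iff₀ ha]
              nlinarith [Real.exp_pos (a*u/3)]
            have h13 : Real.exp (a*u/3)^3 = Real.exp (a*u) := by
              rw [← Real.exp_nat_mul]
              congr 1
              push_cast
              ring
            have h12 : u^3 ≤ (3/a)^3 * Real.exp (a*u) := by
              calc u^3 ≤ (3/a * Real.exp (a*u/3))^3 :=
                    pow_le_pow_left₀ (by linarith) h11 3
                _ = (3/a)^3 * Real.exp (a*u/3)^3 := by ring
                _ = (3/a)^3 * Real.exp (a*u) := by rw [h13]
            calc u^3 * Real.exp (-(a*u))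
                ≤ ((3/a)^3 * Real.exp (a*u)) * Real.exp (-(a*u)) :=
                  mul_le_mul_of_nonneg_right h12 (Real.exp_pos _).le
              _ = (3/a)^3 * (Real.exp (a*u) * Real.exp (-(a*u))) := by ring
              _ = (3/a)^3 := by rw [← Real.exp_add]; simp
              _ = 27 / a^3 := by ring
        _ ≤ max (((e:ℝ)+2) * (27 / a^3)) C₂ := le_max_left _ _
    · rcases le_or_gt t 1 with h2 | h2
      · refine le_trans ?_ (le_max_right _ _)
        have hB := hC₂ t ⟨h1.le, h2⟩
        rw [Real.norm_eq_abs] at hB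
        exact hB
      · -- t > 1
        have hxneg : -Real.log t ≤ 0 := by
          have := Real.log_nonneg h2.le; linarith
        have hD := hbound t ht'
        rw [max_eq_right hxneg] at hD
        have hd0 : deriv (auxP (e+1) Φ) t = 0 := by
          have hle0 : |deriv (auxP (e+1) Φ) t| ≤ 0 := by
            refine le_trans hD ?_
            rw [mul_zero, zero_div]
          exact abs_eq_zero.1 (le_antisymm hle0 (abs_nonneg _))
        rw [hd0, mul_zero, abs_zero]
        exact le_trans hC₂0 (le_max_right _ _)
end

section
/- Let φ satisfy (BB), (RP) and (T), and let λ > 0. Then there exists a set S ⊆ Λ_{2λ} \ Λ_λ, depending only on λ and d, such that for every finite set Z ⊆ Λ_λ having distances < λ one has Ũ_{φ,λ}(Z) = W_{φ_λ}(Z, Z̃ ∩ S) + U_{φ_λ}(Z), where Z̃ := ∪_{r∈ℤ^d}(Z + 2λr) is the 2λ-periodic continuation of Z. -/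
open MeasureTheory Filter Set
open scoped BigOperators ENNReal Topology

noncomputable section

/-- ℝ^d with the maximum norm. -/
abbrev Rd (d : ℕ) : Type := Fin d → ℝ

/-- ℤ^d. -/
abbrev Zd (d : ℕ) : Type := Fin d → ℤ

/-- The point y + 2λr. -/
def shiftPt {d : ℕ} (l : ℝ) (y : Rd d) (r : Zd d) : Rd d := fun i => y i + 2 * l * (r i : ℝ)

/-- Λ_λ = (−λ,λ]^d. -/
def Lam {d : ℕ} (l : ℝ) : Set (Rd d) := {x | ∀ i, -l < x i ∧ x i ≤ l}

/-- The open cube (−λ,λ)^d. -/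
def LamO {d : ℕ} (l : ℝ) : Set (Rd d) := {x | ∀ i, -l < x i ∧ x i < l}

/-- The periodic sum Σ_{r∈ℤ^d} φ(y+2λr) (= 0 by convention if not absolutely convergent). -/
def periodize {d : ℕ} (φ : Rd d → ℝ) (l : ℝ) (y : Rd d) : ℝ :=
  ∑' r : Zd d, φ (shiftPt l y r)

/-- φ_λ = 1_{(−λ,λ)^d} · Σ_{r∈ℤ^d} φ(·+2λr). -/
def philam {d : ℕ} (φ : Rd d → ℝ) (l : ℝ) : Rd d → ℝ :=
  (LamO l).indicator (periodize φ l)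

/-- U_ψ(Z): the sum of ψ(x−y) over unordered pairs of distinct points of Z
(for symmetric ψ). -/
def pairE {d : ℕ} (ψ : Rd d → ℝ) (Z : Finset (Rd d)) : ℝ :=
  (∑ x ∈ Z, ∑ y ∈ Z.erase x, ψ (x - y)) / 2

/-- The periodic energy Ũ_{φ,λ}(Z) = Σ_{{x,y}⊆Z} Σ_{r∈ℤ^d} φ(x−y+2λr). -/
def perE {d : ℕ} (φ : Rd d → ℝ) (l : ℝ) (Z : Finset (Rd d)) : ℝ :=
  (∑ x ∈ Z, ∑ y ∈ Z.erase x, periodize φ l (x - y)) / 2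

/-- Z has distances < λ. -/
def hasDistLt {d : ℕ} (l : ℝ) (Z : Finset (Rd d)) : Prop :=
  ∀ x ∈ Z, ∀ y ∈ Z, ∀ i, x i - y i ≠ l

/-- The 2λ-periodic continuation of Z. -/
def Ztilde {d : ℕ} (l : ℝ) (Z : Finset (Rd d)) : Set (Rd d) :=
  {y | ∃ x ∈ Z, ∃ r : Zd d, y = shiftPt l x r}

/-- W_ψ(Z, A) with A a (possibly infinite) set; the inner sum is a tsum. -/
def interES {d : ℕ} (ψ : Rd d → ℝ) (Z : Finset (Rd d)) (A : Set (Rd d)) : ℝ :=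
  ∑ x ∈ Z, ∑' y : A, ψ (x - (y : Rd d))

namespace Stmt1Aux

variable {d : ℕ}

/-- The fold vector: for v = x − y, the shift r with x − y − 2λr in the open cube. -/
def rho (l : ℝ) (v : Rd d) : Zd d := fun i => if l < v i then 1 else if v i < -l then -1 else 0

/-- Fold a point of Λ_{2λ} back into Λ_λ. -/
def sigmaFold (l : ℝ) (z : Rd d) : Zd d := fun i => if l < z i then -1 else if z i ≤ -l then 1 else 0

/-- The correction set S: points of Λ_{2λ} whose first coordinate outside (−λ,λ] is > λ. -/
def Sdef (d : ℕ) (l : ℝ) : Set (Rd d) :=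
  {z | z ∈ Lam (2*l) ∧ ∃ i : Fin d, l < z i ∧ ∀ j, j < i → (-l < z j ∧ z j ≤ l)}

lemma mem_Sdef {l : ℝ} {z : Rd d} :
    z ∈ Sdef d l ↔ z ∈ Lam (2*l) ∧ ∃ i : Fin d, l < z i ∧ ∀ j, j < i → (-l < z j ∧ z j ≤ l) :=
  Iff.rfl

lemma rho_values (l : ℝ) (v : Rd d) (i : Fin d) :
    rho l v i = 1 ∨ rho l v i = 0 ∨ rho l v i = -1 := by
  unfold rho; split_ifs <;> simp

lemma shiftPt_shiftPt (l : ℝ) (y : Rd d) (r s : Zd d) :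
    shiftPt l (shiftPt l y r) s = shiftPt l y (r + s) := by
  funext i
  simp only [shiftPt, Pi.add_apply, Int.cast_add]
  ring

lemma shiftPt_zero (l : ℝ) (y : Rd d) : shiftPt l y 0 = y := by
  funext i; simp [shiftPt]

lemma periodize_shiftPt (φ : Rd d → ℝ) (l : ℝ) (y : Rd d) (r : Zd d) :
    periodize φ l (shiftPt l y r) = periodize φ l y := by
  unfold periodize
  calc ∑' s : Zd d, φ (shiftPt l (shiftPt l y r) s)
      = ∑' s : Zd d, φ (shiftPt l y (r + s)) := tsum_congr fun s => by rw [shiftPt_shiftPt]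
    _ = ∑' s : Zd d, φ (shiftPt l y s) :=
        Equiv.tsum_eq (Equiv.addLeft r) (fun s => φ (shiftPt l y s))

lemma periodize_neg (φ : Rd d → ℝ) (hsymm : ∀ x, φ (-x) = φ x) (l : ℝ) (y : Rd d) :
    periodize φ l (-y) = periodize φ l y := by
  unfold periodize
  calc ∑' s : Zd d, φ (shiftPt l (-y) s)
      = ∑' s : Zd d, φ (shiftPt l y (-s)) := tsum_congr fun s => by
        rw [show shiftPt l (-y) s = -(shiftPt l y (-s)) from ?_, hsymm]
        funext i; simp [shiftPt]; ring
    _ = ∑' s : Zd d, φ (shiftPt l y s) :=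
        Equiv.tsum_eq (Equiv.neg (Zd d)) (fun s => φ (shiftPt l y s))

lemma double_sum_symm {α : Type*} (Z : Finset α) (f g : α → α → ℝ)
    (h : ∀ x ∈ Z, ∀ y ∈ Z, f x y + f y x = g x y) :
    ∑ x ∈ Z, ∑ y ∈ Z, f x y = (∑ x ∈ Z, ∑ y ∈ Z, g x y) / 2 := by
  have hc : (∑ x ∈ Z, ∑ y ∈ Z, f y x) = ∑ x ∈ Z, ∑ y ∈ Z, f x y := Finset.sum_comm
  have h2 : ∑ x ∈ Z, ∑ y ∈ Z, g x y
      = (∑ x ∈ Z, ∑ y ∈ Z, f x y) + (∑ x ∈ Z, ∑ y ∈ Z, f y x) := by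
    calc ∑ x ∈ Z, ∑ y ∈ Z, g x y = ∑ x ∈ Z, ∑ y ∈ Z, (f x y + f y x) :=
          Finset.sum_congr rfl fun x hx => Finset.sum_congr rfl fun y hy => (h x hx y hy).symm
      _ = _ := by
          rw [← Finset.sum_add_distrib]
          exact Finset.sum_congr rfl fun x _ => Finset.sum_add_distrib
  rw [h2, hc]; ring

end Stmt1Aux

theorem stmt1 (d : ℕ) (hd : 1 ≤ d)
    (φ : Rd d → ℝ) (hmeas : Measurable φ) (hsymm : ∀ x, φ (-x) = φ x)
    (M : ℝ) (hBB : ∀ x, -M ≤ φ x)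
    (R : ℝ) (hR : 0 < R)
    (Φ : ℝ → ℝ) (hΦnn : ∀ t ∈ Set.Ioi (0:ℝ), 0 ≤ Φ t)
    (hΦcont : ContinuousOn Φ (Set.Ioi 0)) (hΦanti : AntitoneOn Φ (Set.Ioi 0))
    (hΦtend : Tendsto (fun t => Φ t * t ^ d) (nhdsWithin 0 (Set.Ioi 0)) atTop)
    (hRP : ∀ x : Rd d, x ≠ 0 → ‖x‖ ≤ R → Φ ‖x‖ ≤ φ x)
    (hUB : ∀ r : ℝ, 0 < r → ∃ C, ∀ x : Rd d, r ≤ ‖x‖ → φ x ≤ C)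
    (G ε : ℝ) (hε : 0 < ε)
    (hT : ∀ x : Rd d, R ≤ ‖x‖ → |φ x| ≤ G * ‖x‖ ^ (-(d:ℝ) - ε))
    (l : ℝ) (hl : 0 < l) :
    ∃ S : Set (Rd d), S ⊆ Lam (2 * l) \ Lam l ∧
      ∀ Z : Finset (Rd d), (Z : Set (Rd d)) ⊆ Lam l → hasDistLt l Z →
        perE φ l Z = interES (philam φ l) Z (Ztilde l Z ∩ S) + pairE (philam φ l) Z := by
  classical
  refine ⟨Stmt1Aux.Sdef d l, ?_, ?_⟩
  · rintro z ⟨hz2, i, hi, -⟩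
    exact ⟨hz2, fun hz1 => absurd (hz1 i).2 (not_le.mpr hi)⟩
  intro Z hZ hdist
  set S := Stmt1Aux.Sdef d l with hSdef
  -- basic coordinate bounds
  have hx : ∀ x ∈ Z, ∀ i : Fin d, -l < x i ∧ x i ≤ l := fun x hxZ i => hZ hxZ i
  -- the coordinatewise trichotomy for the folded point
  have trich : ∀ x ∈ Z, ∀ y ∈ Z, ∀ i : Fin d,
      (Stmt1Aux.rho l (x - y) i = 1 ∧ l < x i - y i ∧
        l < shiftPt l y (Stmt1Aux.rho l (x - y)) i ∧
        shiftPt l y (Stmt1Aux.rho l (x - y)) i < 2*l) ∨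
      (Stmt1Aux.rho l (x - y) i = -1 ∧ x i - y i < -l ∧
        -(2*l) < shiftPt l y (Stmt1Aux.rho l (x - y)) i ∧
        shiftPt l y (Stmt1Aux.rho l (x - y)) i ≤ -l) ∨
      (Stmt1Aux.rho l (x - y) i = 0 ∧ -l < x i - y i ∧ x i - y i < l ∧
        -l < shiftPt l y (Stmt1Aux.rho l (x - y)) i ∧
        shiftPt l y (Stmt1Aux.rho l (x - y)) i ≤ l) := by
    intro x hxZ y hyZ i
    obtain ⟨hx1, hx2⟩ := hx x hxZ i
    obtain ⟨hy1, hy2⟩ := hx y hyZ i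
    have hd1 : x i - y i ≠ l := hdist x hxZ y hyZ i
    have hd2' : y i - x i ≠ l := hdist y hyZ x hxZ i
    have hd2 : x i - y i ≠ -l := fun h => hd2' (by linarith)
    have hvi : (x - y) i = x i - y i := rfl
    by_cases h1 : l < (x - y) i
    · have hr : Stmt1Aux.rho l (x - y) i = 1 := by
        simp only [Stmt1Aux.rho]; rw [if_pos h1]
      have hz : shiftPt l y (Stmt1Aux.rho l (x - y)) i = y i + 2*l := by
        simp only [shiftPt, hr, Int.cast_one]; ring
      rw [hvi] at h1
      exact Or.inl ⟨hr, h1, by rw [hz]; linarith, by rw [hz]; linarith⟩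
    · by_cases h2 : (x - y) i < -l
      · have hr : Stmt1Aux.rho l (x - y) i = -1 := by
          simp only [Stmt1Aux.rho]; rw [if_neg h1, if_pos h2]
        have hz : shiftPt l y (Stmt1Aux.rho l (x - y)) i = y i - 2*l := by
          simp only [shiftPt, hr, Int.cast_neg, Int.cast_one]; ring
        rw [hvi] at h2
        exact Or.inr (Or.inl ⟨hr, h2, by rw [hz]; linarith, by rw [hz]; linarith⟩)
      · have hr : Stmt1Aux.rho l (x - y) i = 0 := by
          simp only [Stmt1Aux.rho]; rw [if_neg h1, if_neg h2]
        have hz : shiftPt l y (Stmt1Aux.rho l (x - y)) i = y i := by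
          simp only [shiftPt, hr, Int.cast_zero]; ring
        rw [hvi] at h1 h2
        push_neg at h1 h2
        have hlt : x i - y i < l := lt_of_le_of_ne h1 hd1
        have hgt : -l < x i - y i := lt_of_le_of_ne h2 (Ne.symm hd2)
        exact Or.inr (Or.inr ⟨hr, hgt, hlt, by rw [hz]; linarith, by rw [hz]; linarith⟩)
  -- if the difference is in the open cube, rho is 0
  have rho_zero : ∀ v : Rd d, v ∈ LamO l → Stmt1Aux.rho l v = 0 := by
    intro v hv
    funext i
    obtain ⟨h1, h2⟩ := hv i
    have e1 : ¬ l < v i := by linarith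
    have e2 : ¬ v i < -l := by linarith
    show Stmt1Aux.rho l v i = 0
    simp only [Stmt1Aux.rho]; rw [if_neg e1, if_neg e2]
  have hz0 : ∀ x ∈ Z, ∀ y ∈ Z, (∀ i, Stmt1Aux.rho l (x - y) i = 0) → x - y ∈ LamO l := by
    intro x hxZ y hyZ hall i
    rcases trich x hxZ y hyZ i with ⟨hr, -, -, -⟩|⟨hr, -, -, -⟩|⟨-, hgt, hlt, -, -⟩
    · rw [hall i] at hr; exact absurd hr (by norm_num)
    · rw [hall i] at hr; exact absurd hr (by norm_num)
    · exact ⟨hgt, hlt⟩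
  -- the folded point is in Λ_{2λ}
  have zmem2 : ∀ x ∈ Z, ∀ y ∈ Z, shiftPt l y (Stmt1Aux.rho l (x - y)) ∈ Lam (2*l) := by
    intro x hxZ y hyZ i
    rcases trich x hxZ y hyZ i with ⟨-, -, h3, h4⟩|⟨-, -, h3, h4⟩|⟨-, -, -, h3, h4⟩ <;>
      exact ⟨by linarith, by linarith⟩
  -- coordinate characterizations
  have hz1iff : ∀ x ∈ Z, ∀ y ∈ Z, ∀ i,
      (l < shiftPt l y (Stmt1Aux.rho l (x - y)) i ↔ Stmt1Aux.rho l (x - y) i = 1) := by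
    intro x hxZ y hyZ i
    rcases trich x hxZ y hyZ i with ⟨hr, -, h3, -⟩|⟨hr, -, -, h4⟩|⟨hr, -, -, -, h5⟩
    · exact iff_of_true h3 hr
    · exact iff_of_false (by linarith) (by omega)
    · exact iff_of_false (by linarith) (by omega)
  have hz0iff : ∀ x ∈ Z, ∀ y ∈ Z, ∀ j,
      ((-l < shiftPt l y (Stmt1Aux.rho l (x - y)) j ∧
        shiftPt l y (Stmt1Aux.rho l (x - y)) j ≤ l) ↔ Stmt1Aux.rho l (x - y) j = 0) := by
    intro x hxZ y hyZ j
    rcases trich x hxZ y hyZ j with ⟨hr, -, h3, -⟩|⟨hr, -, -, h4⟩|⟨hr, -, -, h5, h6⟩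
    · exact iff_of_false (fun h => by linarith [h.2]) (by omega)
    · exact iff_of_false (fun h => by linarith [h.1]) (by omega)
    · exact iff_of_true ⟨h5, h6⟩ hr
  have zS_iff : ∀ x ∈ Z, ∀ y ∈ Z,
      (shiftPt l y (Stmt1Aux.rho l (x - y)) ∈ S ↔
        ∃ i, Stmt1Aux.rho l (x - y) i = 1 ∧ ∀ j, j < i → Stmt1Aux.rho l (x - y) j = 0) := by
    intro x hxZ y hyZ
    rw [hSdef, Stmt1Aux.mem_Sdef]
    constructor
    · rintro ⟨-, i, hi, hmin⟩
      exact ⟨i, (hz1iff x hxZ y hyZ i).1 hi, fun j hj => (hz0iff x hxZ y hyZ j).1 (hmin j hj)⟩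
    · rintro ⟨i, hi, hmin⟩
      exact ⟨zmem2 x hxZ y hyZ, i, (hz1iff x hxZ y hyZ i).2 hi,
        fun j hj => (hz0iff x hxZ y hyZ j).2 (hmin j hj)⟩
  -- rho is antisymmetric on pairs of points of Z
  have rho_swap : ∀ x ∈ Z, ∀ y ∈ Z, ∀ i,
      Stmt1Aux.rho l (y - x) i = -(Stmt1Aux.rho l (x - y) i) := by
    intro x hxZ y hyZ i
    rcases trich x hxZ y hyZ i with ⟨hr, h2, -, -⟩|⟨hr, h2, -, -⟩|⟨hr, h2, h3, -, -⟩
    · have e1 : ¬ l < (y - x) i := by simp only [Pi.sub_apply]; linarith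
      have e2 : (y - x) i < -l := by simp only [Pi.sub_apply]; linarith
      rw [hr]
      simp only [Stmt1Aux.rho]; rw [if_neg e1, if_pos e2]
    · have e1 : l < (y - x) i := by simp only [Pi.sub_apply]; linarith
      rw [hr]
      simp only [Stmt1Aux.rho]; rw [if_pos e1]; norm_num
    · have e1 : ¬ l < (y - x) i := by simp only [Pi.sub_apply]; linarith
      have e2 : ¬ (y - x) i < -l := by simp only [Pi.sub_apply]; linarith
      rw [hr]
      simp only [Stmt1Aux.rho]; rw [if_neg e1, if_neg e2]; norm_num
  -- exactly one of the two folded points lies in S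
  have excl : ∀ x ∈ Z, ∀ y ∈ Z, x - y ∉ LamO l →
      ((shiftPt l y (Stmt1Aux.rho l (x - y)) ∈ S ∧ shiftPt l x (Stmt1Aux.rho l (y - x)) ∉ S) ∨
       (shiftPt l y (Stmt1Aux.rho l (x - y)) ∉ S ∧ shiftPt l x (Stmt1Aux.rho l (y - x)) ∈ S)) := by
    intro x hxZ y hyZ hout
    have hne0 : ∃ i, Stmt1Aux.rho l (x - y) i ≠ 0 := by
      by_contra hc
      push_neg at hc
      exact hout (hz0 x hxZ y hyZ hc)
    have hT : (Finset.univ.filter (fun i => Stmt1Aux.rho l (x - y) i ≠ 0)).Nonempty := by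
      obtain ⟨i, hi⟩ := hne0; exact ⟨i, by simp [hi]⟩
    set i0 := (Finset.univ.filter (fun i => Stmt1Aux.rho l (x - y) i ≠ 0)).min' hT with hi0def
    have hi0 : Stmt1Aux.rho l (x - y) i0 ≠ 0 := by
      have := Finset.min'_mem _ hT
      rw [← hi0def] at this
      simpa using this
    have hmin : ∀ j, j < i0 → Stmt1Aux.rho l (x - y) j = 0 := by
      intro j hj
      by_contra hc
      have : i0 ≤ j := Finset.min'_le _ j (by simp [hc])
      exact absurd hj (not_lt.mpr this)
    have hs2 : shiftPt l x (Stmt1Aux.rho l (y - x)) ∈ S ↔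
        ∃ i, Stmt1Aux.rho l (x - y) i = -1 ∧ ∀ j, j < i → Stmt1Aux.rho l (x - y) j = 0 := by
      rw [zS_iff y hyZ x hxZ]
      constructor
      · rintro ⟨i, hi, hm⟩
        refine ⟨i, ?_, fun j hj => ?_⟩
        · have := rho_swap x hxZ y hyZ i; omega
        · have := rho_swap x hxZ y hyZ j; have := hm j hj; omega
      · rintro ⟨i, hi, hm⟩
        refine ⟨i, ?_, fun j hj => ?_⟩
        · have := rho_swap x hxZ y hyZ i; omega
        · have := rho_swap x hxZ y hyZ j; have := hm j hj; omega
    rcases Stmt1Aux.rho_values l (x - y) i0 with h1|h0|hm1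
    · left
      refine ⟨(zS_iff x hxZ y hyZ).2 ⟨i0, h1, hmin⟩, ?_⟩
      rw [hs2]
      rintro ⟨i, hi, hm⟩
      rcases lt_trichotomy i i0 with hlt|heq|hgt
      · have := hmin i hlt; omega
      · subst heq; omega
      · have := hm i0 hgt; omega
    · exact absurd h0 hi0
    · right
      constructor
      · rw [zS_iff x hxZ y hyZ]
        rintro ⟨i, hi, hm⟩
        rcases lt_trichotomy i i0 with hlt|heq|hgt
        · have := hmin i hlt; omega
        · subst heq; omega
        · have := hm i0 hgt; omega
      · exact hs2.2 ⟨i0, hm1, hmin⟩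
  -- shift vectors landing in Λ_{2λ} have coordinates in {-1,0,1}
  have rbound : ∀ y ∈ Z, ∀ r : Zd d, shiftPt l y r ∈ Lam (2*l) →
      ∀ i, r i = -1 ∨ r i = 0 ∨ r i = 1 := by
    intro y hyZ r hr2 i
    obtain ⟨hz1, hz2⟩ := hr2 i
    obtain ⟨hy1, hy2⟩ := hx y hyZ i
    have hzi : shiftPt l y r i = y i + 2*l*(r i : ℝ) := rfl
    rw [hzi] at hz1 hz2
    by_contra hc
    push_neg at hc
    obtain ⟨hc1, hc2, hc3⟩ := hc
    have hcase : (r i : ℝ) ≤ -2 ∨ (2:ℝ) ≤ (r i : ℝ) := by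
      rcases lt_or_ge (r i) 0 with h|h
      · left; exact_mod_cast (by omega : r i ≤ -2)
      · right; exact_mod_cast (by omega : 2 ≤ r i)
    rcases hcase with h|h
    · nlinarith
    · nlinarith
  -- the set Ztilde ∩ S is finite
  have hAfin : (Ztilde l Z ∩ S).Finite := by
    have hsub : Ztilde l Z ∩ S ⊆
        (fun p : Rd d × Zd d => shiftPt l p.1 p.2) ''
          ((Z : Set (Rd d)) ×ˢ (Set.pi Set.univ fun _ : Fin d => Set.Icc (-1 : ℤ) 1)) := by
      rintro z ⟨⟨y, hyZ, r, rfl⟩, hzS⟩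
      refine ⟨(y, r), ⟨hyZ, fun i _ => ?_⟩, rfl⟩
      refine Set.mem_Icc.mpr ?_
      rcases rbound y hyZ r hzS.1 i with h|h|h <;> simp [h]
    exact Set.Finite.subset
      (((Z.finite_toSet).prod (Set.Finite.pi fun _ => Set.finite_Icc _ _)).image _) hsub
  -- folding recovers the generator
  have hsigma : ∀ y ∈ Z, ∀ r : Zd d, shiftPt l y r ∈ Lam (2*l) →
      shiftPt l (shiftPt l y r) (Stmt1Aux.sigmaFold l (shiftPt l y r)) = y := by
    intro y hyZ r hr2
    funext i
    obtain ⟨hy1, hy2⟩ := hx y hyZ i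
    have hzi : shiftPt l y r i = y i + 2*l*(r i : ℝ) := rfl
    have hs : Stmt1Aux.sigmaFold l (shiftPt l y r) i = - r i := by
      rcases rbound y hyZ r hr2 i with h|h|h
      · have e0 : shiftPt l y r i = y i - 2*l := by rw [hzi, h]; push_cast; ring
        have e1 : ¬ l < shiftPt l y r i := by rw [e0]; linarith
        have e2 : shiftPt l y r i ≤ -l := by rw [e0]; linarith
        simp only [Stmt1Aux.sigmaFold]; rw [if_neg e1, if_pos e2, h]; norm_num
      · have e0 : shiftPt l y r i = y i := by rw [hzi, h]; push_cast; ring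
        have e1 : ¬ l < shiftPt l y r i := by rw [e0]; linarith
        have e2 : ¬ shiftPt l y r i ≤ -l := by rw [e0]; linarith
        simp only [Stmt1Aux.sigmaFold]; rw [if_neg e1, if_neg e2, h]; norm_num
      · have e0 : shiftPt l y r i = y i + 2*l := by rw [hzi, h]; push_cast; ring
        have e1 : l < shiftPt l y r i := by rw [e0]; linarith
        simp only [Stmt1Aux.sigmaFold]; rw [if_pos e1, h]
    show shiftPt l y r i + 2*l*((Stmt1Aux.sigmaFold l (shiftPt l y r)) i : ℝ) = y i
    rw [hs, hzi]; push_cast; ring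
  -- the shift vector is determined
  have hrdet : ∀ x ∈ Z, ∀ y ∈ Z, ∀ r : Zd d, shiftPt l y r ∈ Lam (2*l) →
      x - shiftPt l y r ∈ LamO l → r = Stmt1Aux.rho l (x - y) := by
    intro x hxZ y hyZ r hr2 hin
    funext i
    obtain ⟨hb1, hb2⟩ := hin i
    have hzi : (x - shiftPt l y r) i = x i - y i - 2*l*(r i : ℝ) := by
      simp only [Pi.sub_apply, shiftPt]; ring
    rw [hzi] at hb1 hb2
    rcases rbound y hyZ r hr2 i with h|h|h <;> rw [h] <;> rw [h] at hb1 hb2 <;>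
      push_cast at hb1 hb2
    · have e1 : ¬ l < (x - y) i := by simp only [Pi.sub_apply]; linarith
      have e2 : (x - y) i < -l := by simp only [Pi.sub_apply]; linarith
      simp only [Stmt1Aux.rho]; rw [if_neg e1, if_pos e2]
    · have e1 : ¬ l < (x - y) i := by simp only [Pi.sub_apply]; linarith
      have e2 : ¬ (x - y) i < -l := by simp only [Pi.sub_apply]; linarith
      simp only [Stmt1Aux.rho]; rw [if_neg e1, if_neg e2]
    · have e1 : l < (x - y) i := by simp only [Pi.sub_apply]; linarith
      simp only [Stmt1Aux.rho]; rw [if_pos e1]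
  -- the folded difference is in the open cube
  have hA' : ∀ x ∈ Z, ∀ y ∈ Z, x - shiftPt l y (Stmt1Aux.rho l (x - y)) ∈ LamO l := by
    intro x hxZ y hyZ i
    obtain ⟨hx1, hx2⟩ := hx x hxZ i
    obtain ⟨hy1, hy2⟩ := hx y hyZ i
    have hzi : (x - shiftPt l y (Stmt1Aux.rho l (x - y))) i
        = x i - y i - 2*l*((Stmt1Aux.rho l (x - y)) i : ℝ) := by
      simp only [Pi.sub_apply, shiftPt]; ring
    rw [hzi]
    rcases trich x hxZ y hyZ i with ⟨hr, h2, -, -⟩|⟨hr, h2, -, -⟩|⟨hr, h2, h3, -, -⟩ <;>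
      rw [hr] <;> push_cast <;> constructor <;> linarith
  -- Step 1: the inner tsum equals a finite sum over Z
  have step1x : ∀ x ∈ Z, (∑' z : ↑(Ztilde l Z ∩ S), philam φ l (x - (z : Rd d)))
      = ∑ y ∈ Z, (if x - y ∉ LamO l ∧ shiftPt l y (Stmt1Aux.rho l (x - y)) ∈ S
          then periodize φ l (x - y) else 0) := by
    intro x hxZ
    have h1 : (∑' z : ↑(Ztilde l Z ∩ S), philam φ l (x - (z : Rd d)))
        = ∑ z ∈ hAfin.toFinset, philam φ l (x - z) := by
      rw [tsum_subtype (Ztilde l Z ∩ S) (fun w => philam φ l (x - w))]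
      rw [tsum_eq_sum (s := hAfin.toFinset)
        (fun b hb => Set.indicator_of_notMem (fun hmem => hb (hAfin.mem_toFinset.mpr hmem)) _)]
      exact Finset.sum_congr rfl fun z hz => Set.indicator_of_mem (hAfin.mem_toFinset.mp hz) _
    rw [h1]
    calc ∑ z ∈ hAfin.toFinset, philam φ l (x - z)
        = ∑ z ∈ hAfin.toFinset.filter (fun z => x - z ∈ LamO l), periodize φ l (x - z) := by
          rw [Finset.sum_filter]
          exact Finset.sum_congr rfl fun z _ => Set.indicator_apply _ _ _
      _ = ∑ y ∈ Z.filter (fun y => x - y ∉ LamO l ∧ shiftPt l y (Stmt1Aux.rho l (x - y)) ∈ S),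
            periodize φ l (x - y) := ?_
      _ = ∑ y ∈ Z, (if x - y ∉ LamO l ∧ shiftPt l y (Stmt1Aux.rho l (x - y)) ∈ S
            then periodize φ l (x - y) else 0) := Finset.sum_filter _ _
    refine Finset.sum_nbij' (fun z => shiftPt l z (Stmt1Aux.sigmaFold l z))
        (fun y => shiftPt l y (Stmt1Aux.rho l (x - y))) ?_ ?_ ?_ ?_ ?_
    · intro z hzmem
      rw [Finset.mem_filter] at hzmem
      obtain ⟨hzF, hzin⟩ := hzmem
      obtain ⟨⟨y0, hy0, r, rfl⟩, hzS⟩ := hAfin.mem_toFinset.mp hzF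
      have hgen := hsigma y0 hy0 r hzS.1
      rw [hgen, Finset.mem_filter]
      have hr : r = Stmt1Aux.rho l (x - y0) := hrdet x hxZ y0 hy0 r hzS.1 hzin
      refine ⟨hy0, ?_, ?_⟩
      · intro hcon
        have h0 : Stmt1Aux.rho l (x - y0) = 0 := rho_zero _ hcon
        rw [hr, h0, Stmt1Aux.shiftPt_zero] at hzS
        obtain ⟨-, i, hi, -⟩ := hzS
        exact absurd (hx y0 hy0 i).2 (not_le.mpr hi)
      · rw [← hr]; exact hzS
    · intro y hymem
      rw [Finset.mem_filter] at hymem ⊢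
      obtain ⟨hyZ, hyout, hyS⟩ := hymem
      exact ⟨hAfin.mem_toFinset.mpr ⟨⟨y, hyZ, _, rfl⟩, hyS⟩, hA' x hxZ y hyZ⟩
    · intro z hzmem
      rw [Finset.mem_filter] at hzmem
      obtain ⟨hzF, hzin⟩ := hzmem
      obtain ⟨⟨y0, hy0, r, rfl⟩, hzS⟩ := hAfin.mem_toFinset.mp hzF
      have hgen := hsigma y0 hy0 r hzS.1
      rw [hgen, ← hrdet x hxZ y0 hy0 r hzS.1 hzin]
    · intro y hymem
      rw [Finset.mem_filter] at hymem
      exact hsigma y hymem.1 _ (zmem2 x hxZ y hymem.1)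
    · intro z hzmem
      rw [Finset.mem_filter] at hzmem
      obtain ⟨hzF, hzin⟩ := hzmem
      obtain ⟨⟨y0, hy0, r, rfl⟩, hzS⟩ := hAfin.mem_toFinset.mp hzF
      rw [hsigma y0 hy0 r hzS.1]
      have he : x - shiftPt l y0 r = shiftPt l (x - y0) (-r) := by
        funext i
        simp only [Pi.sub_apply, shiftPt, Pi.neg_apply]
        push_cast; ring
      rw [he, Stmt1Aux.periodize_shiftPt]
  -- Step 2: symmetrize
  have hsum2 : ∀ x ∈ Z, ∀ y ∈ Z,
      (if x - y ∉ LamO l ∧ shiftPt l y (Stmt1Aux.rho l (x - y)) ∈ S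
          then periodize φ l (x - y) else 0)
      + (if y - x ∉ LamO l ∧ shiftPt l x (Stmt1Aux.rho l (y - x)) ∈ S
          then periodize φ l (y - x) else 0)
      = (if x - y ∉ LamO l then periodize φ l (x - y) else 0) := by
    intro x hxZ y hyZ
    have hper : periodize φ l (y - x) = periodize φ l (x - y) := by
      rw [show y - x = -(x - y) by ring, Stmt1Aux.periodize_neg φ hsymm]
    have hneg : ∀ v : Rd d, v ∈ LamO l → -v ∈ LamO l := by
      intro v hv i
      obtain ⟨a, b⟩ := hv i
      constructor
      · show -l < -(v i); linarith
      · show -(v i) < l; linarith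
    by_cases hout : x - y ∉ LamO l
    · rw [if_pos hout]
      have hout' : y - x ∉ LamO l := fun hc => hout (by
        have := hneg _ hc
        rwa [show -(y - x) = x - y by ring] at this)
      rcases excl x hxZ y hyZ hout with ⟨h1, h2⟩|⟨h1, h2⟩
      · rw [if_pos ⟨hout, h1⟩, if_neg (fun hc => h2 hc.2), add_zero]
      · rw [if_neg (fun hc => h1 hc.2), if_pos ⟨hout', h2⟩, zero_add, hper]
    · have hin : x - y ∈ LamO l := not_not.mp hout
      have hin' : y - x ∈ LamO l := by
        have := hneg _ hin
        rwa [show -(x - y) = y - x by ring] at this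
      rw [if_neg hout, if_neg (fun hc => hc.1 hin), if_neg (fun hc => hc.1 hin'), add_zero]
  -- Step 3: the energy difference
  have hpe : perE φ l Z - pairE (philam φ l) Z
      = (∑ x ∈ Z, ∑ y ∈ Z, (if x - y ∉ LamO l then periodize φ l (x - y) else 0)) / 2 := by
    unfold perE pairE
    rw [div_sub_div_same, ← Finset.sum_sub_distrib]
    congr 1
    refine Finset.sum_congr rfl fun x hx' => ?_
    rw [← Finset.sum_sub_distrib]
    have hterm : ∀ y ∈ Z.erase x, periodize φ l (x - y) - philam φ l (x - y)
        = (if x - y ∉ LamO l then periodize φ l (x - y) else 0) := by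
      intro y hy
      unfold philam
      by_cases hin : x - y ∈ LamO l
      · rw [Set.indicator_of_mem hin, if_neg (not_not.mpr hin)]; ring
      · rw [Set.indicator_of_notMem hin, if_pos hin]; ring
    rw [Finset.sum_congr rfl hterm]
    apply Finset.sum_erase
    have h0 : (0 : Rd d) ∈ LamO l := by
      intro i
      constructor
      · show -l < (0:ℝ); linarith
      · show (0:ℝ) < l; linarith
    rw [if_neg (not_not.mpr (by rwa [sub_self]))]
  -- assemble
  have hfinal : interES (philam φ l) Z (Ztilde l Z ∩ S) = perE φ l Z - pairE (philam φ l) Z := by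
    have h1 : interES (philam φ l) Z (Ztilde l Z ∩ S)
        = ∑ x ∈ Z, ∑ y ∈ Z, (if x - y ∉ LamO l ∧ shiftPt l y (Stmt1Aux.rho l (x - y)) ∈ S
            then periodize φ l (x - y) else 0) := by
      unfold interES
      exact Finset.sum_congr rfl step1x
    rw [h1, Stmt1Aux.double_sum_symm Z _ _ hsum2, hpe]
  linarith
end
end

section
/- Let d ≥ 1 and λ₀ > 0. There exists a constant c ≥ 1 (depending only on d and λ₀) such that for all λ ≥ λ₀, every finite set Z ⊆ Λ_λ, and every k ∈ ℕ, setting Z_k := ∪_{r∈ℤ^d, |r|≤k} (Z + 2λr), one has (2k+1)^d·c^{−1}·Σ_{r∈ℤ^d} #(Z ∩ Q_1(r))² ≤ Σ_{r∈ℤ^d} #(Z_k ∩ Q_1(r))² ≤ (2k+1)^d·c·Σ_{r∈ℤ^d} #(Z ∩ Q_1(r))². -/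
open MeasureTheory Filter Set
open scoped BigOperators ENNReal Topology

noncomputable section

/-- The half-open unit cube Q_1(r). -/
def Qcube {d : ℕ} (δ : ℝ) (r : Zd d) : Set (Rd d) :=
  {x | ∀ i, δ * ((r i : ℝ) - 1/2) ≤ x i ∧ x i < δ * ((r i : ℝ) + 1/2)}

/-- #(A ∩ Q_δ(r)). -/
def cnt {d : ℕ} (A : Set (Rd d)) (δ : ℝ) (r : Zd d) : ℕ := (A ∩ Qcube δ r).ncard

/-- Z_k = ∪_{r∈ℤ^d, |r|≤k} (Z + 2λr). -/
def ZkS {d : ℕ} (l : ℝ) (Z : Finset (Rd d)) (k : ℕ) : Set (Rd d) :=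
  {y | ∃ x ∈ Z, ∃ r : Zd d, ‖r‖ ≤ (k : ℝ) ∧ y = shiftPt l x r}

variable {d : ℕ}

def idx (x : Rd d) : Zd d := fun i => ⌊x i + 1/2⌋
def nf (A : Finset (Rd d)) (r : Zd d) : ℕ := (A.filter fun x => idx x = r).card
def qp (A : Finset (Rd d)) : ℕ := ((A ×ˢ A).filter fun p => idx p.1 = idx p.2).card
def dp (A B : Finset (Rd d)) : ℕ := ((A ×ˢ B).filter fun p => ∀ i, |p.1 i - p.2 i| < 1).card

lemma mem_Qcube (x : Rd d) (r : Zd d) : x ∈ Qcube 1 r ↔ idx x = r := by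
  simp only [Qcube, Set.mem_setOf_eq, idx, one_mul]
  constructor
  · intro h; funext i
    show ⌊x i + 1/2⌋ = r i
    rw [Int.floor_eq_iff]
    · constructor
      · linarith [(h i).1]
      · linarith [(h i).2]
  · intro h i
    have : (r i : ℝ) ≤ x i + 1/2 ∧ x i + 1/2 < r i + 1 := by
      have := Int.floor_eq_iff.mp (show ⌊x i + 1/2⌋ = r i from congrFun h i)
      constructor
      · exact_mod_cast this.1
      · push_cast at this ⊢; linarith [this.2]
    constructor <;> [linarith [this.1]; linarith [this.2]]

lemma cnt_coe (A : Finset (Rd d)) (r : Zd d) : cnt (↑A) 1 r = nf A r := by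
  have : (↑A : Set (Rd d)) ∩ Qcube 1 r = ↑(A.filter fun x => idx x = r) := by
    ext x; simp [mem_Qcube]
  rw [cnt, this, Set.ncard_coe_finset, nf]

lemma qp_eq_sum (A : Finset (Rd d)) : qp A = ∑ r ∈ A.image idx, (nf A r)^2 := by
  rw [qp]
  have hsplit : ((A ×ˢ A).filter fun p => idx p.1 = idx p.2)
      = (A.image idx).biUnion fun r => (A.filter fun x => idx x = r) ×ˢ (A.filter fun x => idx x = r) := by
    ext p
    simp only [Finset.mem_filter, Finset.mem_product, Finset.mem_biUnion, Finset.mem_image]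
    constructor
    · rintro ⟨⟨h1, h2⟩, h3⟩
      exact ⟨idx p.1, ⟨p.1, h1, rfl⟩, ⟨h1, rfl⟩, ⟨h2, h3.symm⟩⟩
    · rintro ⟨r, _, ⟨h1, e1⟩, ⟨h2, e2⟩⟩
      exact ⟨⟨h1, h2⟩, e1.trans e2.symm⟩
  rw [hsplit, Finset.card_biUnion]
  · refine Finset.sum_congr rfl fun r _ => ?_
    rw [Finset.card_product, nf, sq]
  · intro r _ r' _ hne
    refine Finset.disjoint_left.mpr fun p hp hp' => ?_
    simp only [Finset.mem_product, Finset.mem_filter] at hp hp'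
    exact hne (hp.1.2.symm.trans hp'.1.2)

lemma nf_zero_of_not_mem (A : Finset (Rd d)) {r : Zd d} (h : r ∉ A.image idx) : nf A r = 0 := by
  rw [nf, Finset.card_eq_zero]
  ext x
  simp only [Finset.mem_filter, Finset.notMem_empty, iff_false, not_and]
  intro hx he
  exact h (Finset.mem_image.mpr ⟨x, hx, he⟩)

lemma tsum_sq_eq_qp (A : Finset (Rd d)) :
    (∑' r : Zd d, ((cnt (↑A) 1 r : ℝ)) ^ 2) = qp A := by
  rw [tsum_eq_sum (s := A.image idx) (by
    intro r hr
    rw [cnt_coe, nf_zero_of_not_mem A hr]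
    norm_num)]
  rw [qp_eq_sum]
  push_cast
  exact Finset.sum_congr rfl fun r _ => by rw [cnt_coe]

lemma qp_le_dp (A : Finset (Rd d)) : qp A ≤ dp A A := by
  apply Finset.card_le_card
  apply Finset.monotone_filter_right
  intro p _ hp i
  have h1 := (mem_Qcube p.1 (idx p.1)).mpr rfl
  have h2 := (mem_Qcube p.2 (idx p.1)).mpr hp.symm
  have := (h1 i); have := (h2 i)
  simp only [Qcube, Set.mem_setOf_eq, one_mul] at h1 h2
  have a1 := h1 i; have a2 := h2 i
  rw [abs_lt]; constructor <;> linarith [a1.1, a1.2, a2.1, a2.2]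

lemma floor_close {a b : ℝ} (h : |a - b| < 1) : ⌊b⌋ - ⌊a⌋ ∈ Finset.Icc (-1 : ℤ) 1 := by
  rw [abs_lt] at h
  have h1 : (⌊a⌋ : ℝ) ≤ a := Int.floor_le a
  have h2 : a < ⌊a⌋ + 1 := Int.lt_floor_add_one a
  have h3 : (⌊b⌋ : ℝ) ≤ b := Int.floor_le b
  have h4 : b < ⌊b⌋ + 1 := Int.lt_floor_add_one b
  have hb : ⌊b⌋ < ⌊a⌋ + 2 := Int.floor_lt.mpr (by push_cast; linarith)
  have ha : ⌊a⌋ < ⌊b⌋ + 2 := Int.floor_lt.mpr (by push_cast; linarith)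
  simp only [Finset.mem_Icc]
  omega

def nbd (d : ℕ) : Finset (Zd d) := Fintype.piFinset fun _ => Finset.Icc (-1 : ℤ) 1

lemma sum_nf_sq_le (A : Finset (Rd d)) (S : Finset (Zd d)) :
    ∑ r ∈ S, (nf A r)^2 ≤ qp A := by
  rw [qp_eq_sum]
  apply Finset.sum_le_sum_of_ne_zero
  intro r hr hne
  by_contra h
  exact hne (by rw [nf_zero_of_not_mem A h]; rfl)

lemma two_dp_le (A B : Finset (Rd d)) : 2 * dp A B ≤ 3^d * (qp A + qp B) := by
  have hsub : ((A ×ˢ B).filter fun p => ∀ i, |p.1 i - p.2 i| < 1)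
      ⊆ (nbd d).biUnion fun δ => (A ×ˢ B).filter fun p => idx p.2 = idx p.1 + δ := by
    intro p hp
    simp only [Finset.mem_filter] at hp
    refine Finset.mem_biUnion.mpr ⟨idx p.2 - idx p.1, ?_, ?_⟩
    · refine Fintype.mem_piFinset.mpr fun i => ?_
      have h := hp.2 i
      rw [show p.1 i - p.2 i = (p.1 i + 1/2) - (p.2 i + 1/2) by ring] at h
      exact floor_close h
    · exact Finset.mem_filter.mpr ⟨hp.1, by ring⟩
  have hcard : dp A B ≤ ∑ δ ∈ nbd d, ((A ×ˢ B).filter fun p => idx p.2 = idx p.1 + δ).card :=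
    le_trans (Finset.card_le_card hsub) (Finset.card_biUnion_le)
  have hδ : ∀ δ : Zd d, 2 * ((A ×ˢ B).filter fun p => idx p.2 = idx p.1 + δ).card
      ≤ qp A + qp B := by
    intro δ
    have hsplit : ((A ×ˢ B).filter fun p => idx p.2 = idx p.1 + δ)
        = (A.image idx).biUnion fun r =>
            (A.filter fun x => idx x = r) ×ˢ (B.filter fun y => idx y = r + δ) := by
      ext p
      simp only [Finset.mem_filter, Finset.mem_product, Finset.mem_biUnion, Finset.mem_image]
      constructor
      · rintro ⟨⟨h1, h2⟩, h3⟩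
        exact ⟨idx p.1, ⟨p.1, h1, rfl⟩, ⟨h1, rfl⟩, ⟨h2, h3⟩⟩
      · rintro ⟨r, _, ⟨h1, e1⟩, ⟨h2, e2⟩⟩
        exact ⟨⟨h1, h2⟩, by rw [e2, e1]⟩
    rw [hsplit, Finset.card_biUnion]
    · rw [Finset.mul_sum]
      calc ∑ r ∈ A.image idx, 2 * ((A.filter fun x => idx x = r) ×ˢ (B.filter fun y => idx y = r + δ)).card
          ≤ ∑ r ∈ A.image idx, ((nf A r)^2 + (nf B (r + δ))^2) := by
            refine Finset.sum_le_sum fun r _ => ?_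
            rw [Finset.card_product]
            have := sq_nonneg ((nf A r : ℤ) - (nf B (r + δ) : ℤ))
            have : 2 * ((nf A r : ℤ) * (nf B (r+δ))) ≤ (nf A r:ℤ)^2 + (nf B (r+δ):ℤ)^2 := by nlinarith
            exact_mod_cast this
        _ ≤ qp A + qp B := by
            rw [Finset.sum_add_distrib]
            gcongr
            · exact sum_nf_sq_le A _
            · have himg : (∑ r' ∈ (A.image idx).image (· + δ), (nf B r')^2)
                  = ∑ r ∈ A.image idx, (nf B (r + δ))^2 :=
                Finset.sum_image (fun a _ b _ h => add_right_cancel h)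
              rw [← himg]
              exact sum_nf_sq_le B _
    · intro r _ r' _ hne
      refine Finset.disjoint_left.mpr fun p hp hp' => ?_
      simp only [Finset.mem_product, Finset.mem_filter] at hp hp'
      exact hne (hp.1.2.symm.trans hp'.1.2)
  calc 2 * dp A B ≤ 2 * ∑ δ ∈ nbd d, ((A ×ˢ B).filter fun p => idx p.2 = idx p.1 + δ).card := by
        exact Nat.mul_le_mul_left 2 hcard
    _ = ∑ δ ∈ nbd d, 2 * ((A ×ˢ B).filter fun p => idx p.2 = idx p.1 + δ).card := by
        rw [Finset.mul_sum]
    _ ≤ ∑ _δ ∈ nbd d, (qp A + qp B) := Finset.sum_le_sum fun δ _ => hδ δ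
    _ = 3^d * (qp A + qp B) := by
        rw [Finset.sum_const, smul_eq_mul]
        congr 1
        rw [nbd, Fintype.card_piFinset]
        simp


def vset (l : ℝ) (s : Zd d) : Rd d := fun i => 2 * l * (s i : ℝ)

lemma shiftPt_eq (l : ℝ) (x : Rd d) (s : Zd d) : shiftPt l x s = x + vset l s := rfl

lemma dp_shift (A B : Finset (Rd d)) (v w : Rd d) :
    dp (A.image (· + v)) (B.image (· + w)) =
      ((A ×ˢ B).filter fun p => ∀ i, |p.1 i + v i - (p.2 i + w i)| < 1).card := by
  rw [dp]
  apply Finset.card_bij' (fun p _ => (p.1 - v, p.2 - w)) (fun p _ => (p.1 + v, p.2 + w))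
  · intro p hp
    simp only [Finset.mem_filter, Finset.mem_product, Finset.mem_image] at hp ⊢
    obtain ⟨⟨⟨a, ha, hae⟩, ⟨b, hb, hbe⟩⟩, hcl⟩ := hp
    refine ⟨⟨by rwa [← hae, add_sub_cancel_right], by rwa [← hbe, add_sub_cancel_right]⟩, ?_⟩
    intro i
    have := hcl i
    simpa [sub_add_cancel] using this
  · intro p hp
    simp only [Finset.mem_filter, Finset.mem_product, Finset.mem_image] at hp ⊢
    refine ⟨⟨⟨p.1, hp.1.1, rfl⟩, ⟨p.2, hp.1.2, rfl⟩⟩, ?_⟩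
    intro i
    simpa using hp.2 i
  · intro p _; simp
  · intro p _; simp

lemma dp_shift_same (A B : Finset (Rd d)) (v : Rd d) :
    dp (A.image (· + v)) (B.image (· + v)) = dp A B := by
  rw [dp_shift, dp]
  congr 1
  apply Finset.filter_congr
  intro p _
  constructor <;> (intro h i; have := h i; simpa [add_sub_add_right_eq_sub] using this)

def rball (d k : ℕ) : Finset (Zd d) := Fintype.piFinset fun _ => Finset.Icc (-(k:ℤ)) k

lemma card_rball (k : ℕ) : (rball d k).card = (2*k+1)^d := by
  rw [rball, Fintype.card_piFinset]
  have hc : (Finset.Icc (-(k:ℤ)) k).card = 2*k+1 := by rw [Int.card_Icc]; omega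
  simp [hc]

lemma norm_le_iff (r : Zd d) (k : ℕ) : ‖r‖ ≤ (k:ℝ) ↔ r ∈ rball d k := by
  rw [pi_norm_le_iff_of_nonneg (by positivity), rball, Fintype.mem_piFinset]
  apply forall_congr'
  intro i
  rw [Int.norm_eq_abs, Finset.mem_Icc, ← abs_le, ← Int.cast_abs]
  exact_mod_cast Iff.rfl

def Zkf (l : ℝ) (Z : Finset (Rd d)) (k : ℕ) : Finset (Rd d) :=
  (rball d k).biUnion fun s => Z.image (· + vset l s)

lemma ZkS_eq (l : ℝ) (Z : Finset (Rd d)) (k : ℕ) : ZkS l Z k = ↑(Zkf l Z k) := by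
  ext y
  simp only [ZkS, Set.mem_setOf_eq, Zkf, Finset.coe_biUnion, Set.mem_iUnion,
    Finset.mem_coe, Finset.mem_image, Finset.mem_coe]
  constructor
  · rintro ⟨x, hx, r, hr, rfl⟩
    exact ⟨r, (norm_le_iff r k).mp hr, x, hx, rfl⟩
  · rintro ⟨r, hr, x, hx, rfl⟩
    exact ⟨x, hx, r, (norm_le_iff r k).mpr hr, rfl⟩

lemma translates_disjoint {l : ℝ} (hl : 0 < l) {Z : Finset (Rd d)}
    (hZ : (Z : Set (Rd d)) ⊆ Lam l) {s t : Zd d} (hst : s ≠ t) :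
    Disjoint (Z.image (· + vset l s)) (Z.image (· + vset l t)) := by
  rw [Finset.disjoint_left]
  rintro a ha hb
  simp only [Finset.mem_image] at ha hb
  obtain ⟨x, hx, rfl⟩ := ha
  obtain ⟨y, hy, he⟩ := hb
  obtain ⟨i, hi⟩ := Function.ne_iff.mp hst
  have hxi := hZ hx i
  have hyi := hZ hy i
  have hei : y i + 2 * l * (t i : ℝ) = x i + 2 * l * (s i : ℝ) := congrFun he i
  have h1 : (1:ℝ) ≤ |(t i : ℝ) - (s i : ℝ)| := by
    rw [← Int.cast_sub, ← Int.cast_abs]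
    exact_mod_cast Int.one_le_abs (by omega)
  have h2 : |(t i : ℝ) - (s i : ℝ)| * (2*l) < 2*l := by
    have : 2 * l * ((t i : ℝ) - (s i : ℝ)) = x i - y i := by linarith [hei]
    have hb : |x i - y i| < 2*l := by
      rw [abs_lt]; constructor <;> linarith [hxi.1, hxi.2, hyi.1, hyi.2]
    calc |(t i : ℝ) - (s i : ℝ)| * (2*l) = |2 * l * ((t i : ℝ) - (s i : ℝ))| := by
          rw [abs_mul, abs_of_pos (by linarith : (0:ℝ) < 2*l)]; ring
      _ < 2*l := by rw [this]; exact hb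
  nlinarith

lemma sum_dp_le_dp_biUnion (R : Finset (Zd d)) (T : Zd d → Finset (Rd d))
    (hdisj : ∀ s ∈ R, ∀ t ∈ R, s ≠ t → Disjoint (T s) (T t)) :
    ∑ s ∈ R, dp (T s) (T s) ≤ dp (R.biUnion T) (R.biUnion T) := by
  simp only [dp]
  rw [← Finset.card_biUnion]
  · apply Finset.card_le_card
    apply Finset.biUnion_subset.mpr
    intro s hs
    apply Finset.filter_subset_filter
    apply Finset.product_subset_product <;> exact Finset.subset_biUnion_of_mem T hs
  · intro s hs t ht hst
    have := hdisj s hs t ht hst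
    refine Finset.disjoint_left.mpr fun p hp hp' => ?_
    simp only [Finset.mem_filter, Finset.mem_product] at hp hp'
    exact (Finset.disjoint_left.mp this hp.1.1) hp'.1.1

lemma dp_biUnion_le (R : Finset (Zd d)) (T : Zd d → Finset (Rd d)) :
    dp (R.biUnion T) (R.biUnion T) ≤ ∑ p ∈ R ×ˢ R, dp (T p.1) (T p.2) := by
  simp only [dp]
  calc ((R.biUnion T ×ˢ R.biUnion T).filter fun p => ∀ i, |p.1 i - p.2 i| < 1).card
      ≤ ((R ×ˢ R).biUnion fun q =>
          (T q.1 ×ˢ T q.2).filter fun p => ∀ i, |p.1 i - p.2 i| < 1).card := by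
        apply Finset.card_le_card
        intro p hp
        simp only [Finset.mem_filter, Finset.mem_product, Finset.mem_biUnion] at hp ⊢
        obtain ⟨⟨h1, h2⟩, hc⟩ := hp
        obtain ⟨s, hs, hps⟩ := h1
        obtain ⟨t, ht, hpt⟩ := h2
        exact ⟨(s, t), ⟨hs, ht⟩, ⟨hps, hpt⟩, hc⟩
    _ ≤ ∑ q ∈ R ×ˢ R, ((T q.1 ×ˢ T q.2).filter fun p => ∀ i, |p.1 i - p.2 i| < 1).card :=
        Finset.card_biUnion_le

lemma dp_self_le (A : Finset (Rd d)) : dp A A ≤ 3^d * qp A := by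
  have h := two_dp_le A A
  have : 3^d * (qp A + qp A) = 2 * (3^d * qp A) := by ring
  rw [this] at h
  exact Nat.le_of_mul_le_mul_left h (by norm_num)

lemma dp_cross_le (Z : Finset (Rd d)) (v w : Rd d) :
    dp (Z.image (· + v)) (Z.image (· + w)) ≤ 9^d * qp Z := by
  have h := two_dp_le (Z.image (· + v)) (Z.image (· + w))
  have hv : qp (Z.image (· + v)) ≤ 3^d * qp Z := by
    calc qp (Z.image (· + v)) ≤ dp (Z.image (· + v)) (Z.image (· + v)) := qp_le_dp _
      _ = dp Z Z := dp_shift_same Z Z v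
      _ ≤ 3^d * qp Z := dp_self_le Z
  have hw : qp (Z.image (· + w)) ≤ 3^d * qp Z := by
    calc qp (Z.image (· + w)) ≤ dp (Z.image (· + w)) (Z.image (· + w)) := qp_le_dp _
      _ = dp Z Z := dp_shift_same Z Z w
      _ ≤ 3^d * qp Z := dp_self_le Z
  have h2 : 2 * dp (Z.image (· + v)) (Z.image (· + w)) ≤ 2 * (9^d * qp Z) := by
    calc 2 * dp (Z.image (· + v)) (Z.image (· + w))
        ≤ 3^d * (qp (Z.image (· + v)) + qp (Z.image (· + w))) := h
      _ ≤ 3^d * (3^d * qp Z + 3^d * qp Z) := Nat.mul_le_mul_left _ (Nat.add_le_add hv hw)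
      _ = 2 * ((3*3)^d * qp Z) := by rw [mul_pow]; ring
      _ = 2 * (9^d * qp Z) := by norm_num
  exact Nat.le_of_mul_le_mul_left h2 (by norm_num)

lemma dp_far_zero {l : ℝ} (hl0 : 0 < l) {Z : Finset (Rd d)} (hZ : (Z:Set (Rd d)) ⊆ Lam l)
    {s t : Zd d} (M : ℕ) (hM : 1 ≤ 2 * l * M) {i : Fin d} (hi : (M:ℤ) < |s i - t i|) :
    dp (Z.image (· + vset l s)) (Z.image (· + vset l t)) = 0 := by
  rw [dp_shift, Finset.card_eq_zero, Finset.filter_eq_empty_iff]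
  rintro p hp
  simp only [Finset.mem_product] at hp
  intro h
  have hc := h i
  have hxi := hZ hp.1 i
  have hyi := hZ hp.2 i
  have hst : (M:ℝ) + 1 ≤ |(s i : ℝ) - (t i : ℝ)| := by
    rw [← Int.cast_sub, ← Int.cast_abs]
    exact_mod_cast (by omega : (M:ℤ) + 1 ≤ |s i - t i|)
  have hval : p.1 i + vset l s i - (p.2 i + vset l t i)
      = (p.1 i - p.2 i) + 2 * l * ((s i : ℝ) - (t i : ℝ)) := by
    simp only [vset]; ring
  rw [hval] at hc
  have h2 : 2*l*|(s i : ℝ) - (t i : ℝ)| ≤ |p.1 i - p.2 i + 2 * l * ((s i:ℝ) - (t i:ℝ))| + |p.1 i - p.2 i| := by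
    have := abs_sub_abs_le_abs_sub (2 * l * ((s i:ℝ) - (t i:ℝ))) (-(p.1 i - p.2 i))
    have habs : |2 * l * ((s i:ℝ) - (t i:ℝ))| = 2*l*|(s i:ℝ) - (t i:ℝ)| := by
      rw [abs_mul, abs_of_pos (by linarith : (0:ℝ) < 2*l)]
    rw [habs, abs_neg, sub_neg_eq_add, add_comm] at this
    linarith
  have hxy : |p.1 i - p.2 i| < 2*l := by
    rw [abs_lt]; constructor <;> linarith [hxi.1, hxi.2, hyi.1, hyi.2]
  nlinarith [hst, hc, h2, hxy, hl0]

lemma card_near_pairs_le (k M : ℕ) :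
    ((rball d k ×ˢ rball d k).filter fun q : Zd d × Zd d => ∀ i, |q.1 i - q.2 i| ≤ (M:ℤ)).card
      ≤ (2*k+1)^d * (2*M+1)^d := by
  have hinj : ∀ q ∈ ((rball d k ×ˢ rball d k).filter fun q : Zd d × Zd d => ∀ i, |q.1 i - q.2 i| ≤ (M:ℤ)),
      (fun q : Zd d × Zd d => (q.1, q.2 - q.1)) q ∈ rball d k ×ˢ rball d M := by
    intro q hq
    simp only [Finset.mem_filter, Finset.mem_product] at hq ⊢
    refine ⟨hq.1.1, ?_⟩
    rw [rball, Fintype.mem_piFinset]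
    intro i
    rw [Finset.mem_Icc]
    have h3 := abs_le.mp (hq.2 i)
    have h2 : (q.2 - q.1) i = q.2 i - q.1 i := rfl
    rw [h2]
    omega
  calc ((rball d k ×ˢ rball d k).filter fun q : Zd d × Zd d => ∀ i, |q.1 i - q.2 i| ≤ (M:ℤ)).card
      ≤ (rball d k ×ˢ rball d M).card := by
        apply Finset.card_le_card_of_injOn _ hinj
        intro a _ b _ hab
        simp only [Prod.mk.injEq] at hab
        have h1 := hab.1
        have h2 := hab.2
        rw [h1] at h2
        exact Prod.ext h1 (sub_left_injective h2)
    _ = (2*k+1)^d * (2*M+1)^d := by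
        rw [Finset.card_product, card_rball, card_rball]

lemma main_lower {l : ℝ} (hl0 : 0 < l) {Z : Finset (Rd d)} (hZ : (Z:Set (Rd d)) ⊆ Lam l) (k : ℕ) :
    (2*k+1)^d * qp Z ≤ 3^d * qp (Zkf l Z k) := by
  calc (2*k+1)^d * qp Z = ∑ _s ∈ rball d k, qp Z := by
        rw [Finset.sum_const, smul_eq_mul, card_rball]
    _ ≤ ∑ s ∈ rball d k, dp (Z.image (· + vset l s)) (Z.image (· + vset l s)) :=
        Finset.sum_le_sum fun s _ => by
          rw [dp_shift_same]; exact qp_le_dp Z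
    _ ≤ dp (Zkf l Z k) (Zkf l Z k) := by
        apply sum_dp_le_dp_biUnion
        intro s _ t _ hst
        exact translates_disjoint hl0 hZ hst
    _ ≤ 3^d * qp (Zkf l Z k) := dp_self_le _

lemma main_upper {l : ℝ} (hl0 : 0 < l) {Z : Finset (Rd d)} (hZ : (Z:Set (Rd d)) ⊆ Lam l)
    (k M : ℕ) (hM : 1 ≤ 2 * l * M) :
    qp (Zkf l Z k) ≤ (2*k+1)^d * ((2*M+1)^d * 9^d) * qp Z := by
  calc qp (Zkf l Z k) ≤ dp (Zkf l Z k) (Zkf l Z k) := qp_le_dp _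
    _ ≤ ∑ q ∈ rball d k ×ˢ rball d k, dp (Z.image (· + vset l q.1)) (Z.image (· + vset l q.2)) :=
        dp_biUnion_le _ _
    _ ≤ (2*k+1)^d * ((2*M+1)^d * 9^d) * qp Z := by
        rw [← Finset.sum_filter_add_sum_filter_not (rball d k ×ˢ rball d k)
          (fun q : Zd d × Zd d => ∀ i, |q.1 i - q.2 i| ≤ (M:ℤ))]
        have hz : ∑ q ∈ ((rball d k ×ˢ rball d k).filter
            fun q : Zd d × Zd d => ¬ ∀ i, |q.1 i - q.2 i| ≤ (M:ℤ)),
            dp (Z.image (· + vset l q.1)) (Z.image (· + vset l q.2)) = 0 := by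
          apply Finset.sum_eq_zero
          intro q hq
          simp only [Finset.mem_filter, not_forall, not_le] at hq
          obtain ⟨i, hi⟩ := hq.2
          exact dp_far_zero hl0 hZ M hM hi
        rw [hz, add_zero]
        calc ∑ q ∈ ((rball d k ×ˢ rball d k).filter
              fun q : Zd d × Zd d => ∀ i, |q.1 i - q.2 i| ≤ (M:ℤ)),
              dp (Z.image (· + vset l q.1)) (Z.image (· + vset l q.2))
            ≤ ∑ _q ∈ ((rball d k ×ˢ rball d k).filter
              fun q : Zd d × Zd d => ∀ i, |q.1 i - q.2 i| ≤ (M:ℤ)), 9^d * qp Z :=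
              Finset.sum_le_sum fun q _ => dp_cross_le Z _ _
          _ = ((rball d k ×ˢ rball d k).filter
              fun q : Zd d × Zd d => ∀ i, |q.1 i - q.2 i| ≤ (M:ℤ)).card * (9^d * qp Z) := by
              rw [Finset.sum_const, smul_eq_mul]
          _ ≤ ((2*k+1)^d * (2*M+1)^d) * (9^d * qp Z) :=
              Nat.mul_le_mul_right _ (card_near_pairs_le k M)
          _ = (2*k+1)^d * ((2*M+1)^d * 9^d) * qp Z := by ring


theorem stmt5 (d : ℕ) (hd : 1 ≤ d) (lm0 : ℝ) (hlm0 : 0 < lm0) :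
    ∃ c : ℝ, 1 ≤ c ∧ ∀ l : ℝ, lm0 ≤ l → ∀ Z : Finset (Rd d),
      (Z : Set (Rd d)) ⊆ Lam l → ∀ k : ℕ,
        (2 * (k:ℝ) + 1) ^ d * c⁻¹ * (∑' r : Zd d, ((cnt (Z : Set (Rd d)) 1 r : ℝ)) ^ 2) ≤
          (∑' r : Zd d, ((cnt (ZkS l Z k) 1 r : ℝ)) ^ 2) ∧
        (∑' r : Zd d, ((cnt (ZkS l Z k) 1 r : ℝ)) ^ 2) ≤
          (2 * (k:ℝ) + 1) ^ d * c * ∑' r : Zd d, ((cnt (Z : Set (Rd d)) 1 r : ℝ)) ^ 2 := by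
  set M : ℕ := ⌈1/(2*lm0)⌉₊ with hMdef
  have hMr : 1/(2*lm0) ≤ (M:ℝ) := Nat.le_ceil _
  refine ⟨((2*(M:ℝ)+1)*9)^d, ?_, ?_⟩
  · apply one_le_pow₀
    have : (0:ℝ) ≤ (M:ℝ) := Nat.cast_nonneg M
    nlinarith
  · intro l hl Z hZ k
    have hl0 : 0 < l := lt_of_lt_of_le hlm0 hl
    have hM1 : 1 ≤ 2 * l * (M:ℝ) := by
      have h1 : (1:ℝ) ≤ (M:ℝ) * (2*lm0) := (div_le_iff₀ (by linarith)).mp hMr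
      nlinarith [Nat.cast_nonneg (α := ℝ) M]
    have hQZ : (∑' r : Zd d, ((cnt (Z : Set (Rd d)) 1 r : ℝ)) ^ 2) = qp Z := tsum_sq_eq_qp Z
    have hQK : (∑' r : Zd d, ((cnt (ZkS l Z k) 1 r : ℝ)) ^ 2) = qp (Zkf l Z k) := by
      rw [ZkS_eq l Z k]; exact tsum_sq_eq_qp _
    have hlow := main_lower hl0 hZ k
    have hup := main_upper hl0 hZ k M hM1
    have hlowR : (2*(k:ℝ)+1)^d * (qp Z : ℝ) ≤ 3^d * (qp (Zkf l Z k) : ℝ) := by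
      exact_mod_cast (by push_cast at hlow ⊢; exact_mod_cast hlow : ((2*(k:ℝ)+1))^d * (qp Z:ℝ) ≤ 3^d * (qp (Zkf l Z k):ℝ))
    have hupR : (qp (Zkf l Z k) : ℝ) ≤ (2*(k:ℝ)+1)^d * ((2*(M:ℝ)+1)^d * 9^d) * (qp Z : ℝ) := by
      have := hup
      push_cast
      calc (qp (Zkf l Z k) : ℝ) ≤ (((2*k+1)^d * ((2*M+1)^d * 9^d) * qp Z : ℕ) : ℝ) := by
            exact_mod_cast this
        _ = (2*(k:ℝ)+1)^d * ((2*(M:ℝ)+1)^d * 9^d) * (qp Z : ℝ) := by push_cast; ring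
    rw [hQZ, hQK]
    set c : ℝ := ((2*(M:ℝ)+1)*9)^d with hc
    have hc3 : (3:ℝ)^d ≤ c := by
      apply pow_le_pow_left₀ (by norm_num)
      nlinarith [Nat.cast_nonneg (α := ℝ) M]
    have hc0 : (0:ℝ) < c := lt_of_lt_of_le (by positivity) hc3
    constructor
    · have h30 : (0:ℝ) < 3^d := by positivity
      calc (2*(k:ℝ)+1)^d * c⁻¹ * (qp Z : ℝ)
          = ((2*(k:ℝ)+1)^d * (qp Z:ℝ)) * c⁻¹ := by ring
        _ ≤ (3^d * (qp (Zkf l Z k) : ℝ)) * c⁻¹ := by gcongr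
        _ ≤ (c * (qp (Zkf l Z k) : ℝ)) * c⁻¹ := by gcongr
        _ = (qp (Zkf l Z k) : ℝ) * (c * c⁻¹) := by ring
        _ = (qp (Zkf l Z k) : ℝ) := by rw [mul_inv_cancel₀ (ne_of_gt hc0), mul_one]
    · calc (qp (Zkf l Z k) : ℝ) ≤ (2*(k:ℝ)+1)^d * ((2*(M:ℝ)+1)^d * 9^d) * (qp Z : ℝ) := hupR
        _ = (2*(k:ℝ)+1)^d * c * (qp Z : ℝ) := by rw [hc, mul_pow]
end
end

section
/- Let φ satisfy (BB), (RP) and (T), and let λ₀ > 0. Then there exists a decreasing map Ψ̃ : ℕ₀ → [0,∞) with Σ_{r∈ℤ^d} Ψ̃(|r|) < ∞ such that for all λ ≥ λ₀ and all disjoint finite sets Z, Z′ ⊂ ℝ^d it holds W_{φ_λ}(Z, Z′) ≥ −Σ_{r,r′∈ℤ^d} Ψ̃(|r−r′|)·#(Z ∩ Q_1(r))·#(Z′ ∩ Q_1(r′)). -/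
open MeasureTheory Filter Set
open scoped BigOperators ENNReal Topology

noncomputable section

/-- The maximum norm of r ∈ ℤ^d as a natural number. -/
def znorm {d : ℕ} (r : Zd d) : ℕ := Finset.univ.sup fun i => (r i).natAbs

/-- W_ψ(Z, Z'). -/
def interEF {d : ℕ} (ψ : Rd d → ℝ) (Z Z' : Finset (Rd d)) : ℝ :=
  ∑ x ∈ Z, ∑ y ∈ Z', ψ (x - y)

lemma znorm_coord {d : ℕ} (r : Zd d) (i : Fin d) : (r i).natAbs ≤ znorm r :=
  Finset.le_sup (f := fun i => (r i).natAbs) (Finset.mem_univ i)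

lemma znorm_exists {d : ℕ} (hd : 1 ≤ d) (r : Zd d) : ∃ i, znorm r = (r i).natAbs := by
  haveI : Nonempty (Fin d) := ⟨⟨0, hd⟩⟩
  obtain ⟨i, _, hi⟩ := Finset.exists_mem_eq_sup Finset.univ Finset.univ_nonempty
    (fun i => (r i).natAbs)
  exact ⟨i, hi⟩

lemma one_le_znorm {d : ℕ} (r : Zd d) (hr : r ≠ 0) : 1 ≤ znorm r := by
  obtain ⟨j, hj⟩ : ∃ j, r j ≠ 0 := by
    by_contra h; push_neg at h; exact hr (funext h)
  exact le_trans (Int.natAbs_pos.mpr hj) (znorm_coord r j)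

lemma znorm_zero {d : ℕ} : znorm (0 : Zd d) = 0 := by
  simp [znorm]

lemma abs_coord_le_norm {d : ℕ} (x : Rd d) (i : Fin d) : |x i| ≤ ‖x‖ := by
  simpa [Real.norm_eq_abs] using norm_le_pi_norm x i

lemma norm_le_of_coords {d : ℕ} (x : Rd d) (c : ℝ) (hc : 0 ≤ c) (h : ∀ i, |x i| ≤ c) :
    ‖x‖ ≤ c := by
  refine (pi_norm_le_iff_of_nonneg hc).2 fun i => by simpa [Real.norm_eq_abs] using h i

lemma summable_pi_prod (w : ℤ → ℝ) (hw : Summable w) (h0 : ∀ k, 0 ≤ w k) (n : ℕ) :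
    Summable (fun r : Fin n → ℤ => ∏ i, w (r i)) := by
  induction n with
  | zero =>
      haveI : Unique (Fin 0 → ℤ) := Pi.uniqueOfIsEmpty _
      haveI : Finite (Fin 0 → ℤ) := Finite.of_subsingleton
      exact Summable.of_finite
  | succ n ih =>
      have hw0 : 0 ≤ w := h0
      have hg0 : 0 ≤ (fun r : Fin n → ℤ => ∏ i, w (r i)) :=
        fun t => Finset.prod_nonneg fun i _ => h0 _
      have hs0 := Summable.mul_of_nonneg hw ih hw0 hg0
      have hs : Summable (fun p : ℤ × (Fin n → ℤ) => w p.1 * ∏ i, w (p.2 i)) :=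
        hs0.congr (fun p => rfl)
      have heq : (fun r : Fin (n+1) → ℤ => ∏ i, w (r i)) ∘ (Fin.consEquiv fun _ => ℤ)
          = fun p : ℤ × (Fin n → ℤ) => w p.1 * ∏ i, w (p.2 i) := by
        funext p
        simp [Fin.consEquiv, Fin.prod_univ_succ]
      rw [← heq] at hs
      exact ((Fin.consEquiv fun _ => ℤ).summable_iff).mp hs

lemma summable_corefn (d : ℕ) (hd : 1 ≤ d) (q : ℝ) (hq : (d : ℝ) < q) :
    Summable (fun r : Zd d => ((znorm r : ℝ) + 1) ^ (-q)) := by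
  have hd0 : (0:ℝ) < d := by exact_mod_cast hd
  set a := q / d with ha
  have ha1 : 1 < a := (one_lt_div hd0).2 hq
  have hnat : Summable (fun n : ℕ => ((n : ℝ) + 1) ^ (-a)) := by
    have h := Real.summable_nat_rpow.2 (show -a < -1 by linarith)
    have h2 := (summable_nat_add_iff (f := fun n : ℕ => (n : ℝ) ^ (-a)) 1).2 h
    refine h2.congr fun n => ?_
    push_cast
    ring_nf
  have hw : Summable (fun k : ℤ => ((k.natAbs : ℝ) + 1) ^ (-a)) := by
    refine Summable.of_nat_of_neg ?_ ?_ <;> simpa using hnat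
  have h0 : ∀ k : ℤ, 0 ≤ ((k.natAbs : ℝ) + 1) ^ (-a) := fun k => Real.rpow_nonneg (by positivity) _
  have hP := summable_pi_prod _ hw h0 d
  refine Summable.of_nonneg_of_le (fun r => Real.rpow_nonneg (by positivity) _) (fun r => ?_) hP
  have hstep : ((znorm r : ℝ) + 1) ^ (-q)
      = ∏ _i : Fin d, ((znorm r : ℝ) + 1) ^ (-a) := by
    rw [Finset.prod_const, Finset.card_univ, Fintype.card_fin,
      ← Real.rpow_natCast (((znorm r : ℝ) + 1) ^ (-a)) d, ← Real.rpow_mul (by positivity)]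
    rw [ha]
    congr 1
    field_simp
  rw [hstep]
  refine Finset.prod_le_prod (fun i _ => Real.rpow_nonneg (by positivity) _) (fun i _ => ?_)
  refine Real.rpow_le_rpow_of_nonpos (by positivity) ?_ (by linarith)
  have := znorm_coord r i
  have : ((r i).natAbs : ℝ) ≤ (znorm r : ℝ) := by exact_mod_cast this
  linarith

def rnd {d : ℕ} (x : Rd d) : Zd d := fun i => ⌊x i + 1/2⌋

lemma LamO_norm_le {d : ℕ} (l : ℝ) (hl : 0 ≤ l) (z : Rd d) (hz : z ∈ LamO l) : ‖z‖ ≤ l :=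
  norm_le_of_coords z l hl fun i => le_of_lt (abs_lt.2 (hz i))

lemma shift_norm_lb {d : ℕ} (hd : 1 ≤ d) (l : ℝ) (hl : 0 < l) (z : Rd d) (hz : z ∈ LamO l)
    (r : Zd d) (hr : r ≠ 0) : l * (znorm r : ℝ) ≤ ‖shiftPt l z r‖ := by
  obtain ⟨i, hi⟩ := znorm_exists hd r
  have h1 : |z i| ≤ l := le_of_lt (abs_lt.2 (hz i))
  have h2 : (znorm r : ℝ) = |(r i : ℝ)| := by
    rw [hi]; simp [Nat.cast_natAbs, Int.cast_abs]
  have h3 : (1 : ℝ) ≤ (znorm r : ℝ) := by exact_mod_cast one_le_znorm r hr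
  have h4 : |z i + 2 * l * (r i : ℝ)| ≤ ‖shiftPt l z r‖ := abs_coord_le_norm (shiftPt l z r) i
  have h5 : |2 * l * (r i : ℝ)| ≤ |z i + 2 * l * (r i : ℝ)| + |z i| := by
    have := abs_add_le (z i + 2 * l * (r i : ℝ)) (-(z i))
    simpa using this
  have h6 : |2 * l * (r i : ℝ)| = 2 * l * |(r i : ℝ)| := by
    rw [abs_mul, abs_of_pos (by linarith : (0:ℝ) < 2 * l)]
  nlinarith [abs_nonneg (z i + 2 * l * (r i : ℝ))]

lemma tsum_lb {d : ℕ} (core : Zd d → ℝ) (hcore : Summable core) (hcnn : ∀ r, 0 ≤ core r)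
    (C : ℝ) (hC : 0 ≤ C) (f : Zd d → ℝ) (h : ∀ r, -(C * core r) ≤ f r) :
    -(C * ∑' r, core r) ≤ ∑' r, f r := by
  by_cases hf : Summable f
  · have h1 : Summable (fun r => -(C * core r)) := (hcore.mul_left C).neg
    calc -(C * ∑' r, core r) = ∑' r, -(C * core r) := by rw [tsum_neg, tsum_mul_left]
      _ ≤ ∑' r, f r := Summable.tsum_le_tsum h h1 hf
  · rw [tsum_eq_zero_of_not_summable hf]
    have : 0 ≤ C * ∑' r, core r := mul_nonneg hC (tsum_nonneg hcnn)
    linarith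

lemma mem_Qcube_iff_rnd {d : ℕ} (x : Rd d) (r : Zd d) : x ∈ Qcube 1 r ↔ rnd x = r := by
  constructor
  · intro h
    funext i
    have hi := h i
    simp only [one_mul] at hi
    rw [rnd]
    have : (⌊x i + 1/2⌋ : ℤ) = r i := by
      rw [Int.floor_eq_iff]
      refine ⟨by linarith [hi.1], by push_cast; linarith [hi.2]⟩
    exact this
  · intro h
    intro i
    have : (⌊x i + 1/2⌋ : ℤ) = r i := by rw [← h]; rfl
    have h1 : ((r i : ℝ)) ≤ x i + 1/2 := by rw [← this]; exact_mod_cast Int.floor_le _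
    have h2 : x i + 1/2 < (r i : ℝ) + 1 := by
      rw [← this]; push_cast; exact Int.lt_floor_add_one _
    constructor <;> simp only [one_mul] <;> linarith

lemma rnd_dist {d : ℕ} (hd : 1 ≤ d) (x y : Rd d) :
    (znorm (rnd x - rnd y) : ℝ) ≤ ‖x - y‖ + 1 := by
  obtain ⟨i, hi⟩ := znorm_exists hd (rnd x - rnd y)
  have hcast : (znorm (rnd x - rnd y) : ℝ) = |((rnd x i - rnd y i : ℤ) : ℝ)| := by
    rw [hi]
    have : (rnd x - rnd y) i = rnd x i - rnd y i := rfl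
    rw [this]
    simp [Nat.cast_natAbs, Int.cast_abs]
  have hax : ((rnd x i : ℤ) : ℝ) ≤ x i + 1/2 := Int.floor_le _
  have hax2 : x i + 1/2 < ((rnd x i : ℤ) : ℝ) + 1 := Int.lt_floor_add_one _
  have hay : ((rnd y i : ℤ) : ℝ) ≤ y i + 1/2 := Int.floor_le _
  have hay2 : y i + 1/2 < ((rnd y i : ℤ) : ℝ) + 1 := Int.lt_floor_add_one _
  have hxy : |x i - y i| ≤ ‖x - y‖ := by
    have := abs_coord_le_norm (x - y) i
    simpa using this
  rw [hcast]
  push_cast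
  rw [abs_le]
  constructor <;> nlinarith [le_abs_self (x i - y i), neg_abs_le (x i - y i)]

lemma cnt_eq_card {d : ℕ} (Z : Finset (Rd d)) (r : Zd d) :
    cnt (Z : Set (Rd d)) 1 r = (Z.filter (fun x => rnd x = r)).card := by
  classical
  have hset : (Z : Set (Rd d)) ∩ Qcube 1 r = ((Z.filter (fun x => rnd x = r)) : Set (Rd d)) := by
    ext x
    simp [mem_Qcube_iff_rnd]
  rw [cnt, hset, Set.ncard_coe_finset]

lemma cnt_zero_of_notMem {d : ℕ} (Z : Finset (Rd d)) (r : Zd d)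
    (h : r ∉ Z.image rnd) : cnt (Z : Set (Rd d)) 1 r = 0 := by
  classical
  rw [cnt_eq_card]
  rw [Finset.card_eq_zero, Finset.filter_eq_empty_iff]
  intro x hx hrx
  exact h (hrx ▸ Finset.mem_image_of_mem rnd hx)

lemma fiber_sum {d : ℕ} (Z : Finset (Rd d)) (f : Zd d → ℝ) :
    ∑ x ∈ Z, f (rnd x)
      = ∑ r ∈ Z.image rnd, ((Z.filter (fun x => rnd x = r)).card : ℝ) * f r := by
  classical
  rw [← Finset.sum_fiberwise_of_maps_to (fun x hx => Finset.mem_image_of_mem rnd hx)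
    (fun x => f (rnd x))]
  refine Finset.sum_congr rfl fun r hr => ?_
  rw [Finset.sum_congr rfl (fun x hx => by rw [(Finset.mem_filter.1 hx).2])]
  rw [Finset.sum_const, nsmul_eq_mul]

lemma double_fiber_sum {d : ℕ} (Z Z' : Finset (Rd d)) (h : Zd d → Zd d → ℝ) :
    ∑ x ∈ Z, ∑ y ∈ Z', h (rnd x) (rnd y)
      = ∑ r ∈ Z.image rnd, ∑ r' ∈ Z'.image rnd,
          ((Z.filter (fun x => rnd x = r)).card : ℝ)
            * (((Z'.filter (fun y => rnd y = r')).card : ℝ) * h r r') := by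
  classical
  rw [fiber_sum Z (fun r => ∑ y ∈ Z', h r (rnd y))]
  refine Finset.sum_congr rfl fun r _ => ?_
  rw [fiber_sum Z' (fun r' => h r r'), Finset.mul_sum]

set_option maxHeartbeats 2000000 in
theorem stmt6 (d : ℕ) (hd : 1 ≤ d)
    (φ : Rd d → ℝ) (hmeas : Measurable φ) (hsymm : ∀ x, φ (-x) = φ x)
    (M : ℝ) (hBB : ∀ x, -M ≤ φ x)
    (R : ℝ) (hR : 0 < R)
    (Φ : ℝ → ℝ) (hΦnn : ∀ t ∈ Set.Ioi (0:ℝ), 0 ≤ Φ t)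
    (hΦcont : ContinuousOn Φ (Set.Ioi 0)) (hΦanti : AntitoneOn Φ (Set.Ioi 0))
    (hΦtend : Tendsto (fun t => Φ t * t ^ d) (nhdsWithin 0 (Set.Ioi 0)) atTop)
    (hRP : ∀ x : Rd d, x ≠ 0 → ‖x‖ ≤ R → Φ ‖x‖ ≤ φ x)
    (hUB : ∀ r : ℝ, 0 < r → ∃ C, ∀ x : Rd d, r ≤ ‖x‖ → φ x ≤ C)
    (G ε : ℝ) (hε : 0 < ε)
    (hT : ∀ x : Rd d, R ≤ ‖x‖ → |φ x| ≤ G * ‖x‖ ^ (-(d:ℝ) - ε))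
    (lm0 : ℝ) (hlm0 : 0 < lm0) :
    ∃ Ψt : ℕ → ℝ, (∀ n, 0 ≤ Ψt n) ∧ Antitone Ψt ∧
      Summable (fun r : Zd d => Ψt (znorm r)) ∧
      ∀ l : ℝ, lm0 ≤ l → ∀ Z Z' : Finset (Rd d), Disjoint Z Z' →
        -(∑' p : Zd d × Zd d, Ψt (znorm (p.1 - p.2)) *
            (cnt (Z : Set (Rd d)) 1 p.1 : ℝ) * (cnt (Z' : Set (Rd d)) 1 p.2 : ℝ)) ≤
          interEF (philam φ l) Z Z' := by
  classical
  have hd1 : (1:ℝ) ≤ (d:ℝ) := by exact_mod_cast hd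
  set q : ℝ := (d:ℝ) + ε with hqdef
  have hq : (d:ℝ) < q := by rw [hqdef]; linarith
  have hq0 : 0 < q := by linarith
  have hqneg : -q ≤ 0 := by linarith
  set core : Zd d → ℝ := fun r => ((znorm r : ℝ) + 1) ^ (-q) with hcoredef
  have hcore : Summable core := summable_corefn d hd q hq
  have hcnn : ∀ r, 0 ≤ core r := fun r => Real.rpow_nonneg (by positivity) _
  set Score := ∑' r, core r with hScoredef
  have hSnn : 0 ≤ Score := tsum_nonneg hcnn
  set G' := max G 0 with hG'def
  have hG' : 0 ≤ G' := le_max_right _ _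
  have hT' : ∀ x : Rd d, R ≤ ‖x‖ → |φ x| ≤ G' * ‖x‖ ^ (-q) := by
    intro x hx
    have h2 : -(d:ℝ) - ε = -q := by rw [hqdef]; ring
    calc |φ x| ≤ G * ‖x‖ ^ (-(d:ℝ) - ε) := hT x hx
      _ = G * ‖x‖ ^ (-q) := by rw [h2]
      _ ≤ G' * ‖x‖ ^ (-q) :=
        mul_le_mul_of_nonneg_right (le_max_left _ _) (Real.rpow_nonneg (norm_nonneg _) _)
  set Mg := max M 0 + G' * R ^ (-q) with hMgdef
  have hMg0 : 0 ≤ Mg :=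
    add_nonneg (le_max_right _ _) (mul_nonneg hG' (Real.rpow_nonneg hR.le _))
  have hMgM : M ≤ Mg :=
    le_trans (le_max_left M 0) (le_add_of_nonneg_right (mul_nonneg hG' (Real.rpow_nonneg hR.le _)))
  have hMgG : G' * R ^ (-q) ≤ Mg := le_add_of_nonneg_left (le_max_right _ _)
  set T := R / lm0 + 1 with hTdef
  have hT0 : 0 < T := by positivity
  set cmin := (T + 1) ^ (-q) with hcmindef
  have hcmin : 0 < cmin := Real.rpow_pos_of_pos (by linarith) _
  set Cg := Mg / cmin + G' * (2 / lm0) ^ q with hCgdef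
  have hCg : 0 ≤ Cg :=
    add_nonneg (div_nonneg hMg0 hcmin.le) (mul_nonneg hG' (Real.rpow_nonneg (by positivity) _))
  set K := Cg * Score with hKdef
  have hK0 : 0 ≤ K := mul_nonneg hCg hSnn
  set CT := G' * 2 ^ q * Score with hCTdef
  have hCT0 : 0 ≤ CT :=
    mul_nonneg (mul_nonneg hG' (Real.rpow_nonneg (by norm_num) _)) hSnn
  set B := max (K * (R + 2) ^ q) (CT * (1 + 2 / R) ^ q) with hBdef
  have hB0 : 0 ≤ B :=
    le_trans (mul_nonneg hK0 (Real.rpow_nonneg (by linarith) _)) (le_max_left _ _)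
  set Ψt : ℕ → ℝ := fun n => B * ((n : ℝ) + 1) ^ (-q) with hΨdef
  have hΨeval : ∀ n : ℕ, Ψt n = B * ((n : ℝ) + 1) ^ (-q) := fun n => rfl
  have hΨnn : ∀ n, 0 ≤ Ψt n := fun n =>
    mul_nonneg hB0 (Real.rpow_nonneg (by positivity) _)
  -- pointwise bound, constant case
  have hA : ∀ l : ℝ, lm0 ≤ l → ∀ z : Rd d, z ∈ LamO l → ∀ r : Zd d,
      -(Cg * core r) ≤ φ (shiftPt l z r) := by
    intro l hl z hz r
    have hl0 : 0 < l := lt_of_lt_of_le hlm0 hl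
    have hMgCg : ∀ s : Zd d, (znorm s : ℝ) < T → Mg ≤ Cg * core s := by
      intro s hs
      have h2 : cmin ≤ core s := by
        rw [hcmindef, hcoredef]
        exact Real.rpow_le_rpow_of_nonpos (by positivity) (by linarith) hqneg
      calc Mg = Mg / cmin * cmin := by field_simp
        _ ≤ Mg / cmin * core s := mul_le_mul_of_nonneg_left h2 (div_nonneg hMg0 hcmin.le)
        _ ≤ Cg * core s := mul_le_mul_of_nonneg_right
            (le_add_of_nonneg_right (mul_nonneg hG' (Real.rpow_nonneg (by positivity) _)))
            (hcnn s)
    by_cases hr0 : r = 0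
    · subst hr0
      have hsz : shiftPt l z 0 = z := by funext i; simp [shiftPt]
      rw [hsz]
      have hz0 : (znorm (0 : Zd d) : ℝ) < T := by rw [znorm_zero]; exact_mod_cast hT0
      linarith [hBB z, hMgCg 0 hz0]
    · have hgeom := shift_norm_lb hd l hl0 z hz r hr0
      have hzn1 : (1:ℝ) ≤ (znorm r : ℝ) := by exact_mod_cast one_le_znorm r hr0
      by_cases hcase : (znorm r : ℝ) < T
      · have h1 : -Mg ≤ φ (shiftPt l z r) := by
          by_cases hRv : R ≤ ‖shiftPt l z r‖
          · have habs := hT' _ hRv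
            have hle : ‖shiftPt l z r‖ ^ (-q) ≤ R ^ (-q) :=
              Real.rpow_le_rpow_of_nonpos hR hRv hqneg
            have h3 : |φ (shiftPt l z r)| ≤ G' * R ^ (-q) :=
              habs.trans (mul_le_mul_of_nonneg_left hle hG')
            linarith [neg_abs_le (φ (shiftPt l z r)), hMgG]
          · linarith [hBB (shiftPt l z r), hMgM]
        linarith [hMgCg r hcase]
      · push_neg at hcase
        have hlm0zn : lm0 * (znorm r : ℝ) ≤ ‖shiftPt l z r‖ := by
          have := mul_le_mul_of_nonneg_right hl (by positivity : (0:ℝ) ≤ (znorm r : ℝ))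
          linarith
        have hRlt : R < lm0 * (znorm r : ℝ) := by
          have h2 := mul_le_mul_of_nonneg_left hcase hlm0.le
          have hTeq : lm0 * T = R + lm0 := by rw [hTdef]; field_simp
          linarith
        have hRv : R ≤ ‖shiftPt l z r‖ := by linarith
        have habs := hT' _ hRv
        have hmid : lm0 / 2 * ((znorm r : ℝ) + 1) ≤ ‖shiftPt l z r‖ := by nlinarith
        have hle : ‖shiftPt l z r‖ ^ (-q) ≤ (lm0 / 2 * ((znorm r : ℝ) + 1)) ^ (-q) :=
          Real.rpow_le_rpow_of_nonpos (by positivity) hmid hqneg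
        have hsplit : (lm0 / 2 * ((znorm r : ℝ) + 1)) ^ (-q)
            = (2 / lm0) ^ q * ((znorm r : ℝ) + 1) ^ (-q) := by
          rw [Real.mul_rpow (by positivity) (by positivity)]
          congr 1
          rw [show (2:ℝ) / lm0 = (lm0 / 2)⁻¹ by rw [inv_div],
            Real.inv_rpow (by positivity), ← Real.rpow_neg (by positivity)]
        have hfin : |φ (shiftPt l z r)| ≤ G' * (2 / lm0) ^ q * core r := by
          calc |φ (shiftPt l z r)| ≤ G' * ‖shiftPt l z r‖ ^ (-q) := habs
            _ ≤ G' * ((2 / lm0) ^ q * ((znorm r : ℝ) + 1) ^ (-q)) := by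
                refine mul_le_mul_of_nonneg_left ?_ hG'
                rw [← hsplit]; exact hle
            _ = G' * (2 / lm0) ^ q * core r := by rw [hcoredef]; ring
        have hCg2 : G' * (2 / lm0) ^ q ≤ Cg :=
          le_add_of_nonneg_left (div_nonneg hMg0 hcmin.le)
        have h5 : |φ (shiftPt l z r)| ≤ Cg * core r :=
          hfin.trans (mul_le_mul_of_nonneg_right hCg2 (hcnn r))
        linarith [neg_abs_le (φ (shiftPt l z r))]
  have hPA : ∀ l : ℝ, lm0 ≤ l → ∀ z : Rd d, z ∈ LamO l → -K ≤ periodize φ l z := by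
    intro l hl z hz
    have h := tsum_lb core hcore hcnn Cg hCg (fun r => φ (shiftPt l z r)) (hA l hl z hz)
    rw [hKdef]
    exact h
  -- pointwise bound, decay case
  have hPB : ∀ l : ℝ, lm0 ≤ l → ∀ z : Rd d, z ∈ LamO l → R ≤ ‖z‖ →
      -(CT * ‖z‖ ^ (-q)) ≤ periodize φ l z := by
    intro l hl z hz hRz
    have hl0 : 0 < l := lt_of_lt_of_le hlm0 hl
    have hz0 : 0 < ‖z‖ := lt_of_lt_of_le hR hRz
    have hb : ∀ r : Zd d, -((G' * 2 ^ q * ‖z‖ ^ (-q)) * core r) ≤ φ (shiftPt l z r) := by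
      intro r
      by_cases hr0 : r = 0
      · subst hr0
        have hsz : shiftPt l z 0 = z := by funext i; simp [shiftPt]
        rw [hsz]
        have habs := hT' z hRz
        have h2q : (1:ℝ) ≤ 2 ^ q := Real.one_le_rpow one_le_two hq0.le
        have hcore0 : core 0 = 1 := by
          rw [hcoredef]; simp [znorm_zero]
        rw [hcore0, mul_one]
        nlinarith [neg_abs_le (φ z), Real.rpow_nonneg (norm_nonneg z) (-q),
          mul_nonneg (mul_nonneg hG' (sub_nonneg.2 h2q)) (Real.rpow_nonneg (norm_nonneg z) (-q))]
      · have hzn1 : (1:ℝ) ≤ (znorm r : ℝ) := by exact_mod_cast one_le_znorm r hr0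
        have hgeom := shift_norm_lb hd l hl0 z hz r hr0
        have hlz : ‖z‖ ≤ l := LamO_norm_le l hl0.le z hz
        have hv1 : ‖z‖ * (znorm r : ℝ) ≤ ‖shiftPt l z r‖ := by nlinarith
        have hvR : R ≤ ‖shiftPt l z r‖ := by nlinarith
        have habs := hT' _ hvR
        have hmid : ‖z‖ * (((znorm r : ℝ) + 1) / 2) ≤ ‖shiftPt l z r‖ := by nlinarith
        have hle : ‖shiftPt l z r‖ ^ (-q) ≤ (‖z‖ * (((znorm r : ℝ) + 1) / 2)) ^ (-q) :=
          Real.rpow_le_rpow_of_nonpos (by positivity) hmid hqneg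
        have hsplit2 : (((znorm r : ℝ) + 1) / 2) ^ (-q) = 2 ^ q * ((znorm r : ℝ) + 1) ^ (-q) := by
          rw [Real.div_rpow (by positivity) (by norm_num),
            Real.rpow_neg (by norm_num : (0:ℝ) ≤ 2), div_inv_eq_mul]
          ring
        have hsplit : (‖z‖ * (((znorm r : ℝ) + 1) / 2)) ^ (-q)
            = ‖z‖ ^ (-q) * (2 ^ q * ((znorm r : ℝ) + 1) ^ (-q)) := by
          rw [Real.mul_rpow (norm_nonneg z) (by positivity), hsplit2]
        have hfin : |φ (shiftPt l z r)| ≤ (G' * 2 ^ q * ‖z‖ ^ (-q)) * core r := by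
          calc |φ (shiftPt l z r)| ≤ G' * ‖shiftPt l z r‖ ^ (-q) := habs
            _ ≤ G' * (‖z‖ ^ (-q) * (2 ^ q * ((znorm r : ℝ) + 1) ^ (-q))) := by
                refine mul_le_mul_of_nonneg_left ?_ hG'
                rw [← hsplit]; exact hle
            _ = (G' * 2 ^ q * ‖z‖ ^ (-q)) * core r := by rw [hcoredef]; ring
        linarith [neg_abs_le (φ (shiftPt l z r))]
    have hCnn : 0 ≤ G' * 2 ^ q * ‖z‖ ^ (-q) :=
      mul_nonneg (mul_nonneg hG' (Real.rpow_nonneg (by norm_num) _))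
        (Real.rpow_nonneg (norm_nonneg z) _)
    have h := tsum_lb core hcore hcnn _ hCnn (fun r => φ (shiftPt l z r)) hb
    have heq : CT * ‖z‖ ^ (-q) = G' * 2 ^ q * ‖z‖ ^ (-q) * Score := by
      rw [hCTdef]; ring
    rw [heq]
    exact h
  refine ⟨Ψt, hΨnn, ?_, ?_, ?_⟩
  · intro a b hab
    have hcast : ((a : ℝ) + 1) ≤ (b : ℝ) + 1 := by
      have := (Nat.cast_le (α := ℝ)).2 hab; linarith
    exact mul_le_mul_of_nonneg_left
      (Real.rpow_le_rpow_of_nonpos (by positivity) hcast hqneg) hB0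
  · exact (hcore.mul_left B).congr fun r => by rw [hcoredef, hΨdef]
  · intro l hl Z Z' _
    have hPhi : ∀ x y : Rd d, -(Ψt (znorm (rnd x - rnd y))) ≤ philam φ l (x - y) := by
      intro x y
      by_cases hz : (x - y) ∈ LamO l
      · have hiz : philam φ l (x - y) = periodize φ l (x - y) := Set.indicator_of_mem hz _
        rw [hiz, hΨeval]
        have hn : (znorm (rnd x - rnd y) : ℝ) ≤ ‖x - y‖ + 1 := rnd_dist hd x y
        set n := znorm (rnd x - rnd y) with hndef
        by_cases hcase : ‖x - y‖ < R
        · have h1 := hPA l hl (x - y) hz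
          have h2 : K ≤ B * ((n : ℝ) + 1) ^ (-q) := by
            have hle : ((n : ℝ) + 1) ≤ R + 2 := by linarith
            have hrp : (R + 2) ^ (-q) ≤ ((n : ℝ) + 1) ^ (-q) :=
              Real.rpow_le_rpow_of_nonpos (by positivity) hle hqneg
            have hKB : K * (R + 2) ^ q ≤ B := le_max_left _ _
            calc K = K * ((R + 2) ^ q * (R + 2) ^ (-q)) := by
                  rw [← Real.rpow_add (by linarith), add_neg_cancel, Real.rpow_zero, mul_one]
              _ = (K * (R + 2) ^ q) * (R + 2) ^ (-q) := by ring
              _ ≤ B * (R + 2) ^ (-q) :=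
                  mul_le_mul_of_nonneg_right hKB (Real.rpow_nonneg (by linarith) _)
              _ ≤ B * ((n : ℝ) + 1) ^ (-q) := mul_le_mul_of_nonneg_left hrp hB0
          linarith
        · push_neg at hcase
          have h1 := hPB l hl (x - y) hz hcase
          have hz0 : 0 < ‖x - y‖ := lt_of_lt_of_le hR hcase
          have h2R : (0:ℝ) < 1 + 2 / R := by positivity
          have hkey : ((n : ℝ) + 1) / (1 + 2 / R) ≤ ‖x - y‖ := by
            rw [div_le_iff₀ h2R]
            have h2z : 2 ≤ 2 * ‖x - y‖ / R := by
              rw [le_div_iff₀ hR]; nlinarith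
            have hexp : ‖x - y‖ * (1 + 2 / R) = ‖x - y‖ + 2 * ‖x - y‖ / R := by ring
            rw [hexp]; linarith
          have h3 : ‖x - y‖ ^ (-q) ≤ (((n : ℝ) + 1) / (1 + 2 / R)) ^ (-q) :=
            Real.rpow_le_rpow_of_nonpos (by positivity) hkey hqneg
          have h4 : (((n : ℝ) + 1) / (1 + 2 / R)) ^ (-q)
              = ((n : ℝ) + 1) ^ (-q) * (1 + 2 / R) ^ q := by
            rw [Real.div_rpow (by positivity) h2R.le, Real.rpow_neg h2R.le, div_inv_eq_mul]
          have h5 : CT * ‖x - y‖ ^ (-q) ≤ B * ((n : ℝ) + 1) ^ (-q) := by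
            calc CT * ‖x - y‖ ^ (-q) ≤ CT * ((((n : ℝ) + 1) / (1 + 2 / R)) ^ (-q)) :=
                mul_le_mul_of_nonneg_left h3 hCT0
              _ = (CT * (1 + 2 / R) ^ q) * ((n : ℝ) + 1) ^ (-q) := by rw [h4]; ring
              _ ≤ B * ((n : ℝ) + 1) ^ (-q) :=
                mul_le_mul_of_nonneg_right (le_max_right _ _) (Real.rpow_nonneg (by positivity) _)
          linarith
      · have hiz : philam φ l (x - y) = 0 := Set.indicator_of_notMem hz _
        rw [hiz]
        linarith [hΨnn (znorm (rnd x - rnd y))]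
    have main1 : -(∑ x ∈ Z, ∑ y ∈ Z', Ψt (znorm (rnd x - rnd y)))
        ≤ interEF (philam φ l) Z Z' := by
      rw [interEF]
      calc -(∑ x ∈ Z, ∑ y ∈ Z', Ψt (znorm (rnd x - rnd y)))
          = ∑ x ∈ Z, -(∑ y ∈ Z', Ψt (znorm (rnd x - rnd y))) := by
            rw [Finset.sum_neg_distrib]
        _ ≤ ∑ x ∈ Z, ∑ y ∈ Z', philam φ l (x - y) := by
            refine Finset.sum_le_sum fun x hx => ?_
            rw [← Finset.sum_neg_distrib]
            exact Finset.sum_le_sum fun y hy => hPhi x y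
    have main2 : (∑ x ∈ Z, ∑ y ∈ Z', Ψt (znorm (rnd x - rnd y)))
        = ∑' p : Zd d × Zd d, Ψt (znorm (p.1 - p.2)) *
            (cnt (Z : Set (Rd d)) 1 p.1 : ℝ) * (cnt (Z' : Set (Rd d)) 1 p.2 : ℝ) := by
      rw [tsum_eq_sum (s := (Z.image rnd) ×ˢ (Z'.image rnd))
        (fun p hp => ?_)]
      · rw [Finset.sum_product, double_fiber_sum Z Z' (fun r r' => Ψt (znorm (r - r')))]
        refine Finset.sum_congr rfl fun r hr => Finset.sum_congr rfl fun r' hr' => ?_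
        rw [cnt_eq_card, cnt_eq_card]
        ring
      · have hmem : ¬ (p.1 ∈ Z.image rnd ∧ p.2 ∈ Z'.image rnd) := by
          simpa [Finset.mem_product] using hp
        rcases not_and_or.mp hmem with h | h
        · rw [cnt_zero_of_notMem _ _ h]; simp
        · rw [cnt_zero_of_notMem _ _ h]; simp
    rw [← main2]
    exact main1
end
end

section
/- Let φ satisfy (BB), (RP) and (T), let λ > 0, and let Z ⊆ Λ_λ be a finite set having distances < λ. For k ∈ ℕ set Z_k := ∪_{r∈ℤ^d, |r|≤k}(Z + 2λr). Then there exists a constant C < ∞ (depending on Z, λ and φ) such that |U_{φ_λ}(Z_k) − (2k−1)^d·Ũ_{φ,λ}(Z)| ≤ C·k^{d−1} for all k ∈ ℕ; in particular Ũ_{φ,λ}(Z) = lim_{k→∞} (2k−1)^{−d}·U_{φ_λ}(Z_k). -/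
open MeasureTheory Filter Set
open scoped BigOperators ENNReal Topology

noncomputable section

/-- The lattice points r ∈ ℤ^d with |r| ≤ k, as a finset. -/
def ballZ (d k : ℕ) : Finset (Zd d) :=
  Fintype.piFinset fun _ => Finset.Icc (-(k:ℤ)) (k:ℤ)

/-- Z_k = ∪_{r∈ℤ^d, |r|≤k} (Z + 2λr), as a finset. -/
def Zkfin {d : ℕ} (l : ℝ) (Z : Finset (Rd d)) (k : ℕ) : Finset (Rd d) :=
  (Z ×ˢ ballZ d k).image fun p => shiftPt l p.1 p.2

lemma shift_add {d : ℕ} (l : ℝ) (y : Rd d) (u r : Zd d) :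
    shiftPt l (shiftPt l y u) r = shiftPt l y (u + r) := by
  funext i; simp only [shiftPt, Pi.add_apply]; push_cast; ring

lemma periodize_shift {d : ℕ} (φ : Rd d → ℝ) (l : ℝ) (y : Rd d) (u : Zd d) :
    periodize φ l (shiftPt l y u) = periodize φ l y := by
  unfold periodize
  rw [← (Equiv.addLeft u).tsum_eq (fun v => φ (shiftPt l y v))]
  exact tsum_congr fun r => by rw [shift_add]; rfl

/-- the unique lattice vector bringing w into the open cube -/
def tvec {d : ℕ} (l : ℝ) (w : Rd d) : Zd d :=
  fun i => if w i < -l then 1 else if l < w i then -1 else 0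

lemma coord_iff (l a : ℝ) (hl : 0 < l) (h2 : |a| < 2*l) (h3 : a ≠ l) (h4 : a ≠ -l) (c : ℤ) :
    (-l < a + 2*l*c ∧ a + 2*l*c < l) ↔ c = (if a < -l then 1 else if l < a then -1 else 0) := by
  have habs := abs_lt.mp h2
  constructor
  · rintro ⟨h5, h6⟩
    split_ifs with hc1 hc2
    · have h7 : (0:ℝ) < c := by nlinarith
      have h8 : (c:ℝ) < 2 := by nlinarith
      have h7' : 0 < c := by exact_mod_cast h7
      have h8' : c < 2 := by exact_mod_cast h8
      omega
    · have h7 : (-2:ℝ) < c := by nlinarith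
      have h8 : (c:ℝ) < 0 := by nlinarith
      have h7' : (-2:ℤ) < c := by exact_mod_cast h7
      have h8' : c < 0 := by exact_mod_cast h8
      omega
    · push_neg at hc1 hc2
      have hl1 : -l < a := lt_of_le_of_ne hc1 (Ne.symm h4)
      have hl2 : a < l := lt_of_le_of_ne hc2 h3
      have h7 : (-1:ℝ) < c := by nlinarith
      have h8 : (c:ℝ) < 1 := by nlinarith
      have h7' : (-1:ℤ) < c := by exact_mod_cast h7
      have h8' : c < 1 := by exact_mod_cast h8
      omega
  · intro h; subst h
    split_ifs with hc1 hc2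
    · push_cast; constructor <;> nlinarith
    · push_cast; constructor <;> nlinarith
    · push_neg at hc1 hc2
      have hl1 : -l < a := lt_of_le_of_ne hc1 (Ne.symm h4)
      have hl2 : a < l := lt_of_le_of_ne hc2 h3
      push_cast; constructor <;> nlinarith

lemma tvec_abs {d : ℕ} (l : ℝ) (w : Rd d) (i : Fin d) : |tvec l w i| ≤ 1 := by
  unfold tvec; split_ifs <;> decide

lemma tvec_zero {d : ℕ} (l : ℝ) (hl : 0 < l) : tvec l (0 : Rd d) = 0 := by
  funext i
  simp only [tvec, Pi.zero_apply]
  rw [if_neg (by linarith), if_neg (by linarith)]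

lemma philam_shift_eq {d : ℕ} (φ : Rd d → ℝ) (l : ℝ) (hl : 0 < l) (w : Rd d)
    (hw : ∀ i, |w i| < 2*l ∧ w i ≠ l ∧ w i ≠ -l) (u : Zd d) :
    philam φ l (shiftPt l w u) = if u = tvec l w then periodize φ l w else 0 := by
  unfold philam
  by_cases hmem : shiftPt l w u ∈ LamO l
  · rw [Set.indicator_of_mem hmem, periodize_shift, if_pos]
    funext i
    exact (coord_iff l (w i) hl (hw i).1 (hw i).2.1 (hw i).2.2 (u i)).mp (hmem i)
  · rw [Set.indicator_of_notMem hmem, if_neg]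
    intro h
    exact hmem fun i => (coord_iff l (w i) hl (hw i).1 (hw i).2.1 (hw i).2.2 (u i)).mpr
      (by rw [h]; rfl)

lemma pow_sub_pow_le' (a b : ℝ) (hb : 0 ≤ b) (hab : b ≤ a) (n : ℕ) :
    a ^ n - b ^ n ≤ n * (a - b) * a ^ (n - 1) := by
  induction n with
  | zero => simp
  | succ n ih =>
    have ha : 0 ≤ a := hb.trans hab
    simp only [Nat.add_sub_cancel]
    push_cast
    have key : a ^ (n+1) - b ^ (n+1) = a * (a^n - b^n) + (a - b) * b^n := by ring
    have h1 : a * (a^n - b^n) ≤ n * (a - b) * a ^ n := by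
      rcases Nat.eq_zero_or_pos n with h | h
      · subst h; simp
      · have hthis : a * (a ^ n - b ^ n) ≤ a * (n * (a - b) * a ^ (n-1)) := by
          apply mul_le_mul_of_nonneg_left ih ha
        have hpow : a * a ^ (n-1) = a ^ n := by
          conv_rhs => rw [show n = (n-1)+1 by omega]
          rw [pow_succ]; ring
        calc a * (a ^ n - b ^ n) ≤ a * (n * (a - b) * a ^ (n-1)) := hthis
          _ = n * (a-b) * (a * a ^ (n-1)) := by ring
          _ = n * (a-b) * a ^ n := by rw [hpow]
    have h2 : (a - b) * b ^ n ≤ (a - b) * a ^ n :=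
      mul_le_mul_of_nonneg_left (pow_le_pow_left₀ hb hab n) (by linarith)
    calc a ^ (n+1) - b ^ (n+1) = a * (a^n - b^n) + (a - b) * b^n := key
      _ ≤ n * (a - b) * a ^ n + (a - b) * a ^ n := add_le_add h1 h2
      _ = ((n:ℝ)+1) * (a - b) * a ^ n := by ring

lemma ballZ_card (d k : ℕ) : (ballZ d k).card = (2*k+1)^d := by
  unfold ballZ
  rw [Fintype.card_piFinset]
  simp only [Int.card_Icc]
  have h : ((k:ℤ) + 1 - -(k:ℤ)).toNat = 2*k+1 := by omega
  rw [h, Finset.prod_const, Finset.card_univ, Fintype.card_fin]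

lemma Nc_card_le (d k : ℕ) (t : Zd d) :
    ((ballZ d k ×ˢ ballZ d k).filter fun q => q.1 - q.2 = t).card ≤ (2*k+1)^d := by
  rw [← ballZ_card d k]
  apply Finset.card_le_card_of_injOn (fun q => q.2)
  · intro q hq
    simp only [Finset.mem_coe, Finset.mem_filter, Finset.mem_product] at hq
    exact hq.1.2
  · intro p hp q hq h
    simp only [Finset.coe_filter, Set.mem_setOf_eq, Finset.mem_product] at hp hq
    have h2 : p.2 = q.2 := h
    have h1 : p.1 = q.1 := by
      have h3 : p.1 - p.2 = q.1 - q.2 := hp.2.trans hq.2.symm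
      rw [h2] at h3
      exact sub_left_inj.mp h3
    exact Prod.ext h1 h2

lemma Nc_card_ge (d k : ℕ) (hk : 1 ≤ k) (t : Zd d) (ht : ∀ i, |t i| ≤ 1) :
    (2*k-1)^d ≤ ((ballZ d k ×ˢ ballZ d k).filter fun q => q.1 - q.2 = t).card := by
  have hcard : (Fintype.piFinset fun _ : Fin d => Finset.Icc (-(k:ℤ)+1) ((k:ℤ)-1)).card
      = (2*k-1)^d := by
    rw [Fintype.card_piFinset]
    simp only [Int.card_Icc]
    have h : ((k:ℤ) - 1 + 1 - (-(k:ℤ)+1)).toNat = 2*k-1 := by omega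
    rw [h, Finset.prod_const, Finset.card_univ, Fintype.card_fin]
  rw [← hcard]
  apply Finset.card_le_card_of_injOn (fun s => (s + t, s))
  · intro s hs
    simp only [Finset.mem_coe, Fintype.mem_piFinset, Finset.mem_Icc] at hs
    simp only [Finset.mem_coe, Finset.mem_filter, Finset.mem_product]
    refine ⟨⟨?_, ?_⟩, by simp⟩
    · simp only [ballZ, Fintype.mem_piFinset, Finset.mem_Icc]
      intro i
      have := hs i; have hti := abs_le.mp (ht i)
      simp only [Pi.add_apply]
      omega
    · simp only [ballZ, Fintype.mem_piFinset, Finset.mem_Icc]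
      intro i
      have := hs i
      omega
  · intro p _ q _ h
    exact (Prod.ext_iff.mp h).2


lemma pairE_Zk {d : ℕ} (φ : Rd d → ℝ) (l : ℝ) (hl : 0 < l) (Z : Finset (Rd d))
    (hZ : (Z : Set (Rd d)) ⊆ Lam l) (hdist : hasDistLt l Z) (k : ℕ) :
    pairE (philam φ l) (Zkfin l Z k) =
      (∑ z ∈ Z, ∑ z' ∈ Z.erase z, periodize φ l (z - z') *
        (((ballZ d k ×ˢ ballZ d k).filter
          fun q : Zd d × Zd d => q.1 - q.2 = tvec l (z - z')).card : ℝ)) / 2 := by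
  classical
  set B := ballZ d k with hB
  set S := Z ×ˢ B with hS
  set f : Rd d × Zd d → Rd d := fun p => shiftPt l p.1 p.2 with hf
  -- basic facts
  have hw : ∀ z ∈ Z, ∀ z' ∈ Z, ∀ i, |(z - z') i| < 2*l ∧ (z-z') i ≠ l ∧ (z-z') i ≠ -l := by
    intro z hz z' hz' i
    have h1 := hZ hz i
    have h2 := hZ hz' i
    refine ⟨abs_lt.mpr ⟨by simp only [Pi.sub_apply]; linarith, by simp only [Pi.sub_apply]; linarith⟩, ?_, ?_⟩
    · exact hdist z hz z' hz' i
    · intro h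
      exact hdist z' hz' z hz i (by simp only [Pi.sub_apply] at h ⊢; linarith)
  have hfinj : ∀ p ∈ S, ∀ q ∈ S, f p = f q → p = q := by
    intro p hp q hq h
    simp only [hS, Finset.mem_product] at hp hq
    have hco : ∀ i, p.1 i + 2*l*(p.2 i : ℝ) = q.1 i + 2*l*(q.2 i : ℝ) := by
      intro i; exact congrFun h i
    have h2 : p.2 = q.2 := by
      funext i
      by_contra hne
      have h1 : (1:ℝ) ≤ |((p.2 i - q.2 i : ℤ) : ℝ)| := by
        exact_mod_cast Int.one_le_abs (sub_ne_zero.mpr hne)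
      have hz1 := hZ hp.1 i
      have hz2 := hZ hq.1 i
      have heq : q.1 i - p.1 i = 2*l*((p.2 i - q.2 i : ℤ) : ℝ) := by
        push_cast; have := hco i; linarith
      have habs : |q.1 i - p.1 i| < 2*l := abs_lt.mpr ⟨by linarith, by linarith⟩
      rw [heq, abs_mul, abs_of_pos (by linarith : (0:ℝ) < 2*l)] at habs
      nlinarith
    have h1 : p.1 = q.1 := by
      funext i
      have := hco i
      rw [h2] at this
      linarith
    exact Prod.ext h1 h2
  have h0mem : (0 : Rd d) ∈ LamO l := by
    intro i
    simp only [Pi.zero_apply]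
    exact ⟨by linarith, hl⟩
  have h0 : philam φ l (0 : Rd d) = periodize φ l 0 := Set.indicator_of_mem h0mem _
  -- the per-pair term
  set term : Rd d → Rd d → ℝ := fun z z' => periodize φ l (z - z') *
      (((B ×ˢ B).filter fun q : Zd d × Zd d => q.1 - q.2 = tvec l (z - z')).card : ℝ) with hterm
  -- difference as shift
  have hdiff : ∀ (z z' : Rd d) (r s : Zd d), f (z,r) - f (z',s) = shiftPt l (z - z') (r - s) := by
    intro z z' r s
    funext i
    simp only [hf, shiftPt, Pi.sub_apply]
    push_cast; ring
  have hinner : ∀ z ∈ Z, ∀ z' ∈ Z,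
      (∑ r ∈ B, ∑ s ∈ B, philam φ l (f (z,r) - f (z',s))) = term z z' := by
    intro z hz z' hz'
    have : ∀ r s : Zd d, philam φ l (f (z,r) - f (z',s)) =
        if r - s = tvec l (z - z') then periodize φ l (z - z') else 0 := by
      intro r s
      rw [hdiff]
      exact philam_shift_eq φ l hl (z - z') (hw z hz z' hz') (r - s)
    simp only [this]
    rw [← Finset.sum_product']
    rw [Finset.sum_ite, Finset.sum_const, Finset.sum_const_zero, add_zero, nsmul_eq_mul]
    rw [hterm, mul_comm]
  have hdouble : ∑ x ∈ Zkfin l Z k, ∑ y ∈ Zkfin l Z k, philam φ l (x - y)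
      = ∑ z ∈ Z, ∑ z' ∈ Z, term z z' := by
    have himg : Zkfin l Z k = S.image f := rfl
    rw [himg, Finset.sum_image hfinj]
    rw [Finset.sum_congr rfl (fun p hp => (Finset.sum_image hfinj : ∑ y ∈ S.image f, philam φ l (f p - y) = _))]
    rw [Finset.sum_product]
    refine Finset.sum_congr rfl fun z hz => ?_
    have : ∀ r ∈ B, ∑ q ∈ S, philam φ l (f (z,r) - f q)
        = ∑ z' ∈ Z, ∑ s ∈ B, philam φ l (f (z,r) - f (z',s)) := by
      intro r _
      rw [hS, Finset.sum_product]
    rw [Finset.sum_congr rfl this, Finset.sum_comm]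
    exact Finset.sum_congr rfl fun z' hz' => hinner z hz z' hz'
  -- diagonal value
  have hNc0 : ((B ×ˢ B).filter fun q : Zd d × Zd d => q.1 - q.2 = (0:Zd d)).card = B.card := by
    have hset : ((B ×ˢ B).filter fun q : Zd d × Zd d => q.1 - q.2 = (0:Zd d)) = B.diag := by
      ext q
      simp only [Finset.mem_filter, Finset.mem_product, Finset.mem_diag, sub_eq_zero]
      constructor
      · rintro ⟨⟨h1, h2⟩, h3⟩; exact ⟨h1, h3⟩
      · rintro ⟨h1, h3⟩; exact ⟨⟨h1, h3 ▸ h1⟩, h3⟩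
    rw [hset, Finset.diag_card]
  have hdiag : ∀ z ∈ Z, term z z = periodize φ l 0 * B.card := by
    intro z hz
    rw [hterm]
    simp only [sub_self, tvec_zero l hl, hNc0]
  -- diagonal split
  have hsplit : ∑ z ∈ Z, ∑ z' ∈ Z, term z z'
      = (∑ z ∈ Z, ∑ z' ∈ Z.erase z, term z z') + Z.card * (periodize φ l 0 * B.card) := by
    have : ∀ z ∈ Z, ∑ z' ∈ Z, term z z'
        = (∑ z' ∈ Z.erase z, term z z') + periodize φ l 0 * B.card := by
      intro z hz
      rw [← Finset.sum_erase_add Z _ hz, hdiag z hz]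
    rw [Finset.sum_congr rfl this, Finset.sum_add_distrib, Finset.sum_const, nsmul_eq_mul]
  -- erase sums
  have hcardT : ((Zkfin l Z k).card : ℝ) = (Z.card : ℝ) * (B.card : ℝ) := by
    have : (Zkfin l Z k).card = S.card := Finset.card_image_of_injOn
      (fun p hp q hq h => hfinj p hp q hq h)
    rw [this, hS, Finset.card_product]
    push_cast; ring
  have herase : ∀ x ∈ Zkfin l Z k, ∑ y ∈ (Zkfin l Z k).erase x, philam φ l (x - y)
      = (∑ y ∈ Zkfin l Z k, philam φ l (x - y)) - periodize φ l 0 := by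
    intro x hx
    rw [Finset.sum_erase_eq_sub hx, sub_self, h0]
  unfold pairE
  rw [Finset.sum_congr rfl herase, Finset.sum_sub_distrib, Finset.sum_const, nsmul_eq_mul,
    hdouble, hsplit]
  rw [hcardT]
  ring


theorem stmt8 (d : ℕ) (hd : 1 ≤ d)
    (φ : Rd d → ℝ) (hmeas : Measurable φ) (hsymm : ∀ x, φ (-x) = φ x)
    (M : ℝ) (hBB : ∀ x, -M ≤ φ x)
    (R : ℝ) (hR : 0 < R)
    (Φ : ℝ → ℝ) (hΦnn : ∀ t ∈ Set.Ioi (0:ℝ), 0 ≤ Φ t)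
    (hΦcont : ContinuousOn Φ (Set.Ioi 0)) (hΦanti : AntitoneOn Φ (Set.Ioi 0))
    (hΦtend : Tendsto (fun t => Φ t * t ^ d) (nhdsWithin 0 (Set.Ioi 0)) atTop)
    (hRP : ∀ x : Rd d, x ≠ 0 → ‖x‖ ≤ R → Φ ‖x‖ ≤ φ x)
    (hUB : ∀ r : ℝ, 0 < r → ∃ C, ∀ x : Rd d, r ≤ ‖x‖ → φ x ≤ C)
    (G ε : ℝ) (hε : 0 < ε)
    (hT : ∀ x : Rd d, R ≤ ‖x‖ → |φ x| ≤ G * ‖x‖ ^ (-(d:ℝ) - ε))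
    (l : ℝ) (hl : 0 < l)
    (Z : Finset (Rd d)) (hZ : (Z : Set (Rd d)) ⊆ Lam l) (hdist : hasDistLt l Z) :
    ∃ C : ℝ,
      (∀ k : ℕ, 1 ≤ k →
        |pairE (philam φ l) (Zkfin l Z k) - (2 * (k:ℝ) - 1) ^ d * perE φ l Z| ≤
          C * (k:ℝ) ^ (d - 1)) ∧
      Tendsto (fun k : ℕ => ((2 * (k:ℝ) - 1) ^ d)⁻¹ * pairE (philam φ l) (Zkfin l Z k))
        atTop (nhds (perE φ l Z)) := by
  classical
  set A : ℝ := (∑ z ∈ Z, ∑ z' ∈ Z.erase z, |periodize φ l (z - z')|) / 2 with hA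
  have hA0 : 0 ≤ A := by
    apply div_nonneg _ (by norm_num)
    exact Finset.sum_nonneg fun z _ => Finset.sum_nonneg fun z' _ => abs_nonneg _
  set C : ℝ := A * (2 * (d:ℝ) * 3 ^ (d-1)) with hC
  have hC0 : 0 ≤ C := by
    apply mul_nonneg hA0
    positivity
  have hbound : ∀ k : ℕ, 1 ≤ k →
      |pairE (philam φ l) (Zkfin l Z k) - (2 * (k:ℝ) - 1) ^ d * perE φ l Z| ≤
        C * (k:ℝ) ^ (d - 1) := by
    intro k hk
    have hk1 : (1:ℝ) ≤ (k:ℝ) := by exact_mod_cast hk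
    set c : ℝ := (2 * (k:ℝ) - 1) ^ d with hc
    -- per-pair count bound
    have hcastm : (((2*k-1 : ℕ)) : ℝ) = 2 * (k:ℝ) - 1 := by
      rw [Nat.cast_sub (by omega)]; push_cast; ring
    have hcastp : (((2*k+1 : ℕ)) : ℝ) = 2 * (k:ℝ) + 1 := by push_cast; ring
    set Δ : ℝ := 2 * (d:ℝ) * 3 ^ (d-1) * (k:ℝ) ^ (d-1) with hΔ
    have hΔbig : (2 * (k:ℝ) + 1) ^ d - (2 * (k:ℝ) - 1) ^ d ≤ Δ := by
      have h1 := pow_sub_pow_le' (2 * (k:ℝ) + 1) (2 * (k:ℝ) - 1)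
        (by linarith) (by linarith) d
      have h2 : (2 * (k:ℝ) + 1) - (2 * (k:ℝ) - 1) = 2 := by ring
      rw [h2] at h1
      have h3 : (2 * (k:ℝ) + 1) ^ (d-1) ≤ (3 * (k:ℝ)) ^ (d-1) :=
        pow_le_pow_left₀ (by linarith) (by linarith) _
      have h4 : ((3:ℝ) * (k:ℝ)) ^ (d-1) = 3 ^ (d-1) * (k:ℝ) ^ (d-1) := mul_pow _ _ _
      have hd0 : (0:ℝ) ≤ (d:ℝ) * 2 := by positivity
      calc (2 * (k:ℝ) + 1) ^ d - (2 * (k:ℝ) - 1) ^ d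
          ≤ (d:ℝ) * 2 * (2 * (k:ℝ) + 1) ^ (d-1) := h1
        _ ≤ (d:ℝ) * 2 * ((3:ℝ) * (k:ℝ)) ^ (d-1) := mul_le_mul_of_nonneg_left h3 hd0
        _ = Δ := by rw [h4, hΔ]; ring
    have hterm : ∀ z ∈ Z, ∀ z' ∈ Z.erase z,
        |((((ballZ d k ×ˢ ballZ d k).filter
            fun q : Zd d × Zd d => q.1 - q.2 = tvec l (z - z')).card : ℝ)) - c| ≤ Δ := by
      intro z hz z' hz'
      set N : ℕ := ((ballZ d k ×ˢ ballZ d k).filter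
          fun q : Zd d × Zd d => q.1 - q.2 = tvec l (z - z')).card with hN
      have hle : N ≤ (2*k+1)^d := Nc_card_le d k _
      have hge : (2*k-1)^d ≤ N := Nc_card_ge d k hk _ (tvec_abs l (z - z'))
      have hleR : (N:ℝ) ≤ (2 * (k:ℝ) + 1) ^ d := by
        calc (N:ℝ) ≤ (((2*k+1)^d : ℕ) : ℝ) := by exact_mod_cast hle
          _ = (2 * (k:ℝ) + 1) ^ d := by rw [Nat.cast_pow, hcastp]
      have hgeR : (2 * (k:ℝ) - 1) ^ d ≤ (N:ℝ) := by
        calc (2 * (k:ℝ) - 1) ^ d = (((2*k-1)^d : ℕ) : ℝ) := by rw [Nat.cast_pow, hcastm]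
          _ ≤ (N:ℝ) := by exact_mod_cast hge
      rw [abs_le]
      constructor
      · have hΔ0 : 0 ≤ Δ := le_trans (by linarith) (le_trans (sub_le_sub_right
          (le_refl ((2 * (k:ℝ) + 1) ^ d)) _) hΔbig)
        ·
          have : (0:ℝ) ≤ (N:ℝ) - c := by rw [hc]; linarith
          linarith [hΔbig]
      · rw [hc]; linarith [hΔbig]
    -- rewrite the difference
    have hkey := pairE_Zk φ l hl Z hZ hdist k
    have hdiff : pairE (philam φ l) (Zkfin l Z k) - c * perE φ l Z =
        (∑ z ∈ Z, ∑ z' ∈ Z.erase z, periodize φ l (z - z') *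
          ((((ballZ d k ×ˢ ballZ d k).filter
            fun q : Zd d × Zd d => q.1 - q.2 = tvec l (z - z')).card : ℝ) - c)) / 2 := by
      rw [hkey]
      unfold perE
      rw [show ∑ z ∈ Z, ∑ z' ∈ Z.erase z, periodize φ l (z - z') *
          ((((ballZ d k ×ˢ ballZ d k).filter
            fun q : Zd d × Zd d => q.1 - q.2 = tvec l (z - z')).card : ℝ) - c)
        = (∑ z ∈ Z, ∑ z' ∈ Z.erase z, periodize φ l (z - z') *
            (((ballZ d k ×ˢ ballZ d k).filter
              fun q : Zd d × Zd d => q.1 - q.2 = tvec l (z - z')).card : ℝ))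
          - c * ∑ z ∈ Z, ∑ z' ∈ Z.erase z, periodize φ l (z - z') from ?_]
      · ring
      · rw [Finset.mul_sum, ← Finset.sum_sub_distrib]
        refine Finset.sum_congr rfl fun z hz => ?_
        rw [Finset.mul_sum, ← Finset.sum_sub_distrib]
        refine Finset.sum_congr rfl fun z' hz' => ?_
        ring
    rw [hdiff]
    rw [abs_div, abs_two]
    have habssum : |∑ z ∈ Z, ∑ z' ∈ Z.erase z, periodize φ l (z - z') *
        ((((ballZ d k ×ˢ ballZ d k).filter
          fun q : Zd d × Zd d => q.1 - q.2 = tvec l (z - z')).card : ℝ) - c)|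
        ≤ ∑ z ∈ Z, ∑ z' ∈ Z.erase z, |periodize φ l (z - z')| * Δ := by
      refine le_trans (Finset.abs_sum_le_sum_abs _ _) ?_
      refine Finset.sum_le_sum fun z hz => ?_
      refine le_trans (Finset.abs_sum_le_sum_abs _ _) ?_
      refine Finset.sum_le_sum fun z' hz' => ?_
      rw [abs_mul]
      exact mul_le_mul_of_nonneg_left (hterm z hz z' hz') (abs_nonneg _)
    have hsummul : ∑ z ∈ Z, ∑ z' ∈ Z.erase z, |periodize φ l (z - z')| * Δ
        = (∑ z ∈ Z, ∑ z' ∈ Z.erase z, |periodize φ l (z - z')|) * Δ := by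
      rw [Finset.sum_mul]
      refine Finset.sum_congr rfl fun z hz => ?_
      rw [Finset.sum_mul]
    calc |∑ z ∈ Z, ∑ z' ∈ Z.erase z, periodize φ l (z - z') *
        ((((ballZ d k ×ˢ ballZ d k).filter
          fun q : Zd d × Zd d => q.1 - q.2 = tvec l (z - z')).card : ℝ) - c)| / 2
        ≤ (∑ z ∈ Z, ∑ z' ∈ Z.erase z, |periodize φ l (z - z')| * Δ) / 2 := by
          gcongr
      _ = C * (k:ℝ) ^ (d-1) := by rw [hsummul, hC, hA, hΔ]; ring
  refine ⟨C, hbound, ?_⟩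
  have hzero : Tendsto (fun k : ℕ =>
      ((2 * (k:ℝ) - 1) ^ d)⁻¹ * pairE (philam φ l) (Zkfin l Z k) - perE φ l Z)
      atTop (nhds 0) := by
    apply squeeze_zero_norm' (a := fun k : ℕ => C / (k:ℝ)) ?_
      (tendsto_const_div_atTop_nhds_zero_nat C)
    rw [Filter.eventually_atTop]
    refine ⟨1, fun k hk => ?_⟩
    have hk1 : (1:ℝ) ≤ (k:ℝ) := by exact_mod_cast hk
    have hk0 : (0:ℝ) < (k:ℝ) := by linarith
    have hcpos : (0:ℝ) < (2*(k:ℝ)-1)^d := pow_pos (by linarith) d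
    have heq : ((2 * (k:ℝ) - 1) ^ d)⁻¹ * pairE (philam φ l) (Zkfin l Z k) - perE φ l Z
        = ((2 * (k:ℝ) - 1) ^ d)⁻¹ *
          (pairE (philam φ l) (Zkfin l Z k) - (2 * (k:ℝ) - 1) ^ d * perE φ l Z) := by
      field_simp
    rw [Real.norm_eq_abs, heq, abs_mul, abs_inv, abs_of_pos hcpos]
    have hb := hbound k hk
    have hkd : (k:ℝ)^d ≤ (2*(k:ℝ)-1)^d := pow_le_pow_left₀ (by linarith) (by linarith) d
    have hkdpos : (0:ℝ) < (k:ℝ)^d := pow_pos hk0 d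
    have hinvle : ((2*(k:ℝ)-1)^d)⁻¹ ≤ ((k:ℝ)^d)⁻¹ := by
      exact inv_anti₀ hkdpos hkd
    have h1 : ((2*(k:ℝ)-1)^d)⁻¹ *
        |pairE (philam φ l) (Zkfin l Z k) - (2 * (k:ℝ) - 1) ^ d * perE φ l Z|
        ≤ ((k:ℝ)^d)⁻¹ * (C * (k:ℝ)^(d-1)) := by
      apply mul_le_mul hinvle hb (abs_nonneg _) (inv_pos.mpr hkdpos).le
    have hsplit : (k:ℝ)^d = (k:ℝ)^(d-1) * (k:ℝ) := by
      conv_lhs => rw [show d = (d-1)+1 by omega]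
      rw [pow_succ]
    have h2 : ((k:ℝ)^d)⁻¹ * (C * (k:ℝ)^(d-1)) = C / (k:ℝ) := by
      rw [hsplit]
      have hkp : (k:ℝ)^(d-1) ≠ 0 := by positivity
      field_simp
    rw [mul_comm (((2*(k:ℝ)-1)^d)⁻¹)] at h1
    rw [mul_comm] at h1 ⊢
    linarith [h2 ▸ h1]
  have hfin := hzero.add_const (perE φ l Z)
  simp only [zero_add, sub_add_cancel] at hfin
  exact hfin
end
end

section
/- Let φ : ℝ^d → ℝ be measurable, symmetric (φ(−x) = φ(x)), bounded from below, and such that ∫_{{|x|≥a}} |φ(x)| dx < ∞ for every a > 0. For λ > 0 define φ̂_λ(y) := Σ_{r∈ℤ^d} φ(y+2λr) at every y where this series converges absolutely (which is the case for Lebesgue-almost every y ∈ ℝ^d) and φ̂_λ(y) := 0 otherwise; for N ∈ ℕ set Ũ_λ(x_1,…,x_N) := Σ_{1≤i<j≤N} φ̂_λ(x_i−x_j) and define the canonical partition function with periodic boundary condition Z_λ^{N,β} := ∫_{Λ_λ^N} exp(−β·Ũ_λ(x_1,…,x_N)) dx_1⋯dx_N ∈ (0,∞], with Z_λ^{0,β}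 := 1. Then for every compact set S ⊆ [0,∞)×(0,∞) there exists a constant k ≥ 1 such that for all N ∈ ℕ₀, λ > 0 and β > 0 with (N/(2λ)^d, β) ∈ S one has Z_λ^{N,β} ≤ (k/(2λ)^d)·Z_λ^{N+1,β}. -/
set_option maxHeartbeats 1000000

open MeasureTheory Filter Set
open scoped BigOperators ENNReal Topology

noncomputable section

/-- Λ_λ^N. -/
def cube (d : ℕ) (l : ℝ) (N : ℕ) : Set (Fin N → Rd d) := {x | ∀ i, x i ∈ Lam l}

/-- Ũ_λ(x_1,…,x_N) = Σ_{i<j} φ̂_λ(x_i − x_j). -/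
def UtN {d : ℕ} (φ : Rd d → ℝ) (l : ℝ) {N : ℕ} (x : Fin N → Rd d) : ℝ :=
  ∑ i : Fin N, ∑ j ∈ Finset.Ioi i, periodize φ l (x i - x j)

/-- The canonical partition function with periodic boundary condition,
as an extended-real-valued Lebesgue integral. -/
def ZpartE {d : ℕ} (φ : Rd d → ℝ) (l β : ℝ) (N : ℕ) : ℝ≥0∞ :=
  ∫⁻ x in cube d l N, ENNReal.ofReal (Real.exp (-β * UtN φ l x))


lemma ofReal_abs_eq (x : ℝ) : ENNReal.ofReal |x| = (‖x‖₊ : ℝ≥0∞) := by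
  rw [← Real.norm_eq_abs, ofReal_norm_eq_enorm]; rfl

lemma summable_of_tsum_ofReal_ne_top {ι : Type*} {g : ι → ℝ}
    (h : (∑' i, ENNReal.ofReal |g i|) ≠ ∞) : Summable g := by
  simp_rw [ofReal_abs_eq] at h
  exact (ENNReal.tsum_coe_ne_top_iff_summable.mp h).of_nnnorm

lemma tsum_ofReal_ne_top_of_summable {ι : Type*} {g : ι → ℝ}
    (h : Summable g) : (∑' i, ENNReal.ofReal |g i|) ≠ ∞ := by
  simp_rw [ofReal_abs_eq]
  refine ENNReal.tsum_coe_ne_top_iff_summable.mpr ?_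
  refine NNReal.summable_coe.mp ?_
  simpa [Real.norm_eq_abs] using h.abs

lemma tsum_abs_eq_toReal {ι : Type*} {g : ι → ℝ}
    (h : (∑' i, ENNReal.ofReal |g i|) ≠ ∞) :
    ∑' i, |g i| = (∑' i, ENNReal.ofReal |g i|).toReal := by
  have hs : Summable g := summable_of_tsum_ofReal_ne_top h
  rw [← ENNReal.ofReal_tsum_of_nonneg (fun i => abs_nonneg _) hs.abs,
    ENNReal.toReal_ofReal (tsum_nonneg fun i => abs_nonneg _)]

private lemma max_zero_eq (x : ℝ) : max x 0 = (x + |x|) / 2 := by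
  rcases le_total x 0 with h | h
  · rw [max_eq_right h, abs_of_nonpos h]; ring
  · rw [max_eq_left h, abs_of_nonneg h]; ring

private lemma ofReal_eq_ofReal_max (x : ℝ) : ENNReal.ofReal x = ENNReal.ofReal (max x 0) := by
  rcases le_total x 0 with h | h
  · rw [max_eq_right h, ENNReal.ofReal_of_nonpos h, ENNReal.ofReal_zero]
  · rw [max_eq_left h]

lemma measurable_tsum_real {α : Type*} [MeasurableSpace α] {ι : Type*} [Countable ι]
    {f : ι → α → ℝ} (hf : ∀ i, Measurable (f i)) :
    Measurable fun a => ∑' i, f i a := by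
  classical
  set S : Set α := {a | (∑' i, ENNReal.ofReal |f i a|) ≠ ∞} with hS
  have hSm : MeasurableSet S := by
    have : Measurable fun a => ∑' i, ENNReal.ofReal |f i a| :=
      Measurable.ennreal_tsum fun i => ((hf i).abs).ennreal_ofReal
    exact (this (measurableSet_singleton ∞)).compl
  set g : α → ℝ := fun a =>
    (∑' i, ENNReal.ofReal (f i a)).toReal - (∑' i, ENNReal.ofReal (-(f i a))).toReal with hg
  have hgm : Measurable g := by
    apply Measurable.sub
    · exact (Measurable.ennreal_tsum fun i => (hf i).ennreal_ofReal).ennreal_toReal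
    · exact (Measurable.ennreal_tsum fun i => ((hf i).neg).ennreal_ofReal).ennreal_toReal
  have key : (fun a => ∑' i, f i a) = S.indicator g := by
    funext a
    by_cases ha : a ∈ S
    · rw [Set.indicator_of_mem ha]
      have hsum : Summable (fun i => f i a) := summable_of_tsum_ofReal_ne_top ha
      have hp : Summable (fun i => max (f i a) 0) :=
        ((hsum.add hsum.abs).div_const 2).congr fun i => (max_zero_eq _).symm
      have habs' : Summable (fun i => |(-(f i a))|) :=
        hsum.abs.congr fun i => (abs_neg (f i a)).symm
      have hq : Summable (fun i => max (-(f i a)) 0) :=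
        ((hsum.neg.add habs').div_const 2).congr fun i => (max_zero_eq _).symm
      have e1 : (∑' i, ENNReal.ofReal (f i a)).toReal = ∑' i, max (f i a) 0 := by
        simp_rw [ofReal_eq_ofReal_max (f _ a)]
        rw [← ENNReal.ofReal_tsum_of_nonneg (fun i => le_max_right _ _) hp,
          ENNReal.toReal_ofReal (tsum_nonneg fun i => le_max_right _ _)]
      have e2 : (∑' i, ENNReal.ofReal (-(f i a))).toReal = ∑' i, max (-(f i a)) 0 := by
        simp_rw [ofReal_eq_ofReal_max (-(f _ a))]
        rw [← ENNReal.ofReal_tsum_of_nonneg (fun i => le_max_right _ _) hq,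
          ENNReal.toReal_ofReal (tsum_nonneg fun i => le_max_right _ _)]
      have : (fun i => f i a) = fun i => max (f i a) 0 - max (-(f i a)) 0 := by
        funext i
        rcases le_total (f i a) 0 with h | h
        · rw [max_eq_right h, max_eq_left (by linarith)]; ring
        · rw [max_eq_left h, max_eq_right (by linarith)]; ring
      rw [hg]; simp only []
      rw [e1, e2, this, hp.tsum_sub hq]
    · rw [Set.indicator_of_notMem ha]
      refine tsum_eq_zero_of_not_summable fun hsum => ha ?_
      exact tsum_ofReal_ne_top_of_summable hsum
  rw [key]
  exact hgm.indicator hSm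

section Per
variable {d : ℕ} {φ : Rd d → ℝ} {l : ℝ}

lemma shiftPt_eq_s9 (l : ℝ) (y : Rd d) (r : Zd d) :
    shiftPt l y r = y + fun i => 2 * l * (r i : ℝ) := by
  funext i; simp [shiftPt]

lemma measurable_periodize (hφ : Measurable φ) : Measurable (periodize φ l) := by
  have : ∀ r : Zd d, Measurable fun y => φ (shiftPt l y r) := by
    intro r
    have : (fun y : Rd d => shiftPt l y r) = fun y => y + fun i => 2 * l * (r i : ℝ) := by
      funext y; exact shiftPt_eq_s9 l y r
    exact hφ.comp (this ▸ measurable_id.add_const _)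
  exact measurable_tsum_real this

lemma periodize_le_tsum_abs (z : Rd d) :
    periodize φ l z ≤ ∑' r : Zd d, |φ (shiftPt l z r)| := by
  by_cases h : Summable fun r : Zd d => φ (shiftPt l z r)
  · exact Summable.tsum_le_tsum (fun r => le_abs_self _) h h.abs
  · rw [periodize, tsum_eq_zero_of_not_summable h,
      tsum_eq_zero_of_not_summable (fun habs => h (summable_abs_iff.mp habs))]

end Per

section Snoc
variable {d : ℕ} (φ : Rd d → ℝ) (l : ℝ) {N : ℕ}

lemma UtN_snoc (x : Fin N → Rd d) (y : Rd d) :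
    UtN φ l (Fin.snoc x y : Fin (N + 1) → Rd d)
      = UtN φ l x + ∑ i : Fin N, periodize φ l (x i - y) := by
  classical
  unfold UtN
  rw [Fin.sum_univ_castSucc]
  have hlast : ∑ j ∈ Finset.Ioi (Fin.last N), periodize φ l
      ((Fin.snoc x y : Fin (N+1) → Rd d) (Fin.last N) - (Fin.snoc x y : Fin (N+1) → Rd d) j) = 0 := by
    apply Finset.sum_eq_zero
    intro j hj
    exact absurd (Finset.mem_Ioi.mp hj) (not_lt.mpr (Fin.le_last j))
  rw [hlast, add_zero]
  have hterm : ∀ i : Fin N,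
      (∑ j ∈ Finset.Ioi (Fin.castSucc i), periodize φ l
        ((Fin.snoc x y : Fin (N+1) → Rd d) (Fin.castSucc i) - (Fin.snoc x y : Fin (N+1) → Rd d) j))
      = (∑ j ∈ Finset.Ioi i, periodize φ l (x i - x j)) + periodize φ l (x i - y) := by
    intro i
    have hIoi : ∀ (M : ℕ) (a : Fin M) (g : Fin M → ℝ),
        ∑ j ∈ Finset.Ioi a, g j = ∑ j : Fin M, if a < j then g j else 0 := by
      intro M a g
      rw [← Finset.sum_filter]
      congr 1
      ext j
      simp [Finset.mem_Ioi]
    rw [hIoi]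
    rw [Fin.sum_univ_castSucc]
    simp only [Fin.snoc_castSucc, Fin.snoc_last, Fin.castSucc_lt_castSucc_iff,
      Fin.castSucc_lt_last, if_true]
    rw [← hIoi]
  rw [Finset.sum_congr rfl fun i _ => hterm i, Finset.sum_add_distrib]

lemma measurable_UtN (hφ : Measurable φ) : Measurable fun x : Fin N → Rd d => UtN φ l x := by
  unfold UtN
  refine Finset.measurable_sum _ fun i _ => Finset.measurable_sum _ fun j _ => ?_
  exact (measurable_periodize hφ).comp ((measurable_pi_apply i).sub (measurable_pi_apply j))

end Snoc

section Geometry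
variable {d : ℕ}

lemma Lam_eq (l : ℝ) : (Lam l : Set (Rd d)) = Set.pi univ fun _ => Set.Ioc (-l) l := by
  ext x; simp [Lam, Set.mem_pi]

lemma measurableSet_Lam (l : ℝ) : MeasurableSet (Lam l : Set (Rd d)) := by
  rw [Lam_eq]; exact MeasurableSet.univ_pi fun _ => measurableSet_Ioc

lemma volume_Lam {l : ℝ} (hl : 0 < l) :
    volume (Lam l : Set (Rd d)) = ENNReal.ofReal ((2 * l) ^ d) := by
  rw [Lam_eq, volume_pi_pi]
  simp only [Real.volume_Ioc]
  rw [Finset.prod_const, Finset.card_univ, Fintype.card_fin,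
    ← ENNReal.ofReal_pow (by linarith)]
  norm_num
  ring_nf

end Geometry

section Inner
variable {d : ℕ}

lemma shiftPt_sub (l : ℝ) (c y : Rd d) (r : Zd d) :
    shiftPt l (c - y) r = shiftPt l c r - y := by
  funext j; simp [shiftPt]; ring

/-- The key lower bound for the one-extra-particle integral. -/
lemma inner_bound (φ : Rd d → ℝ) (hmeas : Measurable φ)
    {a l C β : ℝ} {N : ℕ} (ha : 0 < a) (hl : 0 < l) (hal : 0 < N → a ≤ l)
    {Ia : ℝ≥0∞} (hIa : Ia ≠ ∞)
    (hIa_def : (∫⁻ z in {z : Rd d | a ≤ ‖z‖}, ENNReal.ofReal |φ z|) ≤ Ia)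
    (hC : 1 ≤ C) (hN : (N : ℝ) ≤ C * (2 * l) ^ d)
    (hacube : C * (4 * a) ^ d ≤ 1 / 4)
    (x : Fin N → Rd d) (hβ : 0 < β) (hβC : β ≤ C) :
    ENNReal.ofReal (Real.exp (-(C * (4 * (C + 1) * (Ia.toReal + 1)))) * ((2 * l) ^ d / 2))
      ≤ ∫⁻ y in Lam l,
          ENNReal.ofReal (Real.exp (-β * ∑ i, periodize φ l (x i - y))) := by
  classical
  set T : ℝ := 4 * (C + 1) * (Ia.toReal + 1) with hT
  have hIaR : 0 ≤ Ia.toReal := ENNReal.toReal_nonneg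
  have hTpos : 0 < T := by positivity
  set t0 : ℝ≥0∞ := ENNReal.ofReal T with ht0
  have ht0pos : t0 ≠ 0 := by simp [ht0, hTpos.le, ENNReal.ofReal_eq_zero]; linarith
  have ht0top : t0 ≠ ∞ := ENNReal.ofReal_ne_top
  -- centers
  set c : Fin N → Zd d → Rd d := fun i r => shiftPt l (x i) r with hc
  -- the good far set A
  set A : Set (Rd d) :=
    Lam l ∩ ⋂ (i : Fin N), ⋂ (r : Zd d), {y | a ≤ ‖c i r - y‖} with hA
  have hAsub : A ⊆ Lam l := inter_subset_left
  have hAmeas : MeasurableSet A := by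
    refine (measurableSet_Lam l).inter ?_
    refine MeasurableSet.iInter fun i => MeasurableSet.iInter fun r => ?_
    have : IsClosed {y : Rd d | a ≤ ‖c i r - y‖} :=
      isClosed_le continuous_const ((continuous_const.sub continuous_id).norm)
    exact this.measurableSet
  -- the ennreal partial sums
  set Sf : Fin N → Rd d → ℝ≥0∞ := fun i y => ∑' r : Zd d, ENNReal.ofReal |φ (c i r - y)| with hSf
  have hSfmeas : ∀ i, Measurable (Sf i) := by
    intro i
    refine Measurable.ennreal_tsum fun r => ?_
    have h0 : Measurable fun y : Rd d => φ (c i r - y) :=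
      hmeas.comp (measurable_const.sub measurable_id)
    exact h0.abs.ennreal_ofReal
  set H : Rd d → ℝ≥0∞ := fun y => ∑ i : Fin N, Sf i y with hH
  have hHmeas : Measurable H := Finset.measurable_sum _ fun i _ => hSfmeas i
  -- Step 1 : ∫_A H ≤ N * Ia
  have step1 : (∫⁻ y in A, H y) ≤ (N : ℝ≥0∞) * Ia := by
    rw [hH, lintegral_finset_sum _ fun i _ => hSfmeas i]
    have hi : ∀ i : Fin N, (∫⁻ y in A, Sf i y) ≤ Ia := by
      intro i
      have hm1 : ∀ w : Rd d, Measurable fun y : Rd d => ENNReal.ofReal |φ (w - y)| := by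
        intro w
        have h0 : Measurable fun y : Rd d => φ (w - y) :=
          hmeas.comp (measurable_const.sub measurable_id)
        exact h0.abs.ennreal_ofReal
      rw [hSf]
      simp only []
      rw [lintegral_tsum fun r => (hm1 (c i r)).aemeasurable]
      have hemb : ∀ r : Zd d, MeasurableEmbedding (fun y : Rd d => c i r - y) := fun r =>
        (MeasurableEquiv.subLeft (c i r)).measurableEmbedding
      have hmp : ∀ r : Zd d, MeasurePreserving (fun y : Rd d => c i r - y) volume volume :=
        fun r => Measure.measurePreserving_sub_left volume (c i r)
      have himg : ∀ r : Zd d, (∫⁻ y in A, ENNReal.ofReal |φ (c i r - y)|)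
          = ∫⁻ z in (fun y : Rd d => c i r - y) '' A, ENNReal.ofReal |φ z| := by
        intro r
        exact (hmp r).setLIntegral_comp_emb (hemb r) (fun z => ENNReal.ofReal |φ z|) A
      simp_rw [himg]
      set Tset : Zd d → Set (Rd d) := fun r => (fun y : Rd d => c i r - y) '' A with hTset
      have hTmeas : ∀ r, MeasurableSet (Tset r) := fun r =>
        (hemb r).measurableSet_image.mpr hAmeas
      have hTdisj : Pairwise (Function.onFun Disjoint Tset) := by
        intro r r' hrr'
        rw [Function.onFun, Set.disjoint_left]
        rintro z ⟨y, hy, rfl⟩ ⟨y', hy', he⟩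
        apply hrr'
        funext j
        have h1 := (hAsub hy) j
        have h2 := (hAsub hy') j
        have hj : x i j + 2*l*((r' j : ℝ)) - y' j = x i j + 2*l*((r j : ℝ)) - y j := by
          have h0 := congrFun he j
          simpa [hc, shiftPt, Pi.sub_apply] using h0
        have hlt : |2*l*((r j : ℝ) - (r' j : ℝ))| < 2*l*1 := by
          have he2 : 2*l*((r j : ℝ) - (r' j : ℝ)) = y j - y' j := by linarith
          rw [he2, abs_sub_lt_iff]
          constructor <;> · simp only [mul_one]; linarith [h1.1, h1.2, h2.1, h2.2]
        have hlt1 : |(r j : ℝ) - (r' j : ℝ)| < 1 := by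
          rw [abs_mul, abs_of_pos (by linarith : (0:ℝ) < 2*l)] at hlt
          exact lt_of_mul_lt_mul_left hlt (by linarith)
        have hz : r j - r' j = 0 := by
          have h' : |((r j - r' j : ℤ) : ℝ)| < 1 := by push_cast; exact hlt1
          rw [← Int.cast_abs] at h'
          have h'' : |r j - r' j| < 1 := by exact_mod_cast h'
          exact Int.abs_lt_one_iff.mp h''
        omega
      have hsub : ∀ r, Tset r ⊆ {z : Rd d | a ≤ ‖z‖} := by
        rintro r z ⟨y, hy, rfl⟩
        exact Set.mem_iInter.mp (Set.mem_iInter.mp hy.2 i) r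
      calc ∑' r : Zd d, ∫⁻ z in Tset r, ENNReal.ofReal |φ z|
          = ∫⁻ z in ⋃ r, Tset r, ENNReal.ofReal |φ z| :=
            (lintegral_iUnion hTmeas hTdisj _).symm
        _ ≤ ∫⁻ z in {z : Rd d | a ≤ ‖z‖}, ENNReal.ofReal |φ z| :=
            lintegral_mono_set (Set.iUnion_subset hsub)
        _ ≤ Ia := hIa_def
    calc ∑ i : Fin N, ∫⁻ y in A, Sf i y ≤ ∑ _i : Fin N, Ia :=
          Finset.sum_le_sum fun i _ => hi i
      _ = (N : ℝ≥0∞) * Ia := by rw [Finset.sum_const, Finset.card_univ, Fintype.card_fin,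
          nsmul_eq_mul]
  -- volumes
  set V : ℝ≥0∞ := ENNReal.ofReal ((2*l)^d) with hV
  have hVol : volume (Lam l : Set (Rd d)) = V := volume_Lam hl
  have h2l : (0:ℝ) < (2*l)^d := by positivity
  set V4 : ℝ≥0∞ := ENNReal.ofReal ((2*l)^d/4) with hV4
  set V2 : ℝ≥0∞ := ENNReal.ofReal ((2*l)^d/2) with hV2
  -- covering bound
  have cover : volume (Lam l \ A) ≤ V4 := by
    rcases Nat.eq_zero_or_pos N with hN0 | hNpos
    · have hAeq : A = Lam l := by
        rw [hA]
        have : (⋂ (i : Fin N), ⋂ (r : Zd d), {y : Rd d | a ≤ ‖c i r - y‖}) = univ := by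
          subst hN0
          exact Set.iInter_of_empty _
        rw [this, Set.inter_univ]
      rw [hAeq, Set.diff_self]
      simp
    · have hal' : a ≤ l := hal hNpos
      set m : Fin N → Fin d → ℤ := fun i j => ⌊(-l - a - x i j)/(2*l)⌋ with hm
      set ct : Fin N → (Fin d → Bool) → Fin d → ℝ :=
        fun i ε j => x i j + 2*l*(((m i j + if ε j then 1 else 2 : ℤ)) : ℝ) with hct
      set Q : Fin N → (Fin d → Bool) → Set (Rd d) :=
        fun i ε => Set.pi univ fun j => Ioo (ct i ε j - a) (ct i ε j + a) with hQ
      have hcover : Lam l \ A ⊆ ⋃ i, ⋃ ε, Q i ε := by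
        rintro y ⟨hyL, hyA⟩
        have hex : ∃ i r, ‖c i r - y‖ < a := by
          by_contra h
          push_neg at h
          exact hyA ⟨hyL, Set.mem_iInter.mpr fun i => Set.mem_iInter.mpr fun r => h i r⟩
        obtain ⟨i, r, hir⟩ := hex
        have hcomp : ∀ j, |x i j + 2*l*(r j : ℝ) - y j| < a := by
          intro j
          have hv : (c i r - y) j = x i j + 2*l*(r j : ℝ) - y j := rfl
          calc |x i j + 2*l*(r j : ℝ) - y j| = ‖(c i r - y) j‖ := by
                rw [hv, Real.norm_eq_abs]
            _ ≤ ‖c i r - y‖ := norm_le_pi_norm _ j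
            _ < a := hir
        have hrj : ∀ j, r j = m i j + 1 ∨ r j = m i j + 2 := by
          intro j
          have hy1 := hyL j
          have h1 := abs_lt.mp (hcomp j)
          have hlow : (-l - a - x i j)/(2*l) < (r j : ℝ) := by
            rw [div_lt_iff₀ (by linarith)]
            nlinarith [h1.1, h1.2, hy1.1, hy1.2]
          have hup : (r j : ℝ) < (-l - a - x i j)/(2*l) + 2 := by
            have hmul : ((r j : ℝ) - 2) * (2*l) < (-l - a - x i j) := by
              nlinarith [h1.1, h1.2, hy1.1, hy1.2, hal']
            have := (lt_div_iff₀ (by linarith : (0:ℝ) < 2*l)).mpr hmul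
            linarith
          have hfl1 : m i j < r j := Int.floor_lt.mpr hlow
          have hfl2 : r j < m i j + 3 := by
            have hfrac := Int.lt_floor_add_one ((-l - a - x i j)/(2*l))
            have : (r j : ℝ) < (m i j : ℝ) + 3 := by
              rw [hm]
              push_cast
              calc (r j : ℝ) < (-l - a - x i j)/(2*l) + 2 := hup
                _ < (⌊(-l - a - x i j)/(2*l)⌋ : ℝ) + 1 + 2 := by linarith
                _ = (⌊(-l - a - x i j)/(2*l)⌋ : ℝ) + 3 := by ring
            exact_mod_cast this
          omega
        refine Set.mem_iUnion.mpr ⟨i, Set.mem_iUnion.mpr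
          ⟨fun j => decide (r j = m i j + 1), ?_⟩⟩
        rw [hQ]
        simp only [Set.mem_univ_pi, Set.mem_Ioo]
        intro j
        have hctr : ct i (fun j => decide (r j = m i j + 1)) j = x i j + 2*l*(r j : ℝ) := by
          have heq : ((m i j + if decide (r j = m i j + 1) then 1 else 2 : ℤ)) = r j := by
            rcases hrj j with h | h
            · simp [h]
            · have hne : r j ≠ m i j + 1 := by omega
              simp [hne, h]
          rw [hct]
          simp only []
          rw [heq]
        have habs := abs_lt.mp (hcomp j)
        constructor
        · rw [hctr]; linarith [habs.1, habs.2]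
        · rw [hctr]; linarith [habs.1, habs.2]
      have hQvol : ∀ i ε, volume (Q i ε) = (ENNReal.ofReal (2*a))^d := by
        intro i ε
        rw [hQ]
        simp only []
        rw [volume_pi_pi]
        have : ∀ j : Fin d, volume (Ioo (ct i ε j - a) (ct i ε j + a))
            = ENNReal.ofReal (2*a) := by
          intro j
          rw [Real.volume_Ioo]
          congr 1
          ring
        simp_rw [this]
        rw [Finset.prod_const, Finset.card_univ, Fintype.card_fin]
      calc volume (Lam l \ A) ≤ volume (⋃ i, ⋃ ε, Q i ε) := measure_mono hcover
        _ ≤ ∑' i : Fin N, volume (⋃ ε, Q i ε) := measure_iUnion_le _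
        _ ≤ ∑' i : Fin N, ∑' ε : Fin d → Bool, volume (Q i ε) :=
            ENNReal.tsum_le_tsum fun i => measure_iUnion_le _
        _ = ∑' i : Fin N, ∑' _ε : Fin d → Bool, (ENNReal.ofReal (2*a))^d := by
            simp_rw [hQvol]
        _ = (N : ℝ≥0∞) * ((2:ℝ≥0∞)^d * (ENNReal.ofReal (2*a))^d) := by
            rw [tsum_fintype]
            simp_rw [tsum_fintype]
            rw [Finset.sum_const, Finset.card_univ]
            simp_rw [Finset.sum_const, Finset.card_univ]
            rw [Fintype.card_fin]
            have : Fintype.card (Fin d → Bool) = 2^d := by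
              simp [Fintype.card_fun]
            rw [this]
            simp [nsmul_eq_mul, mul_assoc]
        _ ≤ V4 := by
            have h2e : (2:ℝ≥0∞) = ENNReal.ofReal 2 := by norm_num
            rw [h2e, ← mul_pow, ← ENNReal.ofReal_mul (by norm_num : (0:ℝ) ≤ 2),
              ← ENNReal.ofReal_pow (by linarith), ← ENNReal.ofReal_natCast,
              ← ENNReal.ofReal_mul (by positivity), hV4]
            apply ENNReal.ofReal_le_ofReal
            have h4a : (0:ℝ) ≤ (2*(2*a))^d := by positivity
            have hmono : ((2*(2*a)):ℝ)^d = (4*a)^d := by ring_nf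
            rw [hmono]
            have h1 : (N:ℝ) * (4*a)^d ≤ (C * (2*l)^d) * (4*a)^d := by
              apply mul_le_mul_of_nonneg_right hN (by positivity)
            calc (N:ℝ) * (4*a)^d ≤ (C * (2*l)^d) * (4*a)^d := h1
              _ = (2*l)^d * (C * (4*a)^d) := by ring
              _ ≤ (2*l)^d * (1/4) := by
                  apply mul_le_mul_of_nonneg_left hacube (by positivity)
              _ = (2*l)^d / 4 := by ring
  -- Markov
  have markov : volume ({y : Rd d | t0 ≤ H y} ∩ A) ≤ V4 := by
    have h1 : t0 * volume ({y : Rd d | t0 ≤ H y} ∩ A) ≤ ∫⁻ y in A, H y := by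
      have h := mul_meas_ge_le_lintegral₀ (μ := volume.restrict A) hHmeas.aemeasurable t0
      rwa [Measure.restrict_apply (measurableSet_le measurable_const hHmeas)] at h
    have h3 : (N:ℝ≥0∞) * Ia ≤ t0 * V4 := by
      have hIa' : Ia = ENNReal.ofReal Ia.toReal := (ENNReal.ofReal_toReal hIa).symm
      rw [hIa', ht0, hV4, ← ENNReal.ofReal_natCast,
        ← ENNReal.ofReal_mul (by positivity), ← ENNReal.ofReal_mul (by positivity)]
      apply ENNReal.ofReal_le_ofReal
      calc (N:ℝ) * Ia.toReal ≤ (C * (2*l)^d) * Ia.toReal := by nlinarith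
        _ ≤ T * ((2*l)^d/4) := by rw [hT]; nlinarith
    exact (ENNReal.mul_le_mul_iff_right ht0pos ht0top).mp ((h1.trans step1).trans h3)
  -- good set
  set G : Set (Rd d) := A \ {y : Rd d | t0 ≤ H y} with hG
  have hGmeas : MeasurableSet G := hAmeas.diff (measurableSet_le measurable_const hHmeas)
  have hGsub : G ⊆ Lam l := fun y hy => hAsub hy.1
  have hGvol : V2 ≤ volume G := by
    have hsplit : Lam l ⊆ G ∪ ((Lam l \ A) ∪ ({y : Rd d | t0 ≤ H y} ∩ A)) := by
      intro y hy
      by_cases hyA : y ∈ A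
      · by_cases hyH : t0 ≤ H y
        · exact Or.inr (Or.inr ⟨hyH, hyA⟩)
        · exact Or.inl ⟨hyA, hyH⟩
      · exact Or.inr (Or.inl ⟨hy, hyA⟩)
    have h1 : V ≤ volume G + (V4 + V4) := by
      calc V = volume (Lam l : Set (Rd d)) := hVol.symm
        _ ≤ volume (G ∪ ((Lam l \ A) ∪ ({y : Rd d | t0 ≤ H y} ∩ A))) := measure_mono hsplit
        _ ≤ volume G + volume ((Lam l \ A) ∪ ({y : Rd d | t0 ≤ H y} ∩ A)) :=
            measure_union_le _ _
        _ ≤ volume G + (volume (Lam l \ A) + volume ({y : Rd d | t0 ≤ H y} ∩ A)) := by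
            gcongr
            exact measure_union_le _ _
        _ ≤ volume G + (V4 + V4) := by gcongr
    have hVsum : V4 + V4 = V2 := by
      rw [hV4, hV2, ← ENNReal.ofReal_add (by positivity) (by positivity)]
      congr 1
      ring
    have hVsub : V - V2 = V2 := by
      rw [hV, hV2, ← ENNReal.ofReal_sub _ (by positivity)]
      congr 1
      ring
    rw [← hVsub, tsub_le_iff_right]
    rw [hVsum] at h1
    exact h1
  -- pointwise bound on G
  have hpt : ∀ y ∈ G, ENNReal.ofReal (Real.exp (-(C*T)))
      ≤ ENNReal.ofReal (Real.exp (-β * ∑ i, periodize φ l (x i - y))) := by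
    intro y hy
    have hHy : H y < t0 := lt_of_not_ge hy.2
    have hSne : ∀ i, Sf i y ≠ ∞ := by
      intro i
      have hle : Sf i y ≤ H y :=
        Finset.single_le_sum (f := fun i => Sf i y) (fun i _ => zero_le) (Finset.mem_univ i)
      exact (hle.trans_lt (hHy.trans_le le_top)).ne  -- wrong: t0 ≤ ⊤ gives < ⊤? t0 < ⊤
    have hWle : ∑ i, periodize φ l (x i - y) ≤ T := by
      have hper : ∀ i, periodize φ l (x i - y) ≤ (Sf i y).toReal := by
        intro i
        have h1 : periodize φ l (x i - y) ≤ ∑' r : Zd d, |φ (shiftPt l (x i - y) r)| :=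
          periodize_le_tsum_abs _
        have h2 : (fun r : Zd d => |φ (shiftPt l (x i - y) r)|) = fun r => |φ (c i r - y)| := by
          funext r
          rw [shiftPt_sub]
        rw [h2] at h1
        rwa [tsum_abs_eq_toReal (hSne i)] at h1
      calc ∑ i, periodize φ l (x i - y) ≤ ∑ i, (Sf i y).toReal :=
            Finset.sum_le_sum fun i _ => hper i
        _ = (H y).toReal := (ENNReal.toReal_sum fun i _ => hSne i).symm
        _ ≤ T := by
            have h := ENNReal.toReal_mono ht0top hHy.le
            rwa [ht0, ENNReal.toReal_ofReal hTpos.le] at h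
    apply ENNReal.ofReal_le_ofReal
    apply Real.exp_le_exp.mpr
    nlinarith [hTpos.le, hβ.le, hβC, hWle]
  -- final chain
  calc ENNReal.ofReal (Real.exp (-(C * T)) * ((2 * l) ^ d / 2))
      = ENNReal.ofReal (Real.exp (-(C*T))) * V2 := by
        rw [hV2, ← ENNReal.ofReal_mul (Real.exp_nonneg _)]
    _ ≤ ENNReal.ofReal (Real.exp (-(C*T))) * volume G := by gcongr
    _ = ∫⁻ _y in G, ENNReal.ofReal (Real.exp (-(C*T))) := (setLIntegral_const _ _).symm
    _ ≤ ∫⁻ y in G, ENNReal.ofReal (Real.exp (-β * ∑ i, periodize φ l (x i - y))) :=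
        setLIntegral_mono' hGmeas hpt
    _ ≤ ∫⁻ y in Lam l, ENNReal.ofReal (Real.exp (-β * ∑ i, periodize φ l (x i - y))) :=
        lintegral_mono_set hGsub

end Inner

section Assemble
variable {d : ℕ}

lemma cube_preimage (l : ℝ) (N : ℕ) :
    (fun p : Rd d × (Fin N → Rd d) => (Fin.snoc p.2 p.1 : Fin (N+1) → Rd d)) ⁻¹'
        (cube d l (N+1)) = (Lam l) ×ˢ (cube d l N) := by
  ext ⟨y, x⟩
  simp only [Set.mem_preimage, Set.mem_prod]
  constructor
  · intro h
    exact ⟨by simpa using h (Fin.last N), fun i => by simpa using h (Fin.castSucc i)⟩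
  · rintro ⟨hy, hx⟩ i
    refine Fin.lastCases ?_ (fun j => ?_) i
    · simpa using hy
    · simpa using hx j

lemma Zpart_succ_ge (φ : Rd d → ℝ) (hmeas : Measurable φ) (l β : ℝ) (N : ℕ) (K : ℝ≥0∞)
    (hinner : ∀ x : Fin N → Rd d,
      K ≤ ∫⁻ y in Lam l,
            ENNReal.ofReal (Real.exp (-β * ∑ i, periodize φ l (x i - y)))) :
    K * ZpartE φ l β N ≤ ZpartE φ l β (N + 1) := by
  classical
  set e := MeasurableEquiv.piFinSuccAbove (fun _ : Fin (N+1) => Rd d) (Fin.last N) with he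
  have hesymm : ∀ p : Rd d × (Fin N → Rd d), e.symm p = Fin.snoc p.2 p.1 := by
    intro p
    rw [he, MeasurableEquiv.piFinSuccAbove_symm_apply]
    exact Fin.insertNth_last' p.1 p.2
  have hmp0 := (measurePreserving_piFinSuccAbove
      (fun _ : Fin (N+1) => (volume : Measure (Rd d))) (Fin.last N)).symm
  have hmp : MeasurePreserving e.symm
      ((volume : Measure (Rd d)).prod (volume : Measure (Fin N → Rd d)))
      (volume : Measure (Fin (N+1) → Rd d)) := by
    simpa only [← volume_pi] using hmp0
  have key : ZpartE φ l β (N+1)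
      = ∫⁻ p in (Lam l) ×ˢ (cube d l N),
          ENNReal.ofReal (Real.exp (-β * UtN φ l (Fin.snoc p.2 p.1 : Fin (N+1) → Rd d)))
          ∂((volume : Measure (Rd d)).prod volume) := by
    rw [ZpartE]
    rw [← hmp.setLIntegral_comp_preimage_emb e.symm.measurableEmbedding
      (fun z => ENNReal.ofReal (Real.exp (-β * UtN φ l z))) (cube d l (N+1))]
    have hpre : e.symm ⁻¹' (cube d l (N+1)) = (Lam l) ×ˢ (cube d l N) := by
      rw [← cube_preimage l N]
      ext p
      simp [hesymm p]
    rw [hpre]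
    apply lintegral_congr
    intro p
    rw [hesymm p]
  have hWmeas : ∀ x : Fin N → Rd d,
      Measurable fun y : Rd d => ∑ i, periodize φ l (x i - y) := by
    intro x
    refine Finset.measurable_sum _ fun i _ => ?_
    exact (measurable_periodize hmeas).comp (measurable_const.sub measurable_id)
  have hF2meas : Measurable fun p : Rd d × (Fin N → Rd d) =>
      ENNReal.ofReal (Real.exp (-β * UtN φ l p.2))
        * ENNReal.ofReal (Real.exp (-β * ∑ i, periodize φ l (p.2 i - p.1))) := by
    have h1 : Measurable fun p : Rd d × (Fin N → Rd d) => UtN φ l p.2 :=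
      (measurable_UtN φ l hmeas).comp measurable_snd
    have h2 : Measurable fun p : Rd d × (Fin N → Rd d) =>
        ∑ i, periodize φ l (p.2 i - p.1) := by
      refine Finset.measurable_sum _ fun i _ => ?_
      exact (measurable_periodize hmeas).comp
        (((measurable_pi_apply i).comp measurable_snd).sub measurable_fst)
    exact ((((h1.const_mul (-β)).exp).ennreal_ofReal).mul
      (((h2.const_mul (-β)).exp).ennreal_ofReal))
  have key2 : ZpartE φ l β (N+1)
      = ∫⁻ x in cube d l N, ∫⁻ y in Lam l,
          ENNReal.ofReal (Real.exp (-β * UtN φ l x))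
            * ENNReal.ofReal (Real.exp (-β * ∑ i, periodize φ l (x i - y))) := by
    rw [key]
    have hsplit : ∀ p : Rd d × (Fin N → Rd d),
        ENNReal.ofReal (Real.exp (-β * UtN φ l (Fin.snoc p.2 p.1 : Fin (N+1) → Rd d)))
          = ENNReal.ofReal (Real.exp (-β * UtN φ l p.2))
            * ENNReal.ofReal (Real.exp (-β * ∑ i, periodize φ l (p.2 i - p.1))) := by
      intro p
      rw [UtN_snoc φ l p.2 p.1, ← ENNReal.ofReal_mul (Real.exp_nonneg _), ← Real.exp_add]
      congr 2
      ring
    simp_rw [hsplit]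
    rw [← Measure.prod_restrict, lintegral_prod_symm' _ hF2meas]
  rw [key2, ZpartE, ← lintegral_const_mul K]
  swap
  · exact (((measurable_UtN φ l hmeas).const_mul (-β)).exp).ennreal_ofReal
  apply lintegral_mono
  intro x
  dsimp only
  rw [lintegral_const_mul _ (((hWmeas x).const_mul (-β)).exp).ennreal_ofReal]
  rw [mul_comm]
  exact mul_le_mul_right (hinner x) _

end Assemble

theorem stmt9 (d : ℕ) (hd : 1 ≤ d)
    (φ : Rd d → ℝ) (hmeas : Measurable φ) (hsymm : ∀ x, φ (-x) = φ x)
    (M : ℝ) (hBB : ∀ x, -M ≤ φ x)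
    (hint : ∀ a : ℝ, 0 < a →
      (∫⁻ x in {x : Rd d | a ≤ ‖x‖}, ENNReal.ofReal |φ x|) < ⊤) :
    ∀ S : Set (ℝ × ℝ), IsCompact S → S ⊆ Set.Ici (0:ℝ) ×ˢ Set.Ioi (0:ℝ) →
      ∃ k : ℝ, 1 ≤ k ∧ ∀ N : ℕ, ∀ l β : ℝ, 0 < l → 0 < β →
        ((N : ℝ) / (2 * l) ^ d, β) ∈ S →
          ZpartE φ l β N ≤ ENNReal.ofReal (k / (2 * l) ^ d) * ZpartE φ l β (N + 1) := by
  intro S hScomp hSsub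
  obtain ⟨r0, hr0⟩ := hScomp.isBounded.subset_closedBall (0 : ℝ × ℝ)
  set C : ℝ := max r0 1 with hCdef
  have hC1 : (1:ℝ) ≤ C := le_max_right _ _
  have hC0 : (0:ℝ) < C := lt_of_lt_of_le one_pos hC1
  have hbound : ∀ p ∈ S, p.1 ≤ C ∧ p.2 ≤ C := by
    intro p hp
    have hdist : dist p (0 : ℝ × ℝ) ≤ r0 := Metric.mem_closedBall.mp (hr0 hp)
    rw [Prod.dist_eq] at hdist
    constructor
    · calc p.1 ≤ |p.1| := le_abs_self _
        _ = dist p.1 (0:ℝ×ℝ).1 := by rw [Real.dist_eq]; norm_num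
        _ ≤ r0 := le_trans (le_max_left _ _) hdist
        _ ≤ C := le_max_left _ _
    · calc p.2 ≤ |p.2| := le_abs_self _
        _ = dist p.2 (0:ℝ×ℝ).2 := by rw [Real.dist_eq]; norm_num
        _ ≤ r0 := le_trans (le_max_right _ _) hdist
        _ ≤ C := le_max_left _ _
  have hdne : d ≠ 0 := by omega
  have hdR : ((d:ℝ)) ≠ 0 := by exact_mod_cast hdne
  set A0 : ℝ := (C⁻¹) ^ ((d:ℝ)⁻¹) with hA0
  have hA0pos : 0 < A0 := Real.rpow_pos_of_pos (by positivity) _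
  set a1 : ℝ := ((4*C)⁻¹) ^ ((d:ℝ)⁻¹) / 4 with ha1
  have ha1pos : 0 < a1 := by
    rw [ha1]
    have := Real.rpow_pos_of_pos (by positivity : (0:ℝ) < (4*C)⁻¹) ((d:ℝ)⁻¹)
    linarith
  set a : ℝ := min (A0/2) a1 with ha
  have hapos : 0 < a := lt_min (by linarith) ha1pos
  have hacube : C * (4*a)^d ≤ 1/4 := by
    have h4a : 4*a ≤ ((4*C)⁻¹) ^ ((d:ℝ)⁻¹) := by
      have haa : a ≤ a1 := min_le_right _ _
      rw [ha1] at haa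
      linarith
    have hpow : (4*a)^d ≤ (((4*C)⁻¹) ^ ((d:ℝ)⁻¹))^d :=
      pow_le_pow_left₀ (by positivity) h4a d
    have hval : ((((4*C)⁻¹) ^ ((d:ℝ)⁻¹)))^d = (4*C)⁻¹ :=
      Real.rpow_inv_natCast_pow (by positivity) hdne
    have hCC : C * (4*C)⁻¹ = 1/4 := by field_simp
    calc C * (4*a)^d ≤ C * (4*C)⁻¹ := by
          apply mul_le_mul_of_nonneg_left _ hC0.le
          rw [← hval]
          exact hpow
      _ = 1/4 := hCC
  set Ia : ℝ≥0∞ := ∫⁻ z in {z : Rd d | a ≤ ‖z‖}, ENNReal.ofReal |φ z| with hIadef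
  have hIane : Ia ≠ ∞ := (hint a hapos).ne
  set T : ℝ := 4*(C+1)*(Ia.toReal+1) with hT
  have hTpos : 0 < T := by
    have : (0:ℝ) ≤ Ia.toReal := ENNReal.toReal_nonneg
    rw [hT]
    nlinarith
  refine ⟨2 * Real.exp (C*T), ?_, ?_⟩
  · have h1 : (1:ℝ) ≤ Real.exp (C*T) := Real.one_le_exp (by positivity)
    linarith
  intro N l β hl hβ hmem
  obtain ⟨hρ, hβC⟩ := hbound _ hmem
  simp only at hρ hβC
  have h2ld : (0:ℝ) < (2*l)^d := by positivity
  have hN : (N:ℝ) ≤ C * (2*l)^d := by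
    rw [div_le_iff₀ h2ld] at hρ
    linarith
  have hal : 0 < N → a ≤ l := by
    intro hNpos
    have h1le : (1:ℝ) ≤ (N:ℝ) := by exact_mod_cast hNpos
    have hinv : C⁻¹ ≤ (2*l)^d := by
      calc C⁻¹ = C⁻¹ * 1 := (mul_one _).symm
        _ ≤ C⁻¹ * (C*(2*l)^d) := by
            apply mul_le_mul_of_nonneg_left (le_trans h1le hN) (by positivity)
        _ = (2*l)^d := by field_simp
    have h2l : A0 ≤ 2*l := by
      rw [hA0]
      calc (C⁻¹) ^ ((d:ℝ)⁻¹) ≤ ((2*l)^d) ^ ((d:ℝ)⁻¹) :=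
            Real.rpow_le_rpow (by positivity) hinv (by positivity)
        _ = 2*l := by
            rw [← Real.rpow_natCast (2*l) d, ← Real.rpow_mul (by linarith),
              mul_inv_cancel₀ hdR, Real.rpow_one]
    have haA : a ≤ A0/2 := min_le_left _ _
    linarith
  have hinner := fun x : Fin N → Rd d =>
    inner_bound φ hmeas hapos hl hal hIane (le_refl Ia) hC1 hN hacube x hβ hβC
  have hmain := Zpart_succ_ge φ hmeas l β N _ hinner
  set K : ℝ≥0∞ := ENNReal.ofReal (Real.exp (-(C*T)) * ((2*l)^d/2)) with hK
  have hcancel : ENNReal.ofReal ((2*Real.exp (C*T))/(2*l)^d) * K = 1 := by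
    rw [hK, ← ENNReal.ofReal_mul (by positivity)]
    have hone : (2*Real.exp (C*T))/(2*l)^d * (Real.exp (-(C*T)) * ((2*l)^d/2)) = 1 := by
      rw [Real.exp_neg]
      field_simp
    rw [hone, ENNReal.ofReal_one]
  calc ZpartE φ l β N = 1 * ZpartE φ l β N := (one_mul _).symm
    _ = ENNReal.ofReal ((2*Real.exp (C*T))/(2*l)^d) * K * ZpartE φ l β N := by rw [hcancel]
    _ = ENNReal.ofReal ((2*Real.exp (C*T))/(2*l)^d) * (K * ZpartE φ l β N) := mul_assoc _ _ _
    _ ≤ ENNReal.ofReal ((2*Real.exp (C*T))/(2*l)^d) * ZpartE φ l β (N+1) :=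
        mul_le_mul_right hmain _
end
end
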